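/- arXiv:1104.2027 — 4 statements merged into one kernel-verified Lean document; each statement's English description precedes it below -/
import Mathlib

section
/- Let B ∈ K[X] be a nonconstant Belyi polynomial and let λ ∈ K with λ ≠ 0 and v(λ) ≠ 1 (i.e. λ has non-zero additive p-adic valuation). If B(λ) ∈ {0,1}, then the degree of B is at least p. (Consequently the Belyi height ℋ(λ), the minimal degree of a Belyi polynomial mapping λ into {0,1}, satisfies ℋ(λ) ≥ p.) -/
open Polynomial Finset

section ValLemmas

variable {K : Type*} [Field K] (v : Valuation K NNReal)

lemma val_natCast_le_one (j : ℕ) : v (j : K) ≤ 1 := by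
  induction j with
  | zero => simp
  | succ n ih =>
    push_cast
    exact le_trans (v.map_add _ _) (max_le ih (le_of_eq v.map_one))

lemma val_intCast_le_one (z : ℤ) : v (z : K) ≤ 1 := by
  rcases le_or_gt 0 z with h | h
  · lift z to ℕ using h
    exact_mod_cast val_natCast_le_one v z
  · have h1 : ((-z).toNat : ℤ) = -z := Int.toNat_of_nonneg (by omega)
    have h2 : (z : K) = -(((-z).toNat : ℕ) : K) := by
      have := congrArg (fun t : ℤ => (t : K)) h1
      push_cast at this ⊢
      rw [this]; ring
    rw [h2, v.map_neg]
    exact val_natCast_le_one v _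

lemma val_natCast_eq_one {p : ℕ} (hp : p.Prime) (hvp1 : v (p : K) < 1)
    {j : ℕ} (hj0 : 0 < j) (hjp : j < p) : v (j : K) = 1 := by
  refine le_antisymm (val_natCast_le_one v j) ?_
  by_contra hlt
  push_neg at hlt
  have hnd : ¬ (p ∣ j) := Nat.not_dvd_of_pos_of_lt hj0 hjp
  have hcopn : Nat.Coprime p j := (hp.coprime_iff_not_dvd).mpr hnd
  have hcop : IsCoprime (p : ℤ) (j : ℤ) := by
    rw [Int.isCoprime_iff_gcd_eq_one, Int.gcd_natCast_natCast]
    exact hcopn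
  obtain ⟨a, b, hab⟩ := hcop
  have habK : (a : K) * (p : K) + (b : K) * (j : K) = 1 := by
    have := congrArg (fun t : ℤ => (t : K)) hab
    push_cast at this
    simpa using this
  have h1 : v ((a : K) * (p : K)) < 1 := by
    rw [v.map_mul]
    calc v (a : K) * v (p : K) ≤ 1 * v (p : K) :=
          mul_le_mul_of_nonneg_right (val_intCast_le_one v a) zero_le
      _ = v (p : K) := one_mul _
      _ < 1 := hvp1
  have h2 : v ((b : K) * (j : K)) < 1 := by
    rw [v.map_mul]
    calc v (b : K) * v (j : K) ≤ 1 * v (j : K) :=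
          mul_le_mul_of_nonneg_right (val_intCast_le_one v b) zero_le
      _ = v (j : K) := one_mul _
      _ < 1 := hlt
  have := v.map_add ((a : K) * (p : K)) ((b : K) * (j : K))
  rw [habK, v.map_one] at this
  exact absurd (lt_of_le_of_lt this (max_lt h1 h2)) (lt_irrefl _)

end ValLemmas

/-- The combinatorial data extracted from a Belyi-type polynomial. -/
structure BelyiData (K : Type*) [Field K] (n : ℕ) where
  T : Finset K
  e : K → ℕ
  f : K → ℕ
  P : K[X]
  Q : K[X]
  kap : K
  hkap : kap ≠ 0
  hPQ : P - Q = C kap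
  hP : P = ∏ t ∈ T, (X - C t) ^ (e t)
  hQ : Q = ∏ t ∈ T, (X - C t) ^ (f t)
  hm : ∀ t ∈ T, 1 ≤ e t + f t
  hder : derivative P = C (n : K) * ∏ t ∈ T, (X - C t) ^ (e t + f t - 1)
  hcard : T.card = n + 1
  hsume : ∑ t ∈ T, e t = n
  hsumf : ∑ t ∈ T, f t = n

theorem exists_belyiData {K : Type*} [Field K] [IsAlgClosed K] [CharZero K]
    (B : K[X]) (hdvd : B.derivative ∣ B * (B - 1)) (hn : 0 < B.natDegree) :
    ∃ D : BelyiData K B.natDegree,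
      ∀ x : K, x ∈ D.T ↔ (B * (B - 1)).eval x = 0 := by
  classical
  set n := B.natDegree with hn'
  have hB0 : B ≠ 0 := fun h => by rw [h] at hn'; simp at hn'; omega
  set c : K := B.leadingCoeff with hc'
  have hc : c ≠ 0 := leadingCoeff_ne_zero.mpr hB0
  have hc1 : c⁻¹ ≠ 0 := inv_ne_zero hc
  set P : K[X] := C c⁻¹ * B with hPdef
  set Q : K[X] := C c⁻¹ * (B - 1) with hQdef
  -- basic degree facts
  have hB1deg : (B - 1).natDegree = n := by
    rw [← C_1, natDegree_sub_C]
  have hB1lead : (B - 1).leadingCoeff = c := by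
    rw [leadingCoeff, hB1deg, ← C_1, coeff_sub, coeff_C,
      if_neg (by omega : ¬ n = 0), sub_zero]
    rfl
  have hB10 : B - 1 ≠ 0 := fun h => by
    rw [h] at hB1deg; simp at hB1deg; omega
  have hP0 : P ≠ 0 := mul_ne_zero (by simpa using hc1) hB0
  have hQ0 : Q ≠ 0 := mul_ne_zero (by simpa using hc1) hB10
  have hPQ0 : P * Q ≠ 0 := mul_ne_zero hP0 hQ0
  have hPmonic : P.Monic := by
    unfold P
    rw [Monic, leadingCoeff_mul, leadingCoeff_C, ← hc', inv_mul_cancel₀ hc]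
  have hQmonic : Q.Monic := by
    unfold Q
    rw [Monic, leadingCoeff_mul, leadingCoeff_C, hB1lead, inv_mul_cancel₀ hc]
  have hPdeg : P.natDegree = n := by
    unfold P; rw [natDegree_C_mul hc1]
  have hQdeg : Q.natDegree = n := by
    unfold Q; rw [natDegree_C_mul hc1, hB1deg]
  have hPmQ : P - Q = C c⁻¹ := by
    have : P - Q = C c⁻¹ * (B - (B - 1)) := by unfold P Q; ring
    rw [this, sub_sub_cancel, mul_one]
  
  have hdd : derivative P = derivative Q := by
    have hQP : Q = P - C c⁻¹ := by rw [← hPmQ]; ring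
    rw [hQP, derivative_sub, derivative_C, sub_zero]
  have hdisj : ∀ t : K, ¬ (P.IsRoot t ∧ Q.IsRoot t) := by
    rintro t ⟨h1, h2⟩
    have h3 := congrArg (eval t) hPmQ
    rw [eval_sub, h1.eq_zero, h2.eq_zero, eval_C, sub_zero] at h3
    exact hc1 h3.symm
  set T : Finset K := (P * Q).roots.toFinset with hTdef
  have hmemT : ∀ x : K, x ∈ T ↔ (P * Q).eval x = 0 := by
    intro x
    rw [hTdef, Multiset.mem_toFinset, mem_roots hPQ0]
    rfl
  have hrootPT : P.roots.toFinset ⊆ T := by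
    intro a ha
    rw [Multiset.mem_toFinset, mem_roots hP0] at ha
    rw [hmemT, eval_mul, ha.eq_zero, zero_mul]
  have hrootQT : Q.roots.toFinset ⊆ T := by
    intro a ha
    rw [Multiset.mem_toFinset, mem_roots hQ0] at ha
    rw [hmemT, eval_mul, ha.eq_zero, mul_zero]
  have hsP : P.Splits := IsAlgClosed.splits P
  have hsQ : Q.Splits := IsAlgClosed.splits Q
  -- product formulas
  have hPT : P = ∏ t ∈ T, (X - C t) ^ (rootMultiplicity t P) := by
    conv_lhs => rw [hsP.eq_prod_roots_of_monic hPmonic]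
    rw [prod_multiset_root_eq_finset_root]
    refine Finset.prod_subset hrootPT ?_
    intro x _ hnx
    rw [Multiset.mem_toFinset, mem_roots hP0] at hnx
    rw [rootMultiplicity_eq_zero hnx, pow_zero]
  have hQT : Q = ∏ t ∈ T, (X - C t) ^ (rootMultiplicity t Q) := by
    conv_lhs => rw [hsQ.eq_prod_roots_of_monic hQmonic]
    rw [prod_multiset_root_eq_finset_root]
    refine Finset.prod_subset hrootQT ?_
    intro x _ hnx
    rw [Multiset.mem_toFinset, mem_roots hQ0] at hnx
    rw [rootMultiplicity_eq_zero hnx, pow_zero]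
  have hm' : ∀ t ∈ T, 1 ≤ rootMultiplicity t P + rootMultiplicity t Q := by
    intro t ht
    rw [← rootMultiplicity_mul hPQ0]
    have : (P * Q).IsRoot t := (hmemT t).mp ht
    exact (rootMultiplicity_pos hPQ0).mpr this
  -- divisibility for the derivative
  obtain ⟨q, hq⟩ := hdvd
  have hdPB : derivative P = C c⁻¹ * derivative B := by
    rw [hPdef, derivative_C_mul]
  have hdvdP : derivative P ∣ P * Q := by
    refine ⟨C c⁻¹ * q, ?_⟩
    calc P * Q = C c⁻¹ * C c⁻¹ * (B * (B - 1)) := by rw [hPdef, hQdef]; ring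
      _ = C c⁻¹ * C c⁻¹ * (derivative B * q) := by rw [hq]
      _ = (C c⁻¹ * derivative B) * (C c⁻¹ * q) := by ring
      _ = derivative P * (C c⁻¹ * q) := by rw [hdPB]
  set dP := derivative P with hdPdef
  have hn1 : n - 1 + 1 = n := Nat.succ_pred_eq_of_pos hn
  have hcastn : ((n - 1 : ℕ) : K) + 1 = (n : K) := by exact_mod_cast congrArg (Nat.cast (R := K)) hn1
  have hdPcoeff : dP.coeff (n - 1) = (n : K) := by
    rw [hdPdef, coeff_derivative, hn1]
    have hco : P.coeff n = 1 := by
      have := hPmonic.coeff_natDegree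
      rwa [hPdeg] at this
    rw [hco, one_mul, hcastn]
  have hnK : (n : K) ≠ 0 := Nat.cast_ne_zero.mpr (by omega)
  have hdP0 : dP ≠ 0 := by
    intro h
    rw [h, coeff_zero] at hdPcoeff
    exact hnK hdPcoeff.symm
  have hdPdeg : dP.natDegree = n - 1 := by
    refine le_antisymm ?_ (le_natDegree_of_ne_zero (by rw [hdPcoeff]; exact hnK))
    have := natDegree_derivative_le P
    rwa [hPdeg] at this
  have hdPlead : dP.leadingCoeff = (n : K) := by
    rw [leadingCoeff, hdPdeg, hdPcoeff]
  have hTcases : ∀ t ∈ T, P.IsRoot t ∨ Q.IsRoot t := by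
    intro t ht
    have := (hmemT t).mp ht
    rw [eval_mul] at this
    rcases mul_eq_zero.mp this with h | h
    exacts [Or.inl h, Or.inr h]
  have hmultdP : ∀ t ∈ T,
      rootMultiplicity t dP = rootMultiplicity t P + rootMultiplicity t Q - 1 := by
    intro t ht
    have hdd2 : derivative P = derivative Q := hdd
    rcases hTcases t ht with h | h
    · have hf0 : rootMultiplicity t Q = 0 :=
        rootMultiplicity_eq_zero (fun h2 => hdisj t ⟨h, h2⟩)
      rw [hf0, Nat.add_zero, hdPdef, derivative_rootMultiplicity_of_root h]
    · have he0 : rootMultiplicity t P = 0 :=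
        rootMultiplicity_eq_zero (fun h2 => hdisj t ⟨h2, h⟩)
      rw [he0, Nat.zero_add, hdd, derivative_rootMultiplicity_of_root h]
  have hdProotsT : dP.roots.toFinset ⊆ T := by
    intro a ha
    rw [Multiset.mem_toFinset, mem_roots hdP0] at ha
    obtain ⟨w, hw⟩ := hdvdP
    rw [hmemT, hw, eval_mul]
    rw [IsRoot] at ha
    rw [ha, zero_mul]
  have hdPfact : dP = C (n : K) *
      ∏ t ∈ T, (X - C t) ^ (rootMultiplicity t P + rootMultiplicity t Q - 1) := by
    have h1 : dP = C (n : K) * (dP.roots.map fun a => X - C a).prod := by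
      have h2 := (IsAlgClosed.splits dP).eq_prod_roots
      rwa [hdPlead] at h2
    rw [h1, prod_multiset_root_eq_finset_root]
    congr 1
    have h3 : ∏ a ∈ dP.roots.toFinset, (X - C a) ^ (rootMultiplicity a dP)
        = ∏ t ∈ T, (X - C t) ^ (rootMultiplicity t dP) := by
      refine Finset.prod_subset hdProotsT ?_
      intro x _ hnx
      rw [Multiset.mem_toFinset, mem_roots hdP0] at hnx
      rw [rootMultiplicity_eq_zero hnx, pow_zero]
    rw [h3]
    exact Finset.prod_congr rfl (fun t ht => by rw [hmultdP t ht])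
  -- cardinality bookkeeping
  have hcardPQ : ∑ t ∈ T, (rootMultiplicity t P + rootMultiplicity t Q) = 2 * n := by
    have h1 : (P * Q).roots.card = 2 * n := by
      rw [splits_iff_card_roots.mp (IsAlgClosed.splits _),
        natDegree_mul hP0 hQ0, hPdeg, hQdeg]
      ring
    calc ∑ t ∈ T, (rootMultiplicity t P + rootMultiplicity t Q)
        = ∑ t ∈ T, (P * Q).roots.count t := by
          refine Finset.sum_congr rfl fun t _ => ?_
          rw [count_roots, rootMultiplicity_mul hPQ0]
      _ = (P * Q).roots.card := Multiset.toFinset_sum_count_eq _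
      _ = 2 * n := h1
  have hsderiv : ∑ t ∈ T, (rootMultiplicity t P + rootMultiplicity t Q - 1) = n - 1 := by
    calc ∑ t ∈ T, (rootMultiplicity t P + rootMultiplicity t Q - 1)
        = ∑ t ∈ T, rootMultiplicity t dP :=
          Finset.sum_congr rfl (fun t ht => (hmultdP t ht).symm)
      _ = ∑ a ∈ dP.roots.toFinset, rootMultiplicity a dP := by
          refine (Finset.sum_subset hdProotsT ?_).symm
          intro x _ hnx
          rw [Multiset.mem_toFinset, mem_roots hdP0] at hnx
          exact rootMultiplicity_eq_zero hnx
      _ = ∑ a ∈ dP.roots.toFinset, dP.roots.count a :=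
          Finset.sum_congr rfl (fun t _ => (count_roots dP).symm)
      _ = dP.roots.card := Multiset.toFinset_sum_count_eq _
      _ = n - 1 := by
          rw [splits_iff_card_roots.mp (IsAlgClosed.splits dP), hdPdeg]
  have hTcard : T.card = n + 1 := by
    have h4 : ∑ t ∈ T, (rootMultiplicity t P + rootMultiplicity t Q) =
        ∑ t ∈ T, ((rootMultiplicity t P + rootMultiplicity t Q - 1) + 1) := by
      refine Finset.sum_congr rfl fun t ht => ?_
      exact (Nat.succ_pred_eq_of_pos (hm' t ht)).symm
    rw [hcardPQ, Finset.sum_add_distrib, hsderiv, Finset.sum_const, smul_eq_mul, mul_one] at h4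
    omega
  have hsumeP : ∑ t ∈ T, rootMultiplicity t P = n := by
    calc ∑ t ∈ T, rootMultiplicity t P
        = ∑ a ∈ P.roots.toFinset, rootMultiplicity a P := by
          refine (Finset.sum_subset hrootPT ?_).symm
          intro x _ hnx
          rw [Multiset.mem_toFinset, mem_roots hP0] at hnx
          exact rootMultiplicity_eq_zero hnx
      _ = ∑ a ∈ P.roots.toFinset, P.roots.count a :=
          Finset.sum_congr rfl (fun t _ => (count_roots P).symm)
      _ = P.roots.card := Multiset.toFinset_sum_count_eq _
      _ = n := by rw [splits_iff_card_roots.mp hsP, hPdeg]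
  have hsumfQ : ∑ t ∈ T, rootMultiplicity t Q = n := by
    calc ∑ t ∈ T, rootMultiplicity t Q
        = ∑ a ∈ Q.roots.toFinset, rootMultiplicity a Q := by
          refine (Finset.sum_subset hrootQT ?_).symm
          intro x _ hnx
          rw [Multiset.mem_toFinset, mem_roots hQ0] at hnx
          exact rootMultiplicity_eq_zero hnx
      _ = ∑ a ∈ Q.roots.toFinset, Q.roots.count a :=
          Finset.sum_congr rfl (fun t _ => (count_roots Q).symm)
      _ = Q.roots.card := Multiset.toFinset_sum_count_eq _
      _ = n := by rw [splits_iff_card_roots.mp hsQ, hQdeg]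
  refine ⟨⟨T, (rootMultiplicity · P), (rootMultiplicity · Q), P, Q, c⁻¹, hc1, hPmQ,
    hPT, hQT, hm', hdPfact, hTcard, hsumeP, hsumfQ⟩, ?_⟩
  intro x
  rw [hmemT x]
  constructor
  · intro h
    have h2 : (P * Q).eval x = c⁻¹ * c⁻¹ * ((B * (B - 1)).eval x) := by
      rw [hPdef, hQdef]
      simp only [eval_mul, eval_sub, eval_C, eval_one]
      ring
    rw [h, eq_comm, mul_eq_zero, mul_eq_zero] at h2
    rcases h2 with (h3 | h3) | h3
    · exact absurd h3 hc1
    · exact absurd h3 hc1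
    · exact h3
  · intro h
    rw [hPdef, hQdef]
    simp only [eval_mul, eval_sub, eval_C, eval_one]
    have : B.eval x * (B.eval x - 1) = 0 := by
      have := h
      rw [eval_mul, eval_sub, eval_one] at this
      exact this
    calc c⁻¹ * B.eval x * (c⁻¹ * (B.eval x - 1))
        = c⁻¹ * c⁻¹ * (B.eval x * (B.eval x - 1)) := by ring
      _ = 0 := by rw [this, mul_zero]

theorem belyi_flat {K : Type*} [Field K] {p : ℕ} (hp : p.Prime) (v : Valuation K NNReal)
    (hvp1 : v (p : K) < 1) {n : ℕ} (hn : 0 < n) (hnp : n < p)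
    (D : BelyiData K n) (hint : ∀ t ∈ D.T, v t ≤ 1)
    {x0 y0 : K} (hx0 : x0 ∈ D.T) (hy0 : y0 ∈ D.T) (hxy : v (x0 - y0) = 1) :
    ∀ x ∈ D.T, ∀ y ∈ D.T, x ≠ y → v (x - y) = 1 := by
  classical
  obtain ⟨T, e, f, P, Q, kap, hkap, hPQ, hP, hQ, hm, hder, hcard, hsume, hsumf⟩ := D
  simp only at hint hx0 hy0 ⊢
  set O := v.valuationSubring with hO
  let k := IsLocalRing.ResidueField O
  let res : O →+* k := IsLocalRing.residue O
  -- units of O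
  have hunit : ∀ x : O, IsUnit x ↔ v (x : K) = 1 := by
    intro x
    constructor
    · rintro ⟨u, rfl⟩
      have h1 : v ((u : O) : K) ≤ 1 := (u : O).2
      have h2 : v (((u⁻¹ : Oˣ) : O) : K) ≤ 1 := ((u⁻¹ : Oˣ) : O).2
      have h3 : ((u : O) : K) * (((u⁻¹ : Oˣ) : O) : K) = 1 := by
        have h := u.mul_inv
        apply_fun (fun w : O => (w : K)) at h
        push_cast at h
        simpa using h
      have h4 : v ((u : O) : K) * v (((u⁻¹ : Oˣ) : O) : K) = 1 := by
        rw [← v.map_mul, h3, v.map_one]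
      refine le_antisymm h1 ?_
      calc (1 : NNReal) = v ((u : O) : K) * v (((u⁻¹ : Oˣ) : O) : K) := h4.symm
        _ ≤ v ((u : O) : K) * 1 := mul_le_mul_of_nonneg_left h2 zero_le
        _ = v ((u : O) : K) := mul_one _
    · intro hx
      have hx0' : (x : K) ≠ 0 := by
        intro h; rw [h] at hx; simp at hx
      have hxinv : v ((x : K)⁻¹) ≤ 1 := by
        rw [map_inv₀, hx]; simp
      refine IsUnit.of_mul_eq_one (a := x) ⟨(x : K)⁻¹, hxinv⟩ ?_
      exact Subtype.ext (by simpa using mul_inv_cancel₀ hx0')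
  have hres0 : ∀ x : O, res x = 0 ↔ v (x : K) < 1 := by
    intro x
    rw [show res = IsLocalRing.residue O from rfl, IsLocalRing.residue_eq_zero_iff,
      IsLocalRing.mem_maximalIdeal, mem_nonunits_iff, hunit]
    constructor
    · intro h; exact lt_of_le_of_ne x.2 h
    · intro h; exact ne_of_lt h
  -- lifting the configuration to O
  have hvsub : ∀ x ∈ T, ∀ y ∈ T, v (x - y) ≤ 1 := by
    intro x hx y hy
    exact le_trans (v.map_sub x y) (max_le (hint x hx) (hint y hy))
  let lift : {t // t ∈ T} → O := fun t => ⟨t.1, hint t.1 t.2⟩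
  let ψ : {t // t ∈ T} → k := fun t => res (lift t)
  let P₀ : Polynomial O := ∏ t ∈ T.attach, (X - C (lift t)) ^ (e t.1)
  let Q₀ : Polynomial O := ∏ t ∈ T.attach, (X - C (lift t)) ^ (f t.1)
  let R₀ : Polynomial O := ∏ t ∈ T.attach, (X - C (lift t)) ^ (e t.1 + f t.1 - 1)
  have hinj : Function.Injective (O.subtype) := Subtype.coe_injective
  have hmapgen : ∀ g : K → ℕ, (∏ t ∈ T.attach, (X - C (lift t)) ^ (g t.1)).map O.subtype
      = ∏ t ∈ T, (X - C t) ^ (g t) := by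
    intro g
    rw [Polynomial.map_prod]
    rw [← Finset.prod_attach T (fun t => (X - C t) ^ (g t))]
    refine Finset.prod_congr rfl fun t _ => ?_
    rw [Polynomial.map_pow, Polynomial.map_sub, map_X, map_C]
    rfl
  have hmapP : P₀.map O.subtype = P := by rw [hmapgen e, ← hP]
  have hmapQ : Q₀.map O.subtype = Q := by rw [hmapgen f, ← hQ]
  -- kap is integral
  have hkapint : v kap ≤ 1 := by
    have h1 : P.eval x0 = ∏ t ∈ T, (x0 - t) ^ (e t) := by
      rw [hP, eval_prod]
      refine Finset.prod_congr rfl fun t _ => ?_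
      rw [eval_pow, eval_sub, eval_X, eval_C]
    have h2 : Q.eval x0 = ∏ t ∈ T, (x0 - t) ^ (f t) := by
      rw [hQ, eval_prod]
      refine Finset.prod_congr rfl fun t _ => ?_
      rw [eval_pow, eval_sub, eval_X, eval_C]
    have hvP : v (P.eval x0) ≤ 1 := by
      rw [h1, map_prod v]
      refine Finset.prod_le_one (fun t _ => zero_le) (fun t ht => ?_)
      rw [map_pow]
      exact pow_le_one' (hvsub x0 hx0 t ht) _
    have hvQ : v (Q.eval x0) ≤ 1 := by
      rw [h2, map_prod v]
      refine Finset.prod_le_one (fun t _ => zero_le) (fun t ht => ?_)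
      rw [map_pow]
      exact pow_le_one' (hvsub x0 hx0 t ht) _
    have h3 : kap = P.eval x0 - Q.eval x0 := by rw [← eval_sub, hPQ, eval_C]
    rw [h3]
    exact le_trans (v.map_sub _ _) (max_le hvP hvQ)
  set kap₀ : O := ⟨kap, hkapint⟩ with hkap₀
  have hPQ₀ : P₀ - Q₀ = C kap₀ := by
    apply Polynomial.map_injective O.subtype hinj
    rw [Polynomial.map_sub, hmapP, hmapQ, map_C, hPQ]
    rfl
  have hder₀ : derivative P₀ = C (n : O) * R₀ := by
    apply Polynomial.map_injective O.subtype hinj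
    rw [← derivative_map, hmapP, Polynomial.map_mul, map_C,
      hmapgen (fun t => e t + f t - 1), hder]
    norm_cast
  -- the reduced configuration over the residue field
  let Pb : Polynomial k := P₀.map res
  let Qb : Polynomial k := Q₀.map res
  have hmapres : ∀ g : K → ℕ,
      (∏ t ∈ T.attach, ((X : Polynomial O) - C (lift t)) ^ (g t.1)).map res
      = ∏ t ∈ T.attach, ((X : Polynomial k) - C (ψ t)) ^ (g t.1) := by
    intro g
    rw [Polynomial.map_prod]
    refine Finset.prod_congr rfl fun t _ => ?_
    rw [Polynomial.map_pow, Polynomial.map_sub, map_X, map_C]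
  let Z : Finset k := T.attach.image ψ
  let fib : k → Finset {t // t ∈ T} := fun z => T.attach.filter (fun t => ψ t = z)
  have hgroup : ∀ g : K → ℕ, (∏ t ∈ T.attach, ((X : Polynomial k) - C (ψ t)) ^ (g t.1))
      = ∏ z ∈ Z, (X - C z) ^ (∑ t ∈ fib z, g t.1) := by
    intro g
    rw [← Finset.prod_fiberwise_of_maps_to (fun t ht => Finset.mem_image_of_mem ψ ht)
      (fun t => ((X : Polynomial k) - C (ψ t)) ^ (g t.1))]
    refine Finset.prod_congr rfl fun z hz => ?_
    rw [← Finset.prod_pow_eq_pow_sum]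
    refine Finset.prod_congr rfl fun t ht => ?_
    rw [(Finset.mem_filter.mp ht).2]
  let Eg : k → ℕ := fun z => ∑ t ∈ fib z, e t.1
  let Fg : k → ℕ := fun z => ∑ t ∈ fib z, f t.1
  let Gg : k → ℕ := fun z => ∑ t ∈ fib z, (e t.1 + f t.1 - 1)
  have hPb : Pb = ∏ z ∈ Z, (X - C z) ^ (Eg z) := by
    rw [show Pb = P₀.map res from rfl,
      show P₀ = ∏ t ∈ T.attach, ((X : Polynomial O) - C (lift t)) ^ (e t.1) from rfl,
      hmapres e, hgroup e]
  have hQb : Qb = ∏ z ∈ Z, (X - C z) ^ (Fg z) := by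
    rw [show Qb = Q₀.map res from rfl,
      show Q₀ = ∏ t ∈ T.attach, ((X : Polynomial O) - C (lift t)) ^ (f t.1) from rfl,
      hmapres f, hgroup f]
  have hPb' : derivative Pb = C (n : k) * ∏ z ∈ Z, (X - C z) ^ (Gg z) := by
    rw [show Pb = P₀.map res from rfl, derivative_map, hder₀, Polynomial.map_mul, map_C,
      show R₀ = ∏ t ∈ T.attach, ((X : Polynomial O) - C (lift t)) ^ (e t.1 + f t.1 - 1) from rfl,
      hmapres (fun t => e t + f t - 1), hgroup (fun t => e t + f t - 1)]
    norm_cast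
  have hPbQb : Pb - Qb = C (res kap₀) := by
    rw [show Pb = P₀.map res from rfl, show Qb = Q₀.map res from rfl,
      ← Polynomial.map_sub, hPQ₀, map_C]
  have hdQb : derivative Qb = derivative Pb := by
    have h1 : Qb = Pb - C (res kap₀) := by rw [← hPbQb]; ring
    rw [h1, derivative_sub, derivative_C, sub_zero]
  -- nonvanishing of natural numbers in the residue field
  have hresn1 : ∀ j : ℕ, 0 < j → j ≤ n → ((j : k) ≠ 0) := by
    intro j hj0 hjn
    have hvj : v ((j : O) : K) = 1 := by
      have hc : ((j : O) : K) = (j : K) := by push_cast; rfl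
      rw [hc]
      exact val_natCast_eq_one v hp hvp1 hj0 (lt_of_le_of_lt hjn hnp)
    have h2 : ¬ (res ((j : ℕ) : O) = 0) := by
      rw [hres0, hvj]
      exact lt_irrefl _
    rw [show ((j : k)) = res ((j : O)) from (map_natCast res j).symm]
    exact h2
  have hnk : ((n : k)) ≠ 0 := hresn1 n hn le_rfl
  -- root multiplicities in the reduced world
  have hevalne : ∀ z ∈ Z, ∀ g : k → ℕ, (∏ z' ∈ Z.erase z, (X - C z') ^ (g z')).eval z ≠ 0 := by
    intro z hz g
    rw [eval_prod, Finset.prod_ne_zero_iff]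
    intro z' hz'
    rw [eval_pow, eval_sub, eval_X, eval_C]
    exact pow_ne_zero _ (sub_ne_zero.mpr (Ne.symm (Finset.ne_of_mem_erase hz')))
  have hprodne : ∀ g : k → ℕ, (∏ z' ∈ Z, ((X : Polynomial k) - C z') ^ (g z')) ≠ 0 := by
    intro g
    refine Monic.ne_zero (monic_prod_of_monic _ _ fun z' _ => ?_)
    exact (monic_X_sub_C z').pow _
  have hrm : ∀ z ∈ Z, ∀ g : k → ℕ,
      rootMultiplicity z (∏ z' ∈ Z, ((X : Polynomial k) - C z') ^ (g z')) = g z := by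
    intro z hz g
    rw [← Finset.mul_prod_erase Z _ hz]
    have hne2 : (∏ z' ∈ Z.erase z, ((X : Polynomial k) - C z') ^ (g z')) ≠ 0 := by
      intro h
      exact hevalne z hz g (by rw [h, eval_zero])
    rw [rootMultiplicity_mul (mul_ne_zero (pow_ne_zero _ (X_sub_C_ne_zero z)) hne2),
      rootMultiplicity_X_sub_C_pow, rootMultiplicity_eq_zero (hevalne z hz g), add_zero]
  have rmPb : ∀ z ∈ Z, rootMultiplicity z Pb = Eg z := by
    intro z hz; rw [hPb]; exact hrm z hz Eg
  have rmQb : ∀ z ∈ Z, rootMultiplicity z Qb = Fg z := by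
    intro z hz; rw [hQb]; exact hrm z hz Fg
  have rmdPb : ∀ z ∈ Z, rootMultiplicity z (derivative Pb) = Gg z := by
    intro z hz
    rw [hPb']
    rw [rootMultiplicity_mul (mul_ne_zero (fun h => hnk (by
      have := congrArg (eval z) h
      rwa [eval_C, eval_zero] at this)) (hprodne Gg))]
    rw [rootMultiplicity_eq_zero (p := C (n : k)) (by rw [IsRoot, eval_C]; exact hnk),
      zero_add]
    exact hrm z hz Gg
  have hrootE : ∀ z ∈ Z, 1 ≤ Eg z → Pb.eval z = 0 := by
    intro z hz hE
    rw [hPb, eval_prod]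
    refine Finset.prod_eq_zero hz ?_
    rw [eval_pow, eval_sub, eval_X, eval_C, sub_self]
    exact zero_pow (by omega)
  have hrootF : ∀ z ∈ Z, 1 ≤ Fg z → Qb.eval z = 0 := by
    intro z hz hF
    rw [hQb, eval_prod]
    refine Finset.prod_eq_zero hz ?_
    rw [eval_pow, eval_sub, eval_X, eval_C, sub_self]
    exact zero_pow (by omega)
  have hEn : ∀ z : k, Eg z ≤ n := by
    intro z
    calc Eg z ≤ ∑ t ∈ T.attach, e t.1 :=
          Finset.sum_le_sum_of_subset (Finset.filter_subset _ _)
      _ = ∑ t ∈ T, e t := Finset.sum_attach T (fun t => e t)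
      _ = n := hsume
  have hFn : ∀ z : k, Fg z ≤ n := by
    intro z
    calc Fg z ≤ ∑ t ∈ T.attach, f t.1 :=
          Finset.sum_le_sum_of_subset (Finset.filter_subset _ _)
      _ = ∑ t ∈ T, f t := Finset.sum_attach T (fun t => f t)
      _ = n := hsumf
  have hEder : ∀ z ∈ Z, 1 ≤ Eg z → rootMultiplicity z (derivative Pb) = Eg z - 1 := by
    intro z hz hE
    have h1 := derivative_rootMultiplicity_of_root_of_mem_nonZeroDivisors
      (p := Pb) (t := z) (hrootE z hz hE) (by
        rw [rmPb z hz]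
        exact mem_nonZeroDivisors_of_ne_zero (hresn1 (Eg z) hE (hEn z)))
    rw [h1, rmPb z hz]
  have hFder : ∀ z ∈ Z, 1 ≤ Fg z → rootMultiplicity z (derivative Qb) = Fg z - 1 := by
    intro z hz hF
    have h1 := derivative_rootMultiplicity_of_root_of_mem_nonZeroDivisors
      (p := Qb) (t := z) (hrootF z hz hF) (by
        rw [rmQb z hz]
        exact mem_nonZeroDivisors_of_ne_zero (hresn1 (Fg z) hF (hFn z)))
    rw [h1, rmQb z hz]
  -- counting identities
  have hfibcard : ∀ z ∈ Z, (fib z).card ≤ Eg z + Fg z := by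
    intro z _
    calc (fib z).card = ∑ _t ∈ fib z, 1 := by rw [Finset.sum_const, smul_eq_mul, mul_one]
      _ ≤ ∑ t ∈ fib z, (e t.1 + f t.1) := by
          refine Finset.sum_le_sum fun t ht => ?_
          exact hm t.1 t.2
      _ = Eg z + Fg z := Finset.sum_add_distrib
  have hfibpos : ∀ z ∈ Z, 1 ≤ (fib z).card := by
    intro z hz
    obtain ⟨t, ht, hteq⟩ := Finset.mem_image.mp hz
    exact Finset.card_pos.mpr ⟨t, Finset.mem_filter.mpr ⟨ht, hteq⟩⟩
  have hGsum : ∀ z ∈ Z, Gg z + (fib z).card = Eg z + Fg z := by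
    intro z _
    have h1 : Gg z + (fib z).card = ∑ t ∈ fib z, ((e t.1 + f t.1 - 1) + 1) := by
      rw [Finset.sum_add_distrib, Finset.sum_const, smul_eq_mul, mul_one]
    rw [h1]
    rw [show Eg z + Fg z = ∑ t ∈ fib z, (e t.1 + f t.1) from Finset.sum_add_distrib.symm]
    refine Finset.sum_congr rfl fun t ht => ?_
    have := hm t.1 t.2
    omega
  -- translating singleton fibres into the goal
  have hfinal : (∀ z ∈ Z, (fib z).card = 1) → ∀ x ∈ T, ∀ y ∈ T, x ≠ y → v (x - y) = 1 := by
    intro hall x hx y hy hne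
    have hψ : ψ ⟨x, hx⟩ ≠ ψ ⟨y, hy⟩ := by
      intro hψeq
      have h1 : (⟨x, hx⟩ : {t // t ∈ T}) ∈ fib (ψ ⟨y, hy⟩) :=
        Finset.mem_filter.mpr ⟨Finset.mem_attach _ _, hψeq⟩
      have h2 : (⟨y, hy⟩ : {t // t ∈ T}) ∈ fib (ψ ⟨y, hy⟩) :=
        Finset.mem_filter.mpr ⟨Finset.mem_attach _ _, rfl⟩
      have hzZ : ψ ⟨y, hy⟩ ∈ Z := Finset.mem_image_of_mem ψ (Finset.mem_attach _ _)
      have hlt : 1 < (fib (ψ ⟨y, hy⟩)).card := by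
        refine Finset.one_lt_card.mpr ⟨_, h1, _, h2, fun hc => hne ?_⟩
        exact congrArg Subtype.val hc
      have := hall _ hzZ
      omega
    have hψsub : res (lift ⟨x, hx⟩ - lift ⟨y, hy⟩) ≠ 0 := by
      rw [map_sub]
      exact sub_ne_zero.mpr hψ
    have h3 : ¬ v (((lift ⟨x, hx⟩ - lift ⟨y, hy⟩ : O) : K)) < 1 := by
      rw [← hres0]
      exact hψsub
    have h4 : ((lift ⟨x, hx⟩ - lift ⟨y, hy⟩ : O) : K) = x - y := rfl
    rw [h4] at h3
    exact le_antisymm (hvsub x hx y hy) (not_lt.mp h3)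
  have hψ0 : ψ ⟨x0, hx0⟩ ≠ ψ ⟨y0, hy0⟩ := by
    intro hq
    have h1 : res (lift ⟨x0, hx0⟩ - lift ⟨y0, hy0⟩) = 0 := by
      rw [map_sub]
      exact sub_eq_zero_of_eq hq
    rw [hres0] at h1
    rw [show ((lift ⟨x0, hx0⟩ - lift ⟨y0, hy0⟩ : O) : K) = x0 - y0 from rfl, hxy] at h1
    exact lt_irrefl _ h1
  by_cases hkbar : res kap₀ = 0
  · -- impossible case: the two reductions coincide
    exfalso
    have hPQb0 : Pb = Qb := by
      have h1 := hPbQb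
      rw [hkbar, map_zero] at h1
      exact sub_eq_zero.mp h1
    have hEFeq : ∀ z ∈ Z, Eg z = Fg z := by
      intro z hz
      rw [← rmPb z hz, hPQb0, rmQb z hz]
    have hcards : ∀ z ∈ Z, (fib z).card = Eg z + 1 := by
      intro z hz
      have hE1 : 1 ≤ Eg z := by
        have h1 := hfibcard z hz
        have h2 := hfibpos z hz
        have h3 := hEFeq z hz
        omega
      have h1 := rmdPb z hz
      have h2 := hEder z hz hE1
      have h3 := hGsum z hz
      have h4 := hEFeq z hz
      omega
    have hsumcard : ∑ z ∈ Z, (fib z).card = n + 1 := by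
      have h1 := Finset.card_eq_sum_card_fiberwise
        (fun (t : {t // t ∈ T}) (ht : t ∈ T.attach) => Finset.mem_image_of_mem ψ ht)
      rw [Finset.card_attach, hcard] at h1
      exact h1.symm
    have hsumE : ∑ z ∈ Z, Eg z = n := by
      have h1 := Finset.sum_fiberwise_of_maps_to
        (fun (t : {t // t ∈ T}) (ht : t ∈ T.attach) => Finset.mem_image_of_mem ψ ht)
        (fun t => e t.1)
      rw [Finset.sum_attach T (fun t => e t), hsume] at h1
      exact h1
    have hZ1 : Z.card = 1 := by
      have h1 : ∑ z ∈ Z, (fib z).card = ∑ z ∈ Z, (Eg z + 1) :=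
        Finset.sum_congr rfl hcards
      rw [hsumcard, Finset.sum_add_distrib, hsumE, Finset.sum_const, smul_eq_mul, mul_one] at h1
      omega
    have hZ2 : 1 < Z.card := by
      refine Finset.one_lt_card.mpr ⟨ψ ⟨x0, hx0⟩, ?_, ψ ⟨y0, hy0⟩, ?_, hψ0⟩
      · exact Finset.mem_image_of_mem ψ (Finset.mem_attach _ _)
      · exact Finset.mem_image_of_mem ψ (Finset.mem_attach _ _)
    omega
  · -- good reduction: all fibres are singletons
    refine hfinal ?_
    intro z hz
    have hnotboth : ¬ (1 ≤ Eg z ∧ 1 ≤ Fg z) := by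
      rintro ⟨hE, hF⟩
      have h1 := congrArg (eval z) hPbQb
      rw [eval_sub, hrootE z hz hE, hrootF z hz hF, eval_C, sub_zero] at h1
      exact hkbar h1.symm
    have hG := hGsum z hz
    have hc1 := hfibpos z hz
    have hc2 := hfibcard z hz
    rcases Nat.lt_or_ge (Eg z) 1 with hE0 | hE1
    · have hF1 : 1 ≤ Fg z := by omega
      have h2 := hFder z hz hF1
      rw [hdQb] at h2
      have h1 := rmdPb z hz
      omega
    · have hF0 : Fg z = 0 := by omega
      have h2 := hEder z hz hE1
      have h1 := rmdPb z hz
      omega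

/-- A polynomial `B` over a field `F` is a *Belyi polynomial* if `B 0 ∈ {0,1}`,
`B 1 ∈ {0,1}`, and the derivative `B'` divides `B * (B - 1)`. -/
def IsBelyi {F : Type*} [Field F] (B : F[X]) : Prop :=
  B.eval 0 ∈ ({0, 1} : Set F) ∧ B.eval 1 ∈ ({0, 1} : Set F) ∧
    B.derivative ∣ B * (B - 1)

/-- If `B` is a nonconstant Belyi polynomial over an algebraically closed field `K` of
characteristic zero carrying a multiplicative valuation `v` with `0 < v p < 1` for a prime `p`,
and `λ ≠ 0` has `v λ ≠ 1`, then `B λ ∈ {0,1}` forces `deg B ≥ p`. -/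
theorem belyi_height_ge_prime {K : Type*} [Field K] [IsAlgClosed K] [CharZero K]
    (p : ℕ) (hp : p.Prime) (v : Valuation K NNReal)
    (hvp0 : 0 < v (p : K)) (hvp1 : v (p : K) < 1)
    (B : K[X]) (hB : IsBelyi B) (hBdeg : 0 < B.natDegree)
    (lam : K) (hlam0 : lam ≠ 0) (hlamv : v lam ≠ 1)
    (hBlam : B.eval lam ∈ ({0, 1} : Set K)) :
    p ≤ B.natDegree := by
  classical
  by_contra hcon
  push_neg at hcon
  obtain ⟨hB0, hB1, hdvd⟩ := hB
  have hlam1 : lam ≠ 1 := fun h => hlamv (by rw [h, v.map_one])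
  set n := B.natDegree with hndef
  have hBne : B ≠ 0 := fun h => by rw [h] at hndef; simp at hndef; omega
  have hB1deg : (B - 1).natDegree = n := by rw [← C_1, natDegree_sub_C]
  have hB1ne : B - 1 ≠ 0 := fun h => by rw [h] at hB1deg; simp at hB1deg; omega
  have hprodne : B * (B - 1) ≠ 0 := mul_ne_zero hBne hB1ne
  set TU : Finset K := (B * (B - 1)).roots.toFinset with hTU
  have hmem : ∀ x : K, x ∈ TU ↔ B.eval x * (B.eval x - 1) = 0 := by
    intro x
    rw [hTU, Multiset.mem_toFinset, mem_roots hprodne, IsRoot, eval_mul, eval_sub, eval_one]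
  have hroot_of_mem : ∀ x : K, B.eval x ∈ ({0, 1} : Set K) → x ∈ TU := by
    intro x hx
    rw [hmem]
    rcases hx with h | h
    · rw [h, zero_mul]
    · simp only [Set.mem_singleton_iff] at h
      rw [h, sub_self, mul_zero]
  have h0U : (0 : K) ∈ TU := hroot_of_mem 0 hB0
  have h1U : (1 : K) ∈ TU := hroot_of_mem 1 hB1
  have hlU : lam ∈ TU := hroot_of_mem lam hBlam
  -- pick a pair realizing the maximal distance
  have hne : ((TU ×ˢ TU).Nonempty) := ⟨(0, 1), Finset.mem_product.mpr ⟨h0U, h1U⟩⟩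
  obtain ⟨pr, hpr, hmax⟩ := Finset.exists_max_image (TU ×ˢ TU) (fun q => v (q.1 - q.2)) hne
  set ta := pr.1 with hta
  set tb := pr.2 with htb
  have htaU : ta ∈ TU := (Finset.mem_product.mp hpr).1
  have htbU : tb ∈ TU := (Finset.mem_product.mp hpr).2
  set δ := ta - tb with hδ
  have hΔ1 : 1 ≤ v δ := by
    have h1 := hmax (1, 0) (Finset.mem_product.mpr ⟨h1U, h0U⟩)
    simpa using h1
  have hδ0 : δ ≠ 0 := by
    intro h
    rw [h, v.map_zero] at hΔ1
    simp at hΔ1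
  have hvδ0 : v δ ≠ 0 := fun h => hδ0 (v.zero_iff.mp h)
  set ell : K[X] := C δ * X + C tb with hell
  have helleval : ∀ x : K, ell.eval x = δ * x + tb := by
    intro x; rw [hell]; simp
  set Bh := B.comp ell with hBh
  have hBhdeg : Bh.natDegree = n := by
    rw [hBh, natDegree_comp, natDegree_linear hδ0, mul_one]
  have hBhdvd : Bh.derivative ∣ Bh * (Bh - 1) := by
    obtain ⟨q, hq⟩ := hdvd
    have hCδ : C δ * C δ⁻¹ = 1 := by rw [← C_mul, mul_inv_cancel₀ hδ0, C_1]
    have hd : derivative Bh = (derivative B).comp ell * C δ := by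
      rw [hBh, derivative_comp, hell]
      rw [derivative_add, derivative_C, add_zero, derivative_C_mul, derivative_X, mul_one]
      ring
    refine ⟨C δ⁻¹ * q.comp ell, ?_⟩
    calc Bh * (Bh - 1) = (B * (B - 1)).comp ell := by
          rw [mul_comp, sub_comp, one_comp, hBh]
      _ = (derivative B * q).comp ell := by rw [hq]
      _ = (derivative B).comp ell * q.comp ell := mul_comp _ _ _
      _ = ((derivative B).comp ell * C δ) * (C δ⁻¹ * q.comp ell) := by
          rw [show ((derivative B).comp ell * C δ) * (C δ⁻¹ * q.comp ell)
            = (derivative B).comp ell * ((C δ * C δ⁻¹) * q.comp ell) by ring, hCδ, one_mul]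
      _ = derivative Bh * (C δ⁻¹ * q.comp ell) := by rw [hd]
  obtain ⟨D, hD⟩ := exists_belyiData Bh hBhdvd (by rw [hBhdeg]; exact hBdeg)
  have hmemD : ∀ x : K, x ∈ D.T ↔ B.eval (δ * x + tb) * (B.eval (δ * x + tb) - 1) = 0 := by
    intro x
    rw [hD x, eval_mul, eval_sub, eval_one, hBh, eval_comp, helleval]
  have hφ : ∀ x : K, δ * ((x - tb) / δ) + tb = x := by
    intro x; field_simp; ring
  have hmemφ : ∀ x : K, x ∈ TU → ((x - tb) / δ) ∈ D.T := by
    intro x hx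
    rw [hmemD, hφ]
    exact (hmem x).mp hx
  -- integrality of D.T
  have hintD : ∀ x ∈ D.T, v x ≤ 1 := by
    intro x hx
    have hroot := (hmemD x).mp hx
    have htUx : (δ * x + tb) ∈ TU := by
      rw [hmem]; exact hroot
    have hle : v ((δ * x + tb) - tb) ≤ v δ := by
      have h2 := hmax ((δ * x + tb), tb) (Finset.mem_product.mpr ⟨htUx, htbU⟩)
      exact h2
    have h3 : (δ * x + tb) - tb = δ * x := by ring
    rw [h3, v.map_mul] at hle
    have h4 : v δ * v x ≤ v δ * 1 := by rwa [mul_one]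
    exact le_of_mul_le_mul_left h4 (zero_lt_iff.mpr hvδ0)
  -- marked points
  have h0D : ((0 : K) - tb) / δ ∈ D.T := hmemφ 0 h0U
  have hlD : ((lam - tb) / δ) ∈ D.T := hmemφ lam hlU
  have h1D : ((1 : K) - tb) / δ ∈ D.T := hmemφ 1 h1U
  have hx0D : (1 : K) ∈ D.T := by
    have h1 := hmemφ ta htaU
    rwa [show (ta - tb) / δ = 1 from div_self hδ0] at h1
  have hy0D : (0 : K) ∈ D.T := by
    have h1 := hmemφ tb htbU
    rwa [show (tb - tb) / δ = 0 by rw [sub_self, zero_div]] at h1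
  have hflat := belyi_flat hp v hvp1 (n := Bh.natDegree)
    (by rw [hBhdeg]; exact hBdeg) (by rw [hBhdeg]; exact hcon) D hintD hx0D hy0D
    (by rw [sub_zero, v.map_one])
  -- distance from lam to 0
  have hdiff_l : (lam - tb) / δ - ((0 : K) - tb) / δ = lam * δ⁻¹ := by
    field_simp; ring
  have hdiff_1 : ((1 : K) - tb) / δ - ((0 : K) - tb) / δ = 1 * δ⁻¹ := by
    field_simp; ring
  have hne_l : (lam - tb) / δ ≠ ((0 : K) - tb) / δ := by
    intro h
    have h2 := sub_eq_zero.mpr h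
    rw [hdiff_l] at h2
    rcases mul_eq_zero.mp h2 with h3 | h3
    · exact hlam0 h3
    · exact inv_ne_zero hδ0 h3
  have hne_1 : ((1 : K) - tb) / δ ≠ ((0 : K) - tb) / δ := by
    intro h
    have h2 := sub_eq_zero.mpr h
    rw [hdiff_1] at h2
    rcases mul_eq_zero.mp h2 with h3 | h3
    · exact one_ne_zero h3
    · exact inv_ne_zero hδ0 h3
  have hvl := hflat _ hlD _ h0D hne_l
  have hv1 := hflat _ h1D _ h0D hne_1
  rw [hdiff_l, v.map_mul, map_inv₀] at hvl
  rw [hdiff_1, v.map_mul, map_inv₀, v.map_one, one_mul] at hv1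
  -- v δ = 1 and then v lam = 1
  have hvδ1 : v δ = 1 := by
    have := congrArg (fun t => t * v δ) hv1
    simp only [inv_mul_cancel₀ hvδ0, one_mul] at this
    exact this.symm
  rw [hvδ1, inv_one, mul_one] at hvl
  exact hlamv hvl
end

section
/- Let p be a prime, let B ∈ ℚ[X] be a nonconstant Belyi polynomial, and let q ∈ ℚ be nonzero with non-zero p-adic valuation (padicValRat p q ≠ 0). If B(q) ∈ {0,1}, then the degree of B is at least p. In particular, a Belyi polynomial over ℚ having a rational root a/b in lowest terms has degree at least every prime dividing a·b. -/
open Polynomial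

lemma core_count {p : ℕ} [hp : Fact p.Prime] (j : ℕ) (hj : j = 1 ∨ j = 2) (c : ZMod p)
    (hc : c ≠ 0) (P H : (ZMod p)[X]) (hP : P ≠ 0) (hH : H ≠ 0)
    (hid : C c * P ^ j = derivative P * H)
    (h0 : P.eval 0 = 0) (h1 : P.eval 1 = 0) (hdeg : P.natDegree < p) : False := by
  classical
  set kb := AlgebraicClosure (ZMod p) with hkb
  let φ : ZMod p →+* kb := algebraMap (ZMod p) kb
  have hφ : Function.Injective φ := φ.injective
  set Pb : kb[X] := P.map φ with hPb
  set Hb : kb[X] := H.map φ with hHb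
  have hPb0 : Pb ≠ 0 := by
    simpa [hPb, Polynomial.map_ne_zero_iff hφ] using hP
  have hHb0 : Hb ≠ 0 := by
    simpa [hHb, Polynomial.map_ne_zero_iff hφ] using hH
  set d := P.natDegree with hd
  have hdb : Pb.natDegree = d := by rw [hPb, natDegree_map_eq_of_injective hφ]
  -- degree at least 1
  have hd1 : 1 ≤ d := by
    by_contra hlt
    have hd0 : P.natDegree = 0 := by omega
    have hC := Polynomial.eq_C_of_natDegree_eq_zero hd0
    rw [hC] at h0
    simp at h0
    rw [hC, h0] at hP
    simp at hP
  -- mapped identity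
  have hidb : C (φ c) * Pb ^ j = derivative Pb * Hb := by
    have h2 := congrArg (Polynomial.map φ) hid
    rw [Polynomial.map_mul, Polynomial.map_mul, Polynomial.map_pow, Polynomial.map_C] at h2
    rw [hPb, hHb, derivative_map]
    exact h2
  have hcb : φ c ≠ 0 := fun h => hc (hφ (by simpa using h))
  -- derivative nonzero and degree d - 1
  have hcoefd : (derivative Pb).coeff (d - 1) = Pb.coeff d * (d : kb) := by
    rw [Polynomial.coeff_derivative]
    have : d - 1 + 1 = d := by omega
    rw [this]
    congr 1
    rw [Nat.cast_sub hd1]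
    push_cast
    ring
  have hdk : ((d : ℕ) : kb) ≠ 0 := by
    intro h
    have hdvd := (CharP.cast_eq_zero_iff kb p d).1 h
    have := Nat.le_of_dvd (by omega) hdvd
    omega
  have hlead : Pb.coeff d ≠ 0 := by
    rw [← hdb]
    exact Polynomial.leadingCoeff_ne_zero.2 hPb0
  have hD0 : (derivative Pb).coeff (d-1) ≠ 0 := by
    rw [hcoefd]
    exact mul_ne_zero hlead hdk
  have hDne : derivative Pb ≠ 0 := fun h => hD0 (by simp [h])
  have hDdeg : (derivative Pb).natDegree = d - 1 := by
    refine le_antisymm ?_ (le_natDegree_of_ne_zero hD0)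
    calc (derivative Pb).natDegree ≤ Pb.natDegree - 1 := natDegree_derivative_le Pb
    _ = d - 1 := by rw [hdb]
  -- degree equation
  have hdegeq : j * d = (d - 1) + Hb.natDegree := by
    have h1' : (C (φ c) * Pb ^ j).natDegree = j * d := by
      rw [natDegree_C_mul hcb, natDegree_pow, hdb]
    have h2' : (derivative Pb * Hb).natDegree = (d-1) + Hb.natDegree := by
      rw [natDegree_mul hDne hHb0, hDdeg]
    rw [← h1', hidb, h2']
  -- roots
  have hsplit : Multiset.card Pb.roots = d := by
    rw [← hdb]
    exact (splits_iff_card_roots).1 (IsAlgClosed.splits Pb)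
  set R := Pb.roots with hR
  set MM : Multiset kb := (j-1) • R + R.dedup with hMM
  have hMMle : MM ≤ Hb.roots := by
    rw [Multiset.le_iff_count]
    intro a
    by_cases ha : a ∈ R
    swap
    · have hz : Multiset.count a MM = 0 := by
        simp [hMM, Multiset.count_nsmul, Multiset.count_eq_zero_of_notMem ha,
          Multiset.count_dedup, ha]
      omega
    · -- a is a root of Pb
      have haroot : Pb.IsRoot a := (Polynomial.mem_roots hPb0).1 ha
      set m := Pb.rootMultiplicity a with hm
      have hm1 : 1 ≤ m := (Polynomial.rootMultiplicity_pos hPb0).2 haroot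
      have hmd : m ≤ d := by
        have h3 := Multiset.count_le_card a R
        rwa [hR, Polynomial.count_roots, hsplit, ← hm] at h3
      have hmk : ((m : ℕ) : kb) ≠ 0 := by
        intro h
        have hdvd := (CharP.cast_eq_zero_iff kb p m).1 h
        have := Nat.le_of_dvd (by omega) hdvd
        omega
      have hder : (derivative Pb).rootMultiplicity a = m - 1 := by
        refine derivative_rootMultiplicity_of_root_of_mem_nonZeroDivisors haroot ?_
        exact mem_nonZeroDivisors_of_ne_zero hmk
      have hpow : (Pb ^ j).rootMultiplicity a = j * m := by
        rcases hj with rfl | rfl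
        · simp [hm]
        · rw [pow_two, Polynomial.rootMultiplicity_mul (mul_ne_zero hPb0 hPb0)]
          omega
      have hCc : (C (φ c)).rootMultiplicity a = 0 := by
        apply Polynomial.rootMultiplicity_eq_zero
        simp [IsRoot, hcb]
      have hLHS : (C (φ c) * Pb ^ j).rootMultiplicity a = j * m := by
        rw [Polynomial.rootMultiplicity_mul
          (mul_ne_zero (Polynomial.C_ne_zero.2 hcb) (pow_ne_zero _ hPb0)), hCc, hpow, zero_add]
      have hRHS : (derivative Pb * Hb).rootMultiplicity a = (m - 1) + Hb.rootMultiplicity a :=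
        by rw [Polynomial.rootMultiplicity_mul (mul_ne_zero hDne hHb0), hder]
      have hHm : Hb.rootMultiplicity a = (j - 1) * m + 1 := by
        have h4 := hLHS.symm.trans (by rw [hidb, hRHS])
        rcases hj with rfl | rfl <;> omega
      have hcount : Multiset.count a MM = (j-1) * m + 1 := by
        simp [hMM, Multiset.count_nsmul, hR, Polynomial.count_roots, ← hm,
          Multiset.count_dedup, ha]
        exact ⟨hPb0, haroot⟩
      rw [hcount, Polynomial.count_roots, hHm]
  -- cardinalities
  have hcardMM : Multiset.card MM = (j-1) * d + R.toFinset.card := by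
    rw [hMM, Multiset.card_add, Multiset.card_nsmul, hsplit]
    rfl
  have hr2 : 2 ≤ R.toFinset.card := by
    have h0m : (0 : kb) ∈ R.toFinset := by
      rw [Multiset.mem_toFinset, hR, Polynomial.mem_roots hPb0]
      show Pb.eval 0 = 0
      rw [hPb, Polynomial.eval_zero_map, h0, map_zero]
    have h1m : (1 : kb) ∈ R.toFinset := by
      rw [Multiset.mem_toFinset, hR, Polynomial.mem_roots hPb0]
      show Pb.eval 1 = 0
      rw [hPb, Polynomial.eval_one_map, h1, map_zero]
    have hsub : ({0, 1} : Finset kb) ⊆ R.toFinset := by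
      intro x hx
      simp only [Finset.mem_insert, Finset.mem_singleton] at hx
      rcases hx with rfl | rfl <;> assumption
    calc 2 = ({0,1} : Finset kb).card := by simp
    _ ≤ R.toFinset.card := Finset.card_le_card hsub
  have hHroots : Multiset.card Hb.roots ≤ Hb.natDegree := Polynomial.card_roots' Hb
  have hle := Multiset.card_le_card hMMle
  rw [hcardMM] at hle
  rcases hj with rfl | rfl <;> omega

namespace BelyiAux

variable {p : ℕ} [hp : Fact p.Prime]

lemma norm_natCast_le_one (m : ℕ) : ‖(m : ℚ_[p])‖ ≤ 1 := by
  have h1 : ((m : ℚ) : ℚ_[p]) = (m : ℚ_[p]) := by push_cast; ring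
  rw [← h1, Padic.eq_padicNorm]
  exact_mod_cast padicNorm.of_int (m : ℤ)

lemma norm_natCast_eq_one {m : ℕ} (h0 : 0 < m) (hmp : m < p) : ‖(m : ℚ_[p])‖ = 1 := by
  have h1 : ((m : ℚ) : ℚ_[p]) = (m : ℚ_[p]) := by push_cast; ring
  rw [← h1, Padic.eq_padicNorm]
  have : padicNorm p m = 1 := (padicNorm.nat_eq_one_iff m).2 (by
    intro hdvd
    have := Nat.le_of_dvd h0 hdvd
    omega)
  exact_mod_cast this

lemma toZMod_eq_zero_iff (x : ℤ_[p]) : PadicInt.toZMod x = 0 ↔ ‖x‖ < 1 := by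
  constructor
  · intro h
    have hx : x ∈ RingHom.ker (PadicInt.toZMod (p := p)) := by simpa [RingHom.mem_ker] using h
    rw [PadicInt.ker_toZMod, IsLocalRing.mem_maximalIdeal, mem_nonunits_iff,
      PadicInt.isUnit_iff] at hx
    exact lt_of_le_of_ne x.2 hx
  · intro h
    have hx : x ∈ RingHom.ker (PadicInt.toZMod (p := p)) := by
      rw [PadicInt.ker_toZMod, IsLocalRing.mem_maximalIdeal, mem_nonunits_iff,
        PadicInt.isUnit_iff]
      exact ne_of_lt h
    simpa [RingHom.mem_ker] using hx

/-- coerce an integral element into `ℤ_[p]`. -/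
def toZp (x : ℚ_[p]) (h : ‖x‖ ≤ 1) : ℤ_[p] := ⟨x, h⟩

@[simp] lemma toZp_coe (x : ℚ_[p]) (h : ‖x‖ ≤ 1) : ((toZp x h : ℤ_[p]) : ℚ_[p]) = x := rfl

/-- Lift a `ℚ_[p]`-polynomial with integral coefficients to `ℤ_[p][X]`. -/
noncomputable def liftO (F : ℚ_[p][X]) (h : ∀ i, ‖F.coeff i‖ ≤ 1) : ℤ_[p][X] :=
  ∑ i ∈ F.support, C (toZp (F.coeff i) (h i)) * X ^ i

lemma liftO_map (F : ℚ_[p][X]) (h : ∀ i, ‖F.coeff i‖ ≤ 1) :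
    (liftO F h).map (PadicInt.Coe.ringHom) = F := by
  rw [liftO, Polynomial.map_sum]
  have : ∀ i ∈ F.support,
      (Polynomial.map PadicInt.Coe.ringHom) (C (toZp (F.coeff i) (h i)) * X ^ i)
        = C (F.coeff i) * X ^ i := by
    intro i _
    rw [Polynomial.map_mul, Polynomial.map_pow, Polynomial.map_C, Polynomial.map_X]
    rfl
  rw [Finset.sum_congr rfl this]
  conv_rhs => rw [F.as_sum_support]
  exact Finset.sum_congr rfl fun i _ => Polynomial.C_mul_X_pow_eq_monomial

lemma liftO_coeff (F : ℚ_[p][X]) (h : ∀ i, ‖F.coeff i‖ ≤ 1) (i : ℕ) :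
    (((liftO F h).coeff i : ℤ_[p]) : ℚ_[p]) = F.coeff i := by
  conv_rhs => rw [← liftO_map F h]
  rw [Polynomial.coeff_map]
  rfl

lemma liftO_natDegree (F : ℚ_[p][X]) (h : ∀ i, ‖F.coeff i‖ ≤ 1) :
    (liftO F h).natDegree = F.natDegree := by
  have hinj : Function.Injective (PadicInt.Coe.ringHom (p := p)) := Subtype.coe_injective
  conv_rhs => rw [← liftO_map F h]
  exact (natDegree_map_eq_of_injective hinj _).symm

/-- Reduction of an integral `ℚ_[p]`-polynomial mod `p`. -/
noncomputable def redO (F : ℚ_[p][X]) (h : ∀ i, ‖F.coeff i‖ ≤ 1) : (ZMod p)[X] :=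
  (liftO F h).map (PadicInt.toZMod)

lemma redO_coeff (F : ℚ_[p][X]) (h : ∀ i, ‖F.coeff i‖ ≤ 1) (i : ℕ) :
    (redO F h).coeff i = PadicInt.toZMod ((liftO F h).coeff i) := by
  rw [redO, Polynomial.coeff_map]

lemma redO_coeff_eq_zero (F : ℚ_[p][X]) (h : ∀ i, ‖F.coeff i‖ ≤ 1) (i : ℕ)
    (hi : ‖F.coeff i‖ < 1) : (redO F h).coeff i = 0 := by
  rw [redO_coeff]
  rw [toZMod_eq_zero_iff]
  rw [PadicInt.norm_def, liftO_coeff]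
  exact hi

lemma redO_coeff_ne_zero (F : ℚ_[p][X]) (h : ∀ i, ‖F.coeff i‖ ≤ 1) (i : ℕ)
    (hi : ‖F.coeff i‖ = 1) : (redO F h).coeff i ≠ 0 := by
  rw [redO_coeff]
  intro hz
  rw [toZMod_eq_zero_iff, PadicInt.norm_def, liftO_coeff, hi] at hz
  exact lt_irrefl _ hz

lemma redO_ne_zero (F : ℚ_[p][X]) (h : ∀ i, ‖F.coeff i‖ ≤ 1) (i : ℕ)
    (hi : ‖F.coeff i‖ = 1) : redO F h ≠ 0 := by
  intro h0
  exact redO_coeff_ne_zero F h i hi (by rw [h0, Polynomial.coeff_zero])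

lemma redO_eq_zero (F : ℚ_[p][X]) (h : ∀ i, ‖F.coeff i‖ ≤ 1)
    (hall : ∀ i, ‖F.coeff i‖ < 1) : redO F h = 0 := by
  ext i
  rw [redO_coeff_eq_zero F h i (hall i), Polynomial.coeff_zero]

lemma redO_natDegree_le (F : ℚ_[p][X]) (h : ∀ i, ‖F.coeff i‖ ≤ 1) :
    (redO F h).natDegree ≤ F.natDegree := by
  rw [redO]
  exact le_trans Polynomial.natDegree_map_le (le_of_eq (liftO_natDegree F h))

lemma redO_mul (A B AB : ℚ_[p][X]) (hA : ∀ i, ‖A.coeff i‖ ≤ 1) (hB : ∀ i, ‖B.coeff i‖ ≤ 1)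
    (hAB : ∀ i, ‖AB.coeff i‖ ≤ 1) (hmul : AB = A * B) :
    redO AB hAB = redO A hA * redO B hB := by
  have hl : liftO AB hAB = liftO A hA * liftO B hB := by
    apply Polynomial.map_injective PadicInt.Coe.ringHom Subtype.coe_injective
    rw [Polynomial.map_mul, liftO_map, liftO_map, liftO_map, hmul]
  rw [redO, redO, redO, hl, Polynomial.map_mul]

lemma redO_eval_zero (F : ℚ_[p][X]) (h : ∀ i, ‖F.coeff i‖ ≤ 1)
    (h0 : ‖F.eval 0‖ < 1) : (redO F h).eval 0 = 0 := by
  have : F.eval 0 = F.coeff 0 := (Polynomial.coeff_zero_eq_eval_zero F).symm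
  rw [← Polynomial.coeff_zero_eq_eval_zero]
  exact redO_coeff_eq_zero F h 0 (by rwa [← this])

lemma redO_eval_one (F : ℚ_[p][X]) (h : ∀ i, ‖F.coeff i‖ ≤ 1)
    (h1 : ‖F.eval 1‖ < 1) : (redO F h).eval 1 = 0 := by
  rw [redO, Polynomial.eval_one_map, toZMod_eq_zero_iff, PadicInt.norm_def]
  have : (((liftO F h).eval 1 : ℤ_[p]) : ℚ_[p]) = F.eval 1 := by
    have := Polynomial.eval_one_map (PadicInt.Coe.ringHom) (liftO F h)
    rw [liftO_map] at this
    exact this.symm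
  rwa [this]

lemma redO_derivative (F : ℚ_[p][X]) (h : ∀ i, ‖F.coeff i‖ ≤ 1)
    (hd : ∀ i, ‖(derivative F).coeff i‖ ≤ 1) :
    redO (derivative F) hd = derivative (redO F h) := by
  have hl : liftO (derivative F) hd = derivative (liftO F h) := by
    apply Polynomial.map_injective PadicInt.Coe.ringHom Subtype.coe_injective
    rw [liftO_map, ← derivative_map, liftO_map]
  rw [redO, redO, hl, derivative_map]

end BelyiAux

namespace BelyiAux
variable {p : ℕ} [hp : Fact p.Prime]

lemma p_cast_ne_zero : ((p : ℚ_[p])) ≠ 0 := by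
  exact_mod_cast hp.out.ne_zero

lemma one_lt_p_real : (1 : ℝ) < (p : ℝ) := by exact_mod_cast hp.out.one_lt

lemma p_real_pos : (0 : ℝ) < (p : ℝ) := lt_trans one_pos one_lt_p_real

lemma mul_int (A B : ℚ_[p][X]) (hA : ∀ i, ‖A.coeff i‖ ≤ 1) (hB : ∀ i, ‖B.coeff i‖ ≤ 1) :
    ∀ i, ‖(A * B).coeff i‖ ≤ 1 := by
  intro i
  have hmap : (liftO A hA * liftO B hB).map (PadicInt.Coe.ringHom) = A * B := by
    rw [Polynomial.map_mul, liftO_map, liftO_map]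
  have : (A*B).coeff i = (((liftO A hA * liftO B hB).coeff i : ℤ_[p]) : ℚ_[p]) := by
    conv_lhs => rw [← hmap]
    rw [Polynomial.coeff_map]
    rfl
  rw [this, ← PadicInt.norm_def]
  exact ((liftO A hA * liftO B hB).coeff i).2

lemma redO_congr {A B : ℚ_[p][X]} (hA : ∀ i, ‖A.coeff i‖ ≤ 1) (hB : ∀ i, ‖B.coeff i‖ ≤ 1)
    (hAB : ∀ i, ‖A.coeff i - B.coeff i‖ < 1) : redO A hA = redO B hB := by
  ext i
  rw [redO_coeff, redO_coeff]
  have hdiff : PadicInt.toZMod ((liftO A hA).coeff i - (liftO B hB).coeff i) = 0 := by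
    rw [toZMod_eq_zero_iff, PadicInt.norm_def]
    have : (((liftO A hA).coeff i - (liftO B hB).coeff i : ℤ_[p]) : ℚ_[p])
        = A.coeff i - B.coeff i := by
      push_cast [liftO_coeff]
      rfl
    rw [this]
    exact hAB i
  rw [map_sub] at hdiff
  linear_combination (norm := ring_nf) hdiff

/-- normalization of a nonzero polynomial to unit max-norm -/
lemma exists_normalization (A : ℚ_[p][X]) (i₀ : ℕ) (hne : A.coeff i₀ ≠ 0)
    (hmax : ∀ i, ‖A.coeff i‖ ≤ ‖A.coeff i₀‖) :
    ∃ s : ℤ, ‖A.coeff i₀‖ = (p:ℝ)^(-s) ∧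
      (∀ i, ‖(C ((p:ℚ_[p])^(-s)) * A).coeff i‖ ≤ 1) ∧
      ‖(C ((p:ℚ_[p])^(-s)) * A).coeff i₀‖ = 1 := by
  refine ⟨(A.coeff i₀).valuation, Padic.norm_eq_zpow_neg_valuation hne, ?_, ?_⟩
  · intro i
    rw [Polynomial.coeff_C_mul, norm_mul, Padic.norm_p_zpow, neg_neg]
    calc (p:ℝ)^((A.coeff i₀).valuation) * ‖A.coeff i‖
        ≤ (p:ℝ)^((A.coeff i₀).valuation) * ‖A.coeff i₀‖ := by
          apply mul_le_mul_of_nonneg_left (hmax i) (le_of_lt (zpow_pos p_real_pos _))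
      _ = 1 := by
          rw [Padic.norm_eq_zpow_neg_valuation hne, ← zpow_add₀ (ne_of_gt p_real_pos)]
          simp
  · rw [Polynomial.coeff_C_mul, norm_mul, Padic.norm_p_zpow, neg_neg,
      Padic.norm_eq_zpow_neg_valuation hne, ← zpow_add₀ (ne_of_gt p_real_pos)]
    simp

/-- The key reduction: from the scaled identity, the `p`-power must be trivial and the
identity reduces mod `p`. -/
lemma reduce_identity (Fh Gh Hh : ℚ_[p][X])
    (hIntF : ∀ i, ‖Fh.coeff i‖ ≤ 1) (hIntG : ∀ i, ‖Gh.coeff i‖ ≤ 1)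
    (hIntH : ∀ i, ‖Hh.coeff i‖ ≤ 1)
    (hUF : ∃ i, ‖Fh.coeff i‖ = 1) (hUG : ∃ i, ‖Gh.coeff i‖ = 1)
    (hUH : ∃ i, ‖Hh.coeff i‖ = 1)
    (hIntD : ∀ i, ‖(derivative Fh).coeff i‖ ≤ 1) (hUD : ∃ i, ‖(derivative Fh).coeff i‖ = 1)
    (e : ℤ) (hid : Fh * Gh = derivative Fh * (C ((p:ℚ_[p])^e) * Hh)) :
    redO Fh hIntF * redO Gh hIntG = derivative (redO Fh hIntF) * redO Hh hIntH := by
  obtain ⟨iF, hiF⟩ := hUF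
  obtain ⟨iG, hiG⟩ := hUG
  obtain ⟨iH, hiH⟩ := hUH
  obtain ⟨iD, hiD⟩ := hUD
  have hpK := p_cast_ne_zero (p := p)
  rcases lt_trichotomy e 0 with he | he | he
  · -- e < 0 : multiply by p^(-e), LHS dies mod p
    exfalso
    have hid2 : (C ((p:ℚ_[p])^(-e)) * Fh) * Gh = derivative Fh * Hh := by
      have : C ((p:ℚ_[p])^(-e)) * (Fh * Gh)
          = C ((p:ℚ_[p])^(-e)) * (derivative Fh * (C ((p:ℚ_[p])^e) * Hh)) := by rw [hid]
      calc (C ((p:ℚ_[p])^(-e)) * Fh) * Gh = C ((p:ℚ_[p])^(-e)) * (Fh * Gh) := by ring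
        _ = C ((p:ℚ_[p])^(-e)) * (derivative Fh * (C ((p:ℚ_[p])^e) * Hh)) := this
        _ = (C ((p:ℚ_[p])^(-e)) * C ((p:ℚ_[p])^e)) * (derivative Fh * Hh) := by ring
        _ = derivative Fh * Hh := by
            rw [← Polynomial.C_mul, ← zpow_add₀ hpK]
            simp
    set W : ℚ_[p][X] := C ((p:ℚ_[p])^(-e)) * Fh with hW
    have hIntW : ∀ i, ‖W.coeff i‖ ≤ 1 := by
      intro i
      rw [hW, Polynomial.coeff_C_mul, norm_mul, Padic.norm_p_zpow, neg_neg]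
      calc (p:ℝ)^e * ‖Fh.coeff i‖ ≤ (p:ℝ)^e * 1 := by
            apply mul_le_mul_of_nonneg_left (hIntF i) (le_of_lt (zpow_pos p_real_pos _))
        _ ≤ 1 := by
            rw [mul_one]
            exact zpow_le_one_of_nonpos₀ (le_of_lt one_lt_p_real) (le_of_lt he)
    have hallW : ∀ i, ‖W.coeff i‖ < 1 := by
      intro i
      rw [hW, Polynomial.coeff_C_mul, norm_mul, Padic.norm_p_zpow, neg_neg]
      calc (p:ℝ)^e * ‖Fh.coeff i‖ ≤ (p:ℝ)^e * 1 := by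
            apply mul_le_mul_of_nonneg_left (hIntF i) (le_of_lt (zpow_pos p_real_pos _))
        _ < 1 := by
            rw [mul_one]
            exact zpow_lt_one_of_neg₀ one_lt_p_real he
    have hmulWG := mul_int W Gh hIntW hIntG
    have hmulDH := mul_int (derivative Fh) Hh hIntD hIntH
    have hred : redO (W * Gh) hmulWG = redO (derivative Fh * Hh) hmulDH := by
      apply redO_congr
      intro i
      rw [hid2, sub_self, norm_zero]
      exact one_pos
    rw [redO_mul _ _ _ hIntW hIntG hmulWG rfl, redO_mul _ _ _ hIntD hIntH hmulDH rfl] at hred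
    rw [redO_eq_zero W hIntW hallW, zero_mul] at hred
    have h1 : redO (derivative Fh) hIntD ≠ 0 := redO_ne_zero _ _ iD hiD
    have h2 : redO Hh hIntH ≠ 0 := redO_ne_zero _ _ iH hiH
    exact (mul_ne_zero h1 h2) hred.symm
  · -- e = 0
    subst he
    have hid2 : Fh * Gh = derivative Fh * Hh := by
      rw [hid]
      simp
    have hmulFG := mul_int Fh Gh hIntF hIntG
    have hmulDH := mul_int (derivative Fh) Hh hIntD hIntH
    have hred : redO (Fh * Gh) hmulFG = redO (derivative Fh * Hh) hmulDH := by
      apply redO_congr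
      intro i
      rw [hid2, sub_self, norm_zero]
      exact one_pos
    rw [redO_mul _ _ _ hIntF hIntG hmulFG rfl, redO_mul _ _ _ hIntD hIntH hmulDH rfl] at hred
    rw [hred, redO_derivative Fh hIntF hIntD]
  · -- e > 0 : RHS dies mod p
    exfalso
    set W : ℚ_[p][X] := C ((p:ℚ_[p])^e) * Hh with hW
    have hIntW : ∀ i, ‖W.coeff i‖ ≤ 1 := by
      intro i
      rw [hW, Polynomial.coeff_C_mul, norm_mul, Padic.norm_p_zpow]
      calc (p:ℝ)^(-e) * ‖Hh.coeff i‖ ≤ (p:ℝ)^(-e) * 1 := by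
            apply mul_le_mul_of_nonneg_left (hIntH i) (le_of_lt (zpow_pos p_real_pos _))
        _ ≤ 1 := by
            rw [mul_one]
            exact zpow_le_one_of_nonpos₀ (le_of_lt one_lt_p_real) (by omega)
    have hallW : ∀ i, ‖W.coeff i‖ < 1 := by
      intro i
      rw [hW, Polynomial.coeff_C_mul, norm_mul, Padic.norm_p_zpow]
      calc (p:ℝ)^(-e) * ‖Hh.coeff i‖ ≤ (p:ℝ)^(-e) * 1 := by
            apply mul_le_mul_of_nonneg_left (hIntH i) (le_of_lt (zpow_pos p_real_pos _))
        _ < 1 := by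
            rw [mul_one]
            exact zpow_lt_one_of_neg₀ one_lt_p_real (by omega)
    have hmulFG := mul_int Fh Gh hIntF hIntG
    have hmulDW := mul_int (derivative Fh) W hIntD hIntW
    have hred : redO (Fh * Gh) hmulFG = redO (derivative Fh * W) hmulDW := by
      apply redO_congr
      intro i
      rw [hW, hid, sub_self, norm_zero]
      exact one_pos
    rw [redO_mul _ _ _ hIntF hIntG hmulFG rfl, redO_mul _ _ _ hIntD hIntW hmulDW rfl] at hred
    rw [redO_eq_zero W hIntW hallW, mul_zero] at hred
    have h1 : redO Fh hIntF ≠ 0 := redO_ne_zero _ _ iF hiF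
    have h2 : redO Gh hIntG ≠ 0 := redO_ne_zero _ _ iG hiG
    exact (mul_ne_zero h1 h2) hred
end BelyiAux

namespace BelyiAux
variable {p : ℕ} [hp : Fact p.Prime]

lemma middle (F : ℚ_[p][X]) (h1n : 1 ≤ F.natDegree) (hnp : F.natDegree < p)
    (hdvd : derivative F ∣ F * F - F) (hc0 : F.coeff 0 = 0)
    (hev1 : F.eval 1 = 0 ∨ F.eval 1 = 1)
    (i₀ : ℕ) (hne : F.coeff i₀ ≠ 0) (hmax : ∀ i, ‖F.coeff i‖ ≤ ‖F.coeff i₀‖)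
    (hs1 : ‖F.coeff i₀‖ ≠ 1) : False := by
  have hpK := p_cast_ne_zero (p := p)
  have hp1 := one_lt_p_real (p := p)
  have hp0 := p_real_pos (p := p)
  set n := F.natDegree with hn
  have hF0 : F ≠ 0 := fun h => hne (by simp [h])
  have hi₀1 : 1 ≤ i₀ := by
    rcases Nat.eq_zero_or_pos i₀ with h | h
    · exact absurd (h ▸ hc0) hne
    · exact h
  have hi₀n : i₀ ≤ n := le_natDegree_of_ne_zero hne
  -- normalization of F
  obtain ⟨s, hsval, hIntF, hUnitF⟩ := exists_normalization F i₀ hne hmax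
  set π : ℚ_[p] := (p:ℚ_[p])^(-s) with hπdef
  have hπ0 : π ≠ 0 := zpow_ne_zero _ hpK
  set Fh : ℚ_[p][X] := C π * F with hFh
  have hFhc : ∀ i, Fh.coeff i = π * F.coeff i := fun i => by rw [hFh, Polynomial.coeff_C_mul]
  have hnormπ : ‖π‖ = (p:ℝ)^s := by rw [hπdef, Padic.norm_p_zpow, neg_neg]
  -- derivative of Fh
  have hDFh : derivative Fh = C π * derivative F := by rw [hFh, derivative_C_mul]
  have hIntD : ∀ i, ‖(derivative Fh).coeff i‖ ≤ 1 := by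
    intro i
    rw [Polynomial.coeff_derivative]
    have hcast : ((i:ℚ_[p]) + 1) = ((i+1 : ℕ) : ℚ_[p]) := by push_cast; ring
    rw [hcast, norm_mul]
    calc ‖Fh.coeff (i+1)‖ * ‖((i+1:ℕ) : ℚ_[p])‖ ≤ 1 * 1 :=
      mul_le_mul (hIntF (i+1)) (norm_natCast_le_one _) (norm_nonneg _) zero_le_one
    _ = 1 := by ring
  have hUnitD : ‖(derivative Fh).coeff (i₀ - 1)‖ = 1 := by
    rw [Polynomial.coeff_derivative]
    have h1 : i₀ - 1 + 1 = i₀ := by omega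
    have hcast : (((i₀ - 1 : ℕ) :ℚ_[p]) + 1) = ((i₀ : ℕ) : ℚ_[p]) := by
      rw [← Nat.cast_one (R := ℚ_[p]), ← Nat.cast_add, h1]
    rw [h1, hcast, norm_mul, hUnitF, norm_natCast_eq_one (by omega) (by omega), mul_one]
  -- the quotient polynomial
  obtain ⟨h, hh⟩ := hdvd
  have hDF0 : derivative F ≠ 0 := by
    intro hz
    have hU := hUnitD
    rw [hDFh, hz, mul_zero] at hU
    simp at hU
  have hF10 : F - 1 ≠ 0 := by
    intro hz
    have : F.coeff i₀ - (1:ℚ_[p][X]).coeff i₀ = 0 := by rw [← Polynomial.coeff_sub, hz]; simp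
    rw [Polynomial.coeff_one] at this
    have hne1 : i₀ ≠ 0 := by omega
    simp [hne1] at this
    exact hne this
  have hFF0 : F * F - F ≠ 0 := by
    have hfact : F * F - F = F * (F - 1) := by ring
    rw [hfact]
    exact mul_ne_zero hF0 hF10
  have hh0 : h ≠ 0 := by
    intro hz
    rw [hz, mul_zero] at hh
    exact hFF0 hh
  -- normalization of h
  obtain ⟨ih, hihmem, hihmax'⟩ := Finset.exists_max_image h.support (fun i => ‖h.coeff i‖)
    (Polynomial.nonempty_support_iff.2 hh0)
  have hihne : h.coeff ih ≠ 0 := Polynomial.mem_support_iff.1 hihmem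
  have hihmax : ∀ i, ‖h.coeff i‖ ≤ ‖h.coeff ih‖ := by
    intro i
    by_cases hmem : i ∈ h.support
    · exact hihmax' i hmem
    · rw [Polynomial.notMem_support_iff.1 hmem, norm_zero]
      exact norm_nonneg _
  obtain ⟨u, huval, hIntH, hUnitH⟩ := exists_normalization h ih hihne hihmax
  set ρ : ℚ_[p] := (p:ℚ_[p])^(-u) with hρdef
  set Hh : ℚ_[p][X] := C ρ * h with hHh
  have hρ0 : ρ ≠ 0 := zpow_ne_zero _ hpK
  -- degree bound for the reduction
  have hdegFh : Fh.natDegree = n := by rw [hFh, natDegree_C_mul hπ0]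
  -- case split on the sign of s (i.e. norm of the max coefficient)
  rcases lt_or_gt_of_ne hs1 with hlt | hgt
  · -- ‖F.coeff i₀‖ < 1, so s > 0 : here F ≡ 0 mod p, G = F - 1
    have hspos : 0 < s := by
      by_contra hcon
      push_neg at hcon
      have : (1:ℝ) ≤ (p:ℝ)^(-s) := one_le_zpow₀ (le_of_lt hp1) (by omega)
      rw [← hsval] at this
      linarith
    have hFsmall : ∀ i, ‖F.coeff i‖ < 1 := by
      intro i
      calc ‖F.coeff i‖ ≤ ‖F.coeff i₀‖ := hmax i
      _ < 1 := hlt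
    -- G = F - 1 is integral with unit constant coefficient
    set Gh : ℚ_[p][X] := F - 1 with hGh
    have hGhc : ∀ i, Gh.coeff i = F.coeff i - (if i = 0 then 1 else 0) := by
      intro i
      rw [hGh, Polynomial.coeff_sub, Polynomial.coeff_one]
    have hIntG : ∀ i, ‖Gh.coeff i‖ ≤ 1 := by
      intro i
      rw [hGhc]
      by_cases hi : i = 0
      · subst hi
        simp [hc0]
      · simp only [hi, if_false, sub_zero]
        exact le_of_lt (hFsmall i)
    have hUnitG : ‖Gh.coeff 0‖ = 1 := by
      rw [hGhc]
      simp [hc0]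
    -- F(1) = 0 since F ≡ 0 mod p
    have hIntFw : ∀ i, ‖F.coeff i‖ ≤ 1 := fun i => le_of_lt (hFsmall i)
    have hF1 : F.eval 1 = 0 := by
      have hred0 : redO F hIntFw = 0 := redO_eq_zero F hIntFw hFsmall
      have hnorm1 : ‖F.eval 1‖ < 1 := by
        by_contra hcon
        push_neg at hcon
        have heval : (redO F hIntFw).eval 1 = 0 := by rw [hred0]; simp
        rw [redO, Polynomial.eval_one_map] at heval
        rw [toZMod_eq_zero_iff, PadicInt.norm_def] at heval
        have hcoe : (((liftO F hIntFw).eval 1 : ℤ_[p]) : ℚ_[p]) = F.eval 1 := by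
          have h2 := Polynomial.eval_one_map (PadicInt.Coe.ringHom) (liftO F hIntFw)
          rw [liftO_map] at h2
          exact h2.symm
        rw [hcoe] at heval
        linarith
      rcases hev1 with h0 | h1
      · exact h0
      · rw [h1] at hnorm1
        simp at hnorm1
    -- the identity : Fh * Gh = derivative Fh * (C (p^u) * Hh)
    have hid : Fh * Gh = derivative Fh * (C ((p:ℚ_[p])^u) * Hh) := by
      rw [hFh, hGh, hDFh, hHh]
      have hsub : C ((p:ℚ_[p])^u) * (C ρ * h) = h := by
        rw [← mul_assoc, ← Polynomial.C_mul, hρdef, ← zpow_add₀ hpK]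
        simp
      rw [hsub]
      calc C π * F * (F - 1) = C π * (F * F - F) := by ring
      _ = C π * (derivative F * h) := by rw [hh]
      _ = C π * derivative F * h := by ring
    have hredid := reduce_identity Fh Gh Hh hIntF hIntG hIntH ⟨i₀, hUnitF⟩ ⟨0, hUnitG⟩
      ⟨ih, hUnitH⟩ hIntD ⟨i₀ - 1, hUnitD⟩ u hid
    -- identify redO Gh with C (-1)
    have hC : ∀ i, ‖(C (-1 : ℚ_[p])).coeff i‖ ≤ 1 := by
      intro i
      rw [Polynomial.coeff_C]
      by_cases hi : i = 0 <;> simp [hi]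
    have hGisC : redO Gh hIntG = C (-1) := by
      have h2 : redO Gh hIntG = redO (C (-1)) hC := by
        apply redO_congr
        intro i
        rw [hGhc, Polynomial.coeff_C]
        by_cases hi : i = 0
        · subst hi
          simp [hc0]
        · simp only [hi, if_false, sub_zero]
          exact hFsmall i
      rw [h2]
      have hlift : liftO (C (-1:ℚ_[p])) hC = C (-1 : ℤ_[p]) := by
        apply Polynomial.map_injective PadicInt.Coe.ringHom Subtype.coe_injective
        rw [liftO_map, Polynomial.map_C]
        congr 1
      rw [redO, hlift, Polynomial.map_C]
      congr 1
      simp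
    rw [hGisC] at hredid
    -- apply the core counting lemma with j = 1, c = -1
    set P := redO Fh hIntF with hP
    have hPid : C (-1 : ZMod p) * P ^ 1 = derivative P * redO Hh hIntH := by
      rw [pow_one, mul_comm]
      exact hredid
    have hP0 : P ≠ 0 := redO_ne_zero _ _ i₀ hUnitF
    have hH0 : redO Hh hIntH ≠ 0 := redO_ne_zero _ _ ih hUnitH
    have hPe0 : P.eval 0 = 0 := by
      rw [hP]
      apply redO_eval_zero
      rw [← Polynomial.coeff_zero_eq_eval_zero, hFhc, hc0, mul_zero, norm_zero]
      exact one_pos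
    have hPe1 : P.eval 1 = 0 := by
      rw [hP]
      apply redO_eval_one
      rw [hFh]
      simp only [Polynomial.eval_mul, Polynomial.eval_C, hF1, mul_zero, norm_zero]
      exact one_pos
    have hPdeg : P.natDegree < p := lt_of_le_of_lt
      (le_trans (redO_natDegree_le Fh hIntF) (le_of_eq hdegFh)) hnp
    exact core_count 1 (Or.inl rfl) (-1) (neg_ne_zero.2 one_ne_zero) P (redO Hh hIntH)
      hP0 hH0 hPid hPe0 hPe1 hPdeg
  · -- ‖F.coeff i₀‖ > 1, so s < 0 : G = C π * (F - 1) reduces to the same as Fh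
    have hsneg : s < 0 := by
      by_contra hcon
      push_neg at hcon
      have : (p:ℝ)^(-s) ≤ 1 := zpow_le_one_of_nonpos₀ (le_of_lt hp1) (by omega)
      rw [← hsval] at this
      linarith
    set Gh : ℚ_[p][X] := C π * (F - 1) with hGh
    have hGhc : ∀ i, Gh.coeff i = π * (F.coeff i - (if i = 0 then 1 else 0)) := by
      intro i
      rw [hGh, Polynomial.coeff_C_mul, Polynomial.coeff_sub, Polynomial.coeff_one]
    have hπlt : ‖π‖ < 1 := by
      rw [hnormπ]
      exact zpow_lt_one_of_neg₀ hp1 hsneg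
    have hIntG : ∀ i, ‖Gh.coeff i‖ ≤ 1 := by
      intro i
      rw [hGhc]
      by_cases hi : i = 0
      · subst hi
        simp only [if_true, eq_self_iff_true, hc0, zero_sub, norm_mul, norm_neg, norm_one,
          mul_one]
        exact le_of_lt hπlt
      · simp only [hi, if_false, sub_zero]
        rw [← hFhc]
        exact hIntF i
    have hUnitG : ‖Gh.coeff i₀‖ = 1 := by
      have hne0 : i₀ ≠ 0 := by omega
      rw [hGhc]
      simp only [hne0, if_false, sub_zero]
      rw [← hFhc]
      exact hUnitF
    have hGdiff : ∀ i, ‖Gh.coeff i - Fh.coeff i‖ < 1 := by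
      intro i
      rw [hGhc, hFhc]
      by_cases hi : i = 0
      · subst hi
        simp only [if_true, eq_self_iff_true, hc0, zero_sub, mul_zero, sub_zero, norm_mul,
          norm_neg, norm_one, mul_one]
        simpa using hπlt
      · simp only [hi, if_false, sub_zero, sub_self, norm_zero]
        exact one_pos
    -- identity : Fh * Gh = derivative Fh * (C (p^(u - s)) * Hh)
    have hid : Fh * Gh = derivative Fh * (C ((p:ℚ_[p])^(u - s)) * Hh) := by
      rw [hFh, hGh, hDFh, hHh]
      have hsub : C ((p:ℚ_[p])^(u-s)) * (C ρ * h) = C π * h := by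
        have hexp : u - s + -u = -s := by ring
        rw [← mul_assoc, ← Polynomial.C_mul, hρdef, hπdef, ← zpow_add₀ hpK, hexp]
      rw [hsub]
      calc C π * F * (C π * (F - 1)) = C π * C π * (F * F - F) := by ring
      _ = C π * C π * (derivative F * h) := by rw [hh]
      _ = C π * derivative F * (C π * h) := by ring
    have hredid := reduce_identity Fh Gh Hh hIntF hIntG hIntH ⟨i₀, hUnitF⟩ ⟨i₀, hUnitG⟩
      ⟨ih, hUnitH⟩ hIntD ⟨i₀ - 1, hUnitD⟩ (u - s) hid
    have hGisF : redO Gh hIntG = redO Fh hIntF := redO_congr hIntG hIntF hGdiff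
    rw [hGisF] at hredid
    set P := redO Fh hIntF with hP
    have hPid : C (1 : ZMod p) * P ^ 2 = derivative P * redO Hh hIntH := by
      rw [map_one, one_mul, pow_two]
      exact hredid
    have hP0 : P ≠ 0 := redO_ne_zero _ _ i₀ hUnitF
    have hH0 : redO Hh hIntH ≠ 0 := redO_ne_zero _ _ ih hUnitH
    have hPe0 : P.eval 0 = 0 := by
      rw [hP]
      apply redO_eval_zero
      rw [← Polynomial.coeff_zero_eq_eval_zero, hFhc, hc0, mul_zero, norm_zero]
      exact one_pos
    have hPe1 : P.eval 1 = 0 := by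
      rw [hP]
      apply redO_eval_one
      rw [hFh]
      simp only [Polynomial.eval_mul, Polynomial.eval_C]
      rw [norm_mul]
      have hev : ‖F.eval 1‖ ≤ 1 := by
        rcases hev1 with h0 | h1
        · rw [h0, norm_zero]; exact zero_le_one
        · rw [h1, norm_one]
      calc ‖π‖ * ‖F.eval 1‖ ≤ ‖π‖ * 1 := by
            apply mul_le_mul_of_nonneg_left hev (norm_nonneg _)
      _ < 1 := by rw [mul_one]; exact hπlt
    have hPdeg : P.natDegree < p := lt_of_le_of_lt
      (le_trans (redO_natDegree_le Fh hIntF) (le_of_eq hdegFh)) hnp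
    exact core_count 2 (Or.inr rfl) 1 one_ne_zero P (redO Hh hIntH)
      hP0 hH0 hPid hPe0 hPe1 hPdeg
end BelyiAux

namespace BelyiAux
variable {p : ℕ} [hp : Fact p.Prime]

lemma coeff_comp_C_mul_X (F : ℚ_[p][X]) (a : ℚ_[p]) (i : ℕ) :
    (F.comp (C a * X)).coeff i = F.coeff i * a ^ i := by
  rw [comp_eq_sum_left, Polynomial.sum_def, Polynomial.finset_sum_coeff]
  have hterm : ∀ j ∈ F.support, (C (F.coeff j) * (C a * X) ^ j).coeff i
      = if j = i then F.coeff j * a ^ j else 0 := by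
    intro j _
    rw [mul_pow, ← C_pow, ← mul_assoc, ← C_mul, coeff_C_mul_X_pow]
    simp only [eq_comm]
  rw [Finset.sum_congr rfl hterm, Finset.sum_ite_eq' F.support i
    (fun j => F.coeff j * a ^ j)]
  by_cases hi : i ∈ F.support
  · simp [hi]
  · simp only [hi, if_false]
    rw [Polynomial.notMem_support_iff.1 hi, zero_mul]

lemma comp_dvd (F : ℚ_[p][X]) (Q : ℚ_[p]) (hQ0 : Q ≠ 0)
    (hdvd : derivative F ∣ F * F - F) :
    derivative (F.comp (C Q * X)) ∣
      (F.comp (C Q * X)) * (F.comp (C Q * X)) - F.comp (C Q * X) := by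
  obtain ⟨h, hh⟩ := hdvd
  refine ⟨C Q⁻¹ * h.comp (C Q * X), ?_⟩
  have hder : derivative (F.comp (C Q * X)) = C Q * (derivative F).comp (C Q * X) := by
    rw [derivative_comp]
    have : derivative (C Q * X) = C Q := by
      rw [derivative_C_mul, derivative_X, mul_one]
    rw [this]
  have hcompid : (F * F - F).comp (C Q * X)
      = (F.comp (C Q * X)) * (F.comp (C Q * X)) - F.comp (C Q * X) := by
    rw [Polynomial.sub_comp, Polynomial.mul_comp]
  calc (F.comp (C Q * X)) * (F.comp (C Q * X)) - F.comp (C Q * X)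
      = (F * F - F).comp (C Q * X) := hcompid.symm
    _ = (derivative F * h).comp (C Q * X) := by rw [hh]
    _ = (derivative F).comp (C Q * X) * h.comp (C Q * X) := by rw [Polynomial.mul_comp]
    _ = derivative (F.comp (C Q * X)) * (C Q⁻¹ * h.comp (C Q * X)) := by
        rw [hder]
        have : C Q * (derivative F).comp (C Q * X) * (C Q⁻¹ * h.comp (C Q * X))
            = (C Q * C Q⁻¹) * ((derivative F).comp (C Q * X) * h.comp (C Q * X)) := by ring
        rw [this, ← C_mul, mul_inv_cancel₀ hQ0]
        simp

lemma top_core (F : ℚ_[p][X]) (h1n : 1 ≤ F.natDegree) (hnp : F.natDegree < p)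
    (hdvd : derivative F ∣ F * F - F) (hc0 : F.coeff 0 = 0)
    (h1 : F.eval 1 = 0 ∨ F.eval 1 = 1)
    (Q : ℚ_[p]) (hQ : 1 < ‖Q‖) (hFQ : F.eval Q = 0 ∨ F.eval Q = 1) : False := by
  have hF0 : F ≠ 0 := fun h => by simp [h] at h1n
  have hQ0 : Q ≠ 0 := by
    intro h
    rw [h, norm_zero] at hQ
    linarith
  obtain ⟨i₀, hi₀mem, hi₀max'⟩ := Finset.exists_max_image F.support (fun i => ‖F.coeff i‖)
    (Polynomial.nonempty_support_iff.2 hF0)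
  have hi₀ne : F.coeff i₀ ≠ 0 := Polynomial.mem_support_iff.1 hi₀mem
  have hi₀max : ∀ i, ‖F.coeff i‖ ≤ ‖F.coeff i₀‖ := by
    intro i
    by_cases hmem : i ∈ F.support
    · exact hi₀max' i hmem
    · rw [Polynomial.notMem_support_iff.1 hmem, norm_zero]
      exact norm_nonneg _
  by_cases hone : ‖F.coeff i₀‖ = 1
  swap
  · exact middle F h1n hnp hdvd hc0 h1 i₀ hi₀ne hi₀max hone
  · -- all coefficients integral; use the composition with C Q * X
    have hi₀pos : i₀ ≠ 0 := by
      intro h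
      rw [h] at hi₀ne
      exact hi₀ne hc0
    set G : ℚ_[p][X] := F.comp (C Q * X) with hG
    have hGdeg : G.natDegree = F.natDegree := by
      rw [hG, natDegree_comp, natDegree_C_mul_X Q hQ0, mul_one]
    have hGdvd : derivative G ∣ G * G - G := comp_dvd F Q hQ0 hdvd
    have hGc : ∀ i, G.coeff i = F.coeff i * Q ^ i := fun i => by
      rw [hG, coeff_comp_C_mul_X]
    have hGc0 : G.coeff 0 = 0 := by rw [hGc, hc0, zero_mul]
    have hGev1 : G.eval 1 = 0 ∨ G.eval 1 = 1 := by
      have : G.eval 1 = F.eval Q := by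
        rw [hG, Polynomial.eval_comp]
        simp
      rw [this]
      exact hFQ
    -- the coefficient i₀ of G has norm > 1
    have hGi₀ : 1 < ‖G.coeff i₀‖ := by
      rw [hGc, norm_mul, hone, one_mul, norm_pow]
      exact one_lt_pow₀ hQ hi₀pos
    have hG0 : G ≠ 0 := by
      intro h
      rw [h] at hGi₀
      simp at hGi₀
      linarith
    obtain ⟨i₁, hi₁mem, hi₁max'⟩ := Finset.exists_max_image G.support (fun i => ‖G.coeff i‖)
      (Polynomial.nonempty_support_iff.2 hG0)
    have hi₁ne : G.coeff i₁ ≠ 0 := Polynomial.mem_support_iff.1 hi₁mem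
    have hi₁max : ∀ i, ‖G.coeff i‖ ≤ ‖G.coeff i₁‖ := by
      intro i
      by_cases hmem : i ∈ G.support
      · exact hi₁max' i hmem
      · rw [Polynomial.notMem_support_iff.1 hmem, norm_zero]
        exact norm_nonneg _
    have hi₁ne1 : ‖G.coeff i₁‖ ≠ 1 := by
      have := lt_of_lt_of_le hGi₀ (hi₁max i₀)
      linarith
    exact middle G (hGdeg ▸ h1n) (hGdeg ▸ hnp) hGdvd hGc0 hGev1 i₁ hi₁ne hi₁max hi₁ne1

lemma top_aux (F : ℚ_[p][X]) (h1n : 1 ≤ F.natDegree) (hnp : F.natDegree < p)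
    (hdvd : derivative F ∣ F * F - F)
    (h0 : F.eval 0 = 0 ∨ F.eval 0 = 1) (h1 : F.eval 1 = 0 ∨ F.eval 1 = 1)
    (Q : ℚ_[p]) (hQ : 1 < ‖Q‖) (hFQ : F.eval Q = 0 ∨ F.eval Q = 1) : False := by
  rcases h0 with h00 | h01
  · exact top_core F h1n hnp hdvd (by rw [Polynomial.coeff_zero_eq_eval_zero]; exact h00)
      h1 Q hQ hFQ
  · -- replace F by 1 - F
    set F2 : ℚ_[p][X] := 1 - F with hF2
    have hF2deg : F2.natDegree = F.natDegree := by
      have : F2 = -(F - C 1) := by rw [hF2, Polynomial.C_1]; ring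
      rw [this, natDegree_neg, natDegree_sub_C]
    have hF2dvd : derivative F2 ∣ F2 * F2 - F2 := by
      have hd : derivative F2 = -derivative F := by
        rw [hF2, derivative_sub, derivative_one, zero_sub]
      have hval : F2 * F2 - F2 = F * F - F := by rw [hF2]; ring
      rw [hd, hval]
      exact (neg_dvd).2 hdvd
    have hev : ∀ x : ℚ_[p], F2.eval x = 1 - F.eval x := by
      intro x
      rw [hF2]
      simp
    have h0' : F2.eval 0 = 0 := by rw [hev, h01, sub_self]
    have h1' : F2.eval 1 = 0 ∨ F2.eval 1 = 1 := by
      rw [hev]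
      rcases h1 with h | h <;> rw [h] <;> simp
    have hFQ' : F2.eval Q = 0 ∨ F2.eval Q = 1 := by
      rw [hev]
      rcases hFQ with h | h <;> rw [h] <;> simp
    exact top_core F2 (hF2deg ▸ h1n) (hF2deg ▸ hnp) hF2dvd
      (by rw [Polynomial.coeff_zero_eq_eval_zero]; exact h0') h1' Q hQ hFQ'

end BelyiAux

open BelyiAux in
/-- If `B ∈ ℚ[X]` is a nonconstant Belyi polynomial and `q` is a nonzero rational with
nonzero `p`-adic valuation, and `B q ∈ {0,1}`, then `deg B ≥ p`. -/
theorem belyi_height_ge_prime_rat (p : ℕ) (hp : p.Prime)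
    (B : ℚ[X]) (hB : IsBelyi B) (hBdeg : 0 < B.natDegree)
    (q : ℚ) (hq : q ≠ 0) (hval : padicValRat p q ≠ 0)
    (hBq : B.eval q ∈ ({0, 1} : Set ℚ)) :
    p ≤ B.natDegree := by
  by_contra hcon
  push_neg at hcon
  haveI : Fact p.Prime := ⟨hp⟩
  set φ : ℚ →+* ℚ_[p] := Rat.castHom ℚ_[p] with hφ
  have hφinj : Function.Injective φ := φ.injective
  set F : ℚ_[p][X] := B.map φ with hF
  have hdeg : F.natDegree = B.natDegree := natDegree_map_eq_of_injective hφinj B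
  obtain ⟨hB0, hB1, hBdvd⟩ := hB
  simp only [Set.mem_insert_iff, Set.mem_singleton_iff] at hB0 hB1 hBq
  have hF0 : F.eval 0 = 0 ∨ F.eval 0 = 1 := by
    rw [hF, Polynomial.eval_zero_map]
    rcases hB0 with h | h <;> rw [h] <;> simp
  have hF1 : F.eval 1 = 0 ∨ F.eval 1 = 1 := by
    rw [hF, Polynomial.eval_one_map]
    rcases hB1 with h | h <;> rw [h] <;> simp
  have hFq : F.eval (φ q) = 0 ∨ F.eval (φ q) = 1 := by
    have heq : F.eval (φ q) = φ (B.eval q) := by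
      rw [hF, Polynomial.eval_map, Polynomial.eval₂_at_apply]
    rw [heq]
    rcases hBq with h | h <;> rw [h] <;> simp
  have hdvdF : derivative F ∣ F * F - F := by
    obtain ⟨w, hw⟩ := hBdvd
    refine ⟨w.map φ, ?_⟩
    have hs : F * F - F = (B * (B - 1)).map φ := by
      have hq2 : B * (B - 1) = B * B - B := by ring
      rw [hq2, Polynomial.map_sub, Polynomial.map_mul, hF]
    rw [hs, hw, Polynomial.map_mul, hF, derivative_map]
  have hq0 : φ q ≠ 0 := by
    intro h
    exact hq (hφinj (by simpa using h))
  have hqcast : φ q = ((q : ℚ) : ℚ_[p]) := rfl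
  have hnormq : ‖φ q‖ = ((padicNorm p q : ℚ) : ℝ) := by
    rw [hqcast, Padic.eq_padicNorm]
  have hpn : padicNorm p q = (p:ℚ)^(-(padicValRat p q)) := padicNorm.eq_zpow_of_nonzero hq
  have hp1Q : (1:ℚ) < (p:ℚ) := by exact_mod_cast hp.one_lt
  have h1F : 1 ≤ F.natDegree := by omega
  have hnpF : F.natDegree < p := by omega
  rcases lt_trichotomy (padicValRat p q) 0 with hv | hv | hv
  · -- |q| > 1
    have hgt : 1 < ‖φ q‖ := by
      rw [hnormq, hpn]
      have : (1:ℚ) < (p:ℚ)^(-(padicValRat p q)) := one_lt_zpow₀ hp1Q (by omega)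
      exact_mod_cast this
    exact top_aux F h1F hnpF hdvdF hF0 hF1 (φ q) hgt hFq
  · exact hval hv
  · -- |q| < 1 : conjugate by x ↦ q x
    have hlt : ‖φ q‖ < 1 := by
      rw [hnormq, hpn]
      have : (p:ℚ)^(-(padicValRat p q)) < 1 := zpow_lt_one_of_neg₀ hp1Q (by omega)
      exact_mod_cast this
    set G : ℚ_[p][X] := F.comp (C (φ q) * X) with hG
    have hGdeg : G.natDegree = F.natDegree := by
      rw [hG, natDegree_comp, natDegree_C_mul_X _ hq0, mul_one]
    have hGdvd : derivative G ∣ G * G - G := comp_dvd F (φ q) hq0 hdvdF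
    have hG0 : G.eval 0 = 0 ∨ G.eval 0 = 1 := by
      have : G.eval 0 = F.eval 0 := by
        rw [hG, Polynomial.eval_comp]
        simp
      rw [this]; exact hF0
    have hG1 : G.eval 1 = 0 ∨ G.eval 1 = 1 := by
      have : G.eval 1 = F.eval (φ q) := by
        rw [hG, Polynomial.eval_comp]
        simp
      rw [this]; exact hFq
    have hGQ : G.eval ((φ q)⁻¹) = 0 ∨ G.eval ((φ q)⁻¹) = 1 := by
      have : G.eval ((φ q)⁻¹) = F.eval 1 := by
        rw [hG, Polynomial.eval_comp]
        simp only [Polynomial.eval_mul, Polynomial.eval_C, Polynomial.eval_X]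
        congr 1
        exact mul_inv_cancel₀ hq0
      rw [this]; exact hF1
    have hgt : 1 < ‖(φ q)⁻¹‖ := by
      rw [norm_inv]
      have hpos : 0 < ‖φ q‖ := norm_pos_iff.2 hq0
      exact (one_lt_inv₀ hpos).2 hlt
    exact top_aux G (hGdeg ▸ h1F) (hGdeg ▸ hnpF) hGdvd hG0 hG1 ((φ q)⁻¹) hgt hGQ
end

section
/- If B ∈ K[X] is a Belyi polynomial with 1 ≤ deg B < p and B(0) = 0, then New(B) ⊆ New(B−1), i.e. the Newton polygon of B is contained in the Newton polygon of B−1. -/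
open Polynomial

/-- The set of points `(i, -log v aᵢ)` attached to the nonzero coefficients `aᵢ` of `f`. -/
def coeffPoints {K : Type*} [Field K] (v : Valuation K NNReal) (f : K[X]) : Set (ℝ × ℝ) :=
  {z | ∃ i : ℕ, f.coeff i ≠ 0 ∧ z = ((i : ℝ), -Real.log (v (f.coeff i) : ℝ))}

/-- The Newton polygon of `f` with respect to `v`: the lower boundary of the convex hull
of `coeffPoints v f`. -/
def newtonPolygon {K : Type*} [Field K] (v : Valuation K NNReal) (f : K[X]) : Set (ℝ × ℝ) :=
  {z ∈ convexHull ℝ (coeffPoints v f) |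
    ∀ w ∈ convexHull ℝ (coeffPoints v f), w.1 = z.1 → z.2 ≤ w.2}

namespace NPBelyi

open scoped Classical

variable {K : Type*} [Field K] (v : Valuation K NNReal)

noncomputable def gaussN (r : NNReal) (f : K[X]) : NNReal :=
  (Finset.range (f.natDegree + 1)).sup fun i => v (f.coeff i) * r ^ i

lemma coeff_le_gaussN (r : NNReal) (f : K[X]) (i : ℕ) :
    v (f.coeff i) * r ^ i ≤ gaussN v r f := by
  rcases le_or_gt i f.natDegree with h | h
  · exact Finset.le_sup (f := fun i => v (f.coeff i) * r ^ i)
      (Finset.mem_range.mpr (Nat.lt_succ_of_le h))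
  · rw [f.coeff_eq_zero_of_natDegree_lt h]
    simp

lemma gaussN_eq_sup {N : ℕ} {f : K[X]} (hN : f.natDegree < N) (r : NNReal) :
    gaussN v r f = (Finset.range N).sup fun i => v (f.coeff i) * r ^ i := by
  apply le_antisymm
  · apply Finset.sup_le
    intro i hi
    exact Finset.le_sup (f := fun i => v (f.coeff i) * r ^ i)
      (Finset.mem_range.mpr ((Finset.mem_range.mp hi).trans_le (Nat.succ_le_of_lt hN)))
  · apply Finset.sup_le
    intro i _
    exact coeff_le_gaussN v r f i

lemma gaussN_C_mul (r : NNReal) (c : K) (f : K[X]) :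
    gaussN v r (C c * f) = v c * gaussN v r f := by
  rcases eq_or_ne c 0 with rfl | hc
  · simp [gaussN]
  · have hdeg : (C c * f).natDegree = f.natDegree := by
      rcases eq_or_ne f 0 with rfl | hf
      · simp
      · rw [natDegree_mul (by simpa using hc) hf, natDegree_C, zero_add]
    rw [gaussN, hdeg, gaussN, NNReal.mul_finset_sup]
    apply Finset.sup_congr rfl
    intro i _
    rw [coeff_C_mul, map_mul, mul_assoc]

lemma gaussN_pos {f : K[X]} (hf : f ≠ 0) {r : NNReal} (hr : 0 < r) :
    0 < gaussN v r f := by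
  have h := coeff_le_gaussN v r f f.natDegree
  refine lt_of_lt_of_le ?_ h
  have hv : v (f.coeff f.natDegree) ≠ 0 := by
    rw [ne_eq, Valuation.zero_iff]
    exact mt leadingCoeff_eq_zero.mp hf
  positivity


lemma v_sub_eq {x y : K} (h : v y < v x) : v (x - y) = v x := by
  apply le_antisymm
  · exact le_trans (v.map_sub x y) (max_le le_rfl h.le)
  · by_contra hlt
    push_neg at hlt
    have : v x ≤ max (v (x - y)) (v y) := by
      calc v x = v (x - y + y) := by rw [sub_add_cancel]
        _ ≤ max (v (x - y)) (v y) := v.map_add _ _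
    rcases max_cases (v (x - y)) (v y) with ⟨he, _⟩ | ⟨he, _⟩ <;> rw [he] at this
    · exact absurd this (not_le.mpr hlt)
    · exact absurd this (not_le.mpr h)

lemma gaussN_X_sub_C_mul {g : K[X]} (hg : g ≠ 0) {r : NNReal} (hr : 0 < r) (a : K) :
    gaussN v r ((X - C a) * g) = max r (v a) * gaussN v r g := by
  classical
  set G := gaussN v r g with hG
  have hGpos : 0 < G := gaussN_pos v hg hr
  have hcoeff : ∀ i : ℕ, ((X - C a) * g).coeff (i + 1) = g.coeff i - a * g.coeff (i + 1) := by
    intro i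
    rw [sub_mul, coeff_sub, coeff_X_mul, coeff_C_mul]
  have hcoeff0 : ((X - C a) * g).coeff 0 = -(a * g.coeff 0) := by
    rw [sub_mul, coeff_sub, mul_coeff_zero, coeff_X_zero, zero_mul, coeff_C_mul, zero_sub]
  have hle : ∀ i : ℕ, v (((X - C a) * g).coeff i) * r ^ i ≤ max r (v a) * G := by
    rintro (_ | i)
    · rw [hcoeff0, pow_zero, mul_one, Valuation.map_neg, map_mul]
      calc v a * v (g.coeff 0) ≤ v a * G := by
            gcongr
            simpa using coeff_le_gaussN v r g 0
        _ ≤ _ := by gcongr; exact le_max_right _ _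
    · rw [hcoeff]
      calc v (g.coeff i - a * g.coeff (i + 1)) * r ^ (i + 1)
          ≤ max (v (g.coeff i)) (v (a * g.coeff (i + 1))) * r ^ (i + 1) := by
            gcongr
            exact v.map_sub _ _
        _ ≤ max r (v a) * G := by
            rw [max_mul]
            apply max_le
            · calc v (g.coeff i) * r ^ (i + 1) = r * (v (g.coeff i) * r ^ i) := by ring
                _ ≤ r * G := by gcongr; exact coeff_le_gaussN v r g i
                _ ≤ max r (v a) * G := by gcongr; exact le_max_left _ _
            · calc v (a * g.coeff (i + 1)) * r ^ (i + 1)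
                  = v a * (v (g.coeff (i + 1)) * r ^ (i + 1)) := by rw [map_mul]; ring
                _ ≤ v a * G := by gcongr; exact coeff_le_gaussN v r g (i + 1)
                _ ≤ max r (v a) * G := by gcongr; exact le_max_right _ _
  have hgdeg : ((X - C a) * g).natDegree = g.natDegree + 1 := by
    rw [natDegree_mul (X_sub_C_ne_zero a) hg, natDegree_X_sub_C, add_comm]
  apply le_antisymm
  · rw [gaussN]
    exact Finset.sup_le fun i _ => hle i
  · -- lower bound: find a coefficient attaining it
    set T := (Finset.range (g.natDegree + 1)).filter (fun i => v (g.coeff i) * r ^ i = G) with hT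
    obtain ⟨k₀, hk₀, hk₀eq⟩ := Finset.exists_mem_eq_sup (Finset.range (g.natDegree + 1))
      ⟨0, Finset.mem_range.mpr (Nat.succ_pos _)⟩ (fun i => v (g.coeff i) * r ^ i)
    have hTne : T.Nonempty := ⟨k₀, Finset.mem_filter.mpr ⟨hk₀, by rw [hG, gaussN]; exact hk₀eq.symm⟩⟩
    rcases le_or_gt (v a) r with hva | hva
    · -- max r (v a) = r ; use the largest attaining index k
      obtain ⟨k, hkmem, hkmax⟩ : ∃ k, k ∈ T ∧ ∀ i ∈ T, i ≤ k :=
        ⟨T.max' hTne, T.max'_mem hTne, fun i hi => T.le_max' i hi⟩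
      have hkeq : v (g.coeff k) * r ^ k = G := (Finset.mem_filter.mp hkmem).2
      have hstrict : v (g.coeff (k + 1)) * r ^ (k + 1) < G := by
        rcases le_or_gt (k + 1) g.natDegree with h1 | h1
        · have hne : v (g.coeff (k + 1)) * r ^ (k + 1) ≠ G := by
            intro he
            have : k + 1 ∈ T := Finset.mem_filter.mpr
              ⟨Finset.mem_range.mpr (Nat.lt_succ_of_le h1), he⟩
            exact absurd (hkmax _ this) (by omega)
          exact lt_of_le_of_ne (coeff_le_gaussN v r g (k + 1)) hne
        · rw [g.coeff_eq_zero_of_natDegree_lt h1]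
          simpa using hGpos
      have hsm : v (a * g.coeff (k + 1)) < v (g.coeff k) := by
        have h1 : v (g.coeff (k + 1)) * r * r ^ k < v (g.coeff k) * r ^ k := by
          calc v (g.coeff (k + 1)) * r * r ^ k = v (g.coeff (k + 1)) * r ^ (k + 1) := by ring
            _ < G := hstrict
            _ = v (g.coeff k) * r ^ k := hkeq.symm
        have h2 : v (g.coeff (k + 1)) * r < v (g.coeff k) :=
          lt_of_mul_lt_mul_right h1 zero_le
        calc v (a * g.coeff (k + 1)) = v a * v (g.coeff (k + 1)) := map_mul v _ _
          _ ≤ r * v (g.coeff (k + 1)) := by gcongr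
          _ = v (g.coeff (k + 1)) * r := mul_comm _ _
          _ < v (g.coeff k) := h2
      have hval : v (((X - C a) * g).coeff (k + 1)) = v (g.coeff k) := by
        rw [hcoeff]
        exact v_sub_eq v hsm
      have : v (((X - C a) * g).coeff (k + 1)) * r ^ (k + 1) = r * G := by
        rw [hval, ← hkeq]; ring
      calc max r (v a) * G = r * G := by rw [max_eq_left hva]
        _ = v (((X - C a) * g).coeff (k + 1)) * r ^ (k + 1) := this.symm
        _ ≤ _ := coeff_le_gaussN v _ _ _
    · -- r < v a ; use the smallest attaining index k
      obtain ⟨k, hkmem, hkmin⟩ : ∃ k, k ∈ T ∧ ∀ i ∈ T, k ≤ i :=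
        ⟨T.min' hTne, T.min'_mem hTne, fun i hi => T.min'_le i hi⟩
      have hkeq : v (g.coeff k) * r ^ k = G := (Finset.mem_filter.mp hkmem).2
      have hvmain : v (((X - C a) * g).coeff k) * r ^ k = v a * G := by
        rcases Nat.eq_zero_or_pos k with hk0 | hkpos
        · subst hk0
          rw [hcoeff0, Valuation.map_neg, map_mul, pow_zero, mul_one]
          rw [pow_zero, mul_one] at hkeq
          rw [hkeq]
        · obtain ⟨j, rfl⟩ : ∃ j, k = j + 1 := ⟨k - 1, by omega⟩
          have hstrict : v (g.coeff j) * r ^ j < G := by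
            have hjmem : j ∈ Finset.range (g.natDegree + 1) := by
              have : j + 1 ∈ Finset.range (g.natDegree + 1) := (Finset.mem_filter.mp hkmem).1
              rw [Finset.mem_range] at *
              omega
            have hne : v (g.coeff j) * r ^ j ≠ G := by
              intro he
              have : j + 1 ≤ j := hkmin _ (Finset.mem_filter.mpr ⟨hjmem, he⟩)
              omega
            exact lt_of_le_of_ne (coeff_le_gaussN v r g j) hne
          have hsm : v (g.coeff j) < v (a * g.coeff (j + 1)) := by
            have h1 : v (g.coeff j) * r ^ j < (v (g.coeff (j + 1)) * r) * r ^ j := by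
              calc v (g.coeff j) * r ^ j < G := hstrict
                _ = v (g.coeff (j + 1)) * r ^ (j + 1) := hkeq.symm
                _ = (v (g.coeff (j + 1)) * r) * r ^ j := by ring
            have h2 : v (g.coeff j) < v (g.coeff (j + 1)) * r :=
              lt_of_mul_lt_mul_right h1 zero_le
            have h3 : v (g.coeff (j + 1)) * r < v (g.coeff (j + 1)) * v a := by
              have hgk : 0 < v (g.coeff (j + 1)) := by
                by_contra hc
                push_neg at hc
                have : v (g.coeff (j + 1)) = 0 := le_antisymm hc zero_le
                rw [this, zero_mul] at hkeq
                exact absurd hkeq.symm (ne_of_gt hGpos)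
              exact mul_lt_mul_of_pos_left hva hgk
            calc v (g.coeff j) < v (g.coeff (j + 1)) * r := h2
              _ < v (g.coeff (j + 1)) * v a := h3
              _ = v (a * g.coeff (j + 1)) := by rw [map_mul, mul_comm]
          have hval : v (((X - C a) * g).coeff (j + 1)) = v (a * g.coeff (j + 1)) := by
            rw [hcoeff]
            rw [show g.coeff j - a * g.coeff (j + 1) = -(a * g.coeff (j + 1) - g.coeff j) by ring,
              Valuation.map_neg]
            exact v_sub_eq v hsm
          rw [hval, map_mul, ← hkeq]
          ring
      calc max r (v a) * G = v a * G := by rw [max_eq_right hva.le]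
        _ = v (((X - C a) * g).coeff k) * r ^ k := hvmain.symm
        _ ≤ _ := coeff_le_gaussN v _ _ _


lemma gaussN_C_mul_prod {c : K} (hc : c ≠ 0) (s : Multiset K) {r : NNReal} (hr : 0 < r) :
    gaussN v r (C c * (s.map fun a => X - C a).prod)
      = v c * (s.map fun a => max r (v a)).prod := by
  induction s using Multiset.induction with
  | empty => simp [gaussN, Finset.range_one]
  | cons a s ih =>
    have hprod : (s.map fun b => X - C b).prod ≠ 0 :=
      (monic_multiset_prod_of_monic _ _ fun b _ => monic_X_sub_C b).ne_zero
    rw [Multiset.map_cons, Multiset.prod_cons,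
      show C c * ((X - C a) * (s.map fun b => X - C b).prod)
        = (X - C a) * (C c * (s.map fun b => X - C b).prod) by ring,
      gaussN_X_sub_C_mul v (mul_ne_zero (fun h => hc (by simpa using h)) hprod) hr a, ih,
      Multiset.map_cons, Multiset.prod_cons]
    ring

lemma gaussN_eq_prod_roots [IsAlgClosed K] {f : K[X]} (hf : f ≠ 0) {r : NNReal} (hr : 0 < r) :
    gaussN v r f = v f.leadingCoeff * (f.roots.map fun γ => max r (v γ)).prod := by
  have hsplits : f.roots.card = f.natDegree :=
    (splits_iff_card_roots).mp (IsAlgClosed.splits f)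
  conv_lhs => rw [← C_leadingCoeff_mul_prod_multiset_X_sub_C hsplits]
  exact gaussN_C_mul_prod v (mt leadingCoeff_eq_zero.mp hf) f.roots hr

lemma v_eval_le_gaussN (f : K[X]) (x : K) : v (f.eval x) ≤ gaussN v (v x) f := by
  rw [eval_eq_sum_range]
  apply Valuation.map_sum_le
  intro i _
  rw [map_mul, map_pow]
  exact coeff_le_gaussN v (v x) f i

lemma v_natCast_le_one (k : ℕ) : v (k : K) ≤ 1 := by
  induction k with
  | zero => simp
  | succ n ih =>
    push_cast
    exact le_trans (v.map_add _ _) (max_le ih (le_of_eq v.map_one))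

lemma v_intCast_le_one (k : ℤ) : v (k : K) ≤ 1 := by
  obtain ⟨n, rfl | rfl⟩ := k.eq_nat_or_neg
  · exact_mod_cast v_natCast_le_one v n
  · push_cast
    rw [Valuation.map_neg]
    exact_mod_cast v_natCast_le_one v n

lemma v_natCast_eq_one {p : ℕ} (hp : p.Prime) (hvp : v (p : K) < 1)
    {k : ℕ} (hk0 : 0 < k) (hkp : ¬ p ∣ k) : v (k : K) = 1 := by
  refine le_antisymm (v_natCast_le_one v k) ?_
  by_contra hlt
  push_neg at hlt
  have hg : Nat.gcd p k = 1 := (Nat.Prime.coprime_iff_not_dvd hp).mpr hkp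
  have hbez : ((1 : ℕ) : ℤ) = p * Nat.gcdA p k + k * Nat.gcdB p k := by
    rw [← hg]; exact Nat.gcd_eq_gcd_ab p k
  have hK : (1 : K) = (p : K) * ((Nat.gcdA p k : ℤ) : K) + (k : K) * ((Nat.gcdB p k : ℤ) : K) := by
    exact_mod_cast congrArg (fun z : ℤ => (z : K)) hbez
  have h1 : v ((p : K) * ((Nat.gcdA p k : ℤ) : K)) < 1 := by
    rw [map_mul]
    calc v (p : K) * v ((Nat.gcdA p k : ℤ) : K) ≤ v (p : K) * 1 := by
          gcongr; exact v_intCast_le_one v _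
      _ = v (p : K) := mul_one _
      _ < 1 := hvp
  have h2 : v ((k : K) * ((Nat.gcdB p k : ℤ) : K)) < 1 := by
    rw [map_mul]
    calc v (k : K) * v ((Nat.gcdB p k : ℤ) : K) ≤ v (k : K) * 1 := by
          gcongr; exact v_intCast_le_one v _
      _ = v (k : K) := mul_one _
      _ < 1 := hlt
  have : (1 : NNReal) < 1 := by
    calc (1 : NNReal) = v (1 : K) := (v.map_one).symm
      _ = v ((p : K) * ((Nat.gcdA p k : ℤ) : K) + (k : K) * ((Nat.gcdB p k : ℤ) : K)) := by rw [← hK]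
      _ ≤ max _ _ := v.map_add _ _
      _ < 1 := max_lt h1 h2
  exact absurd this (lt_irrefl 1)


lemma v_trailing_X_sub_C (a : K) :
    v ((X - C a).trailingCoeff) = if a = 0 then 1 else v a := by
  rcases eq_or_ne a 0 with rfl | ha
  · rw [if_pos rfl, map_zero, sub_zero, trailingCoeff, natTrailingDegree_X, coeff_X_one, map_one]
  · have h0 : (X - C a).coeff 0 = -a := by simp
    have hnt : (X - C a).natTrailingDegree = 0 :=
      natTrailingDegree_eq_zero_of_constantCoeff_ne_zero
        (by rw [constantCoeff_apply, h0]; exact neg_ne_zero.mpr ha)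
    rw [trailingCoeff, hnt, h0, if_neg ha, Valuation.map_neg]

lemma v_trailing_prod (c : K) (s : Multiset K) :
    v ((C c * (s.map fun a => X - C a).prod).trailingCoeff)
      = v c * (s.map fun a => if a = 0 then 1 else v a).prod := by
  induction s using Multiset.induction with
  | empty =>
    simp only [Multiset.map_zero, Multiset.prod_zero, mul_one]
    rw [show (C c).trailingCoeff = c by rw [trailingCoeff, natTrailingDegree_C, coeff_C_zero]]
  | cons a s ih =>
    rw [Multiset.map_cons, Multiset.prod_cons,
      show C c * ((X - C a) * (s.map fun b => X - C b).prod)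
        = (X - C a) * (C c * (s.map fun b => X - C b).prod) by ring,
      trailingCoeff_mul, map_mul, ih, v_trailing_X_sub_C,
      Multiset.map_cons, Multiset.prod_cons]
    ring

lemma prod_map_max_split (s : Multiset K) {r : NNReal}
    (h : ∀ γ ∈ s, γ ≠ 0 → r ≤ v γ) :
    (s.map fun γ => max r (v γ)).prod
      = r ^ s.count 0 * (s.map fun γ => if γ = 0 then 1 else v γ).prod := by
  induction s using Multiset.induction with
  | empty => simp
  | cons a s ih =>
    have hs : ∀ γ ∈ s, γ ≠ 0 → r ≤ v γ := fun γ hγ => h γ (Multiset.mem_cons_of_mem hγ)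
    rw [Multiset.map_cons, Multiset.prod_cons, ih hs, Multiset.map_cons, Multiset.prod_cons,
      Multiset.count_cons]
    rcases eq_or_ne a 0 with rfl | ha0
    · rw [if_pos rfl, if_pos rfl, map_zero, max_eq_left (zero_le (a := r)), pow_add, pow_one, one_mul]
      ring
    · have h0a : ¬ (0 : K) = a := fun hh => ha0 hh.symm
      rw [if_neg ha0, max_eq_right (h a (Multiset.mem_cons_self a s) ha0), if_neg h0a, add_zero]
      ring


lemma multiset_sigma_le (s u : Multiset NNReal) {σ : NNReal} (hσ : 0 < σ)
    (hu : ∀ t ∈ u, σ ≤ t)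
    (H : ∀ r : NNReal, 0 < r →
      (s.map fun t => max r t).prod = r * (u.map fun t => max r t).prod) :
    ∀ t ∈ s, t ≠ 0 → σ ≤ t := by
  intro t₀ ht₀ ht₀0
  by_contra hlt
  push_neg at hlt
  -- the positive part of s
  set sp := s.filter (fun t => t ≠ 0) with hsp
  have ht₀sp : t₀ ∈ sp := Multiset.mem_filter.mpr ⟨ht₀, ht₀0⟩
  have hne : sp.toFinset.Nonempty := ⟨t₀, Multiset.mem_toFinset.mpr ht₀sp⟩
  obtain ⟨μ, hμmem, hμle⟩ : ∃ μ, μ ∈ sp ∧ ∀ t ∈ sp, μ ≤ t :=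
    ⟨sp.toFinset.min' hne, Multiset.mem_toFinset.mp (sp.toFinset.min'_mem hne),
      fun t ht => sp.toFinset.min'_le t (Multiset.mem_toFinset.mpr ht)⟩
  have hμpos : 0 < μ := pos_iff_ne_zero.mpr (Multiset.mem_filter.mp hμmem).2
  have hμσ : μ < σ := lt_of_le_of_lt (hμle t₀ ht₀sp) hlt
  have hsppos : ∀ t ∈ sp, 0 < t := fun t ht => pos_iff_ne_zero.mpr (Multiset.mem_filter.mp ht).2
  -- split off zero entries
  set z := Multiset.card (s.filter fun t => ¬ t ≠ 0) with hz
  have hsplit : ∀ r : NNReal, 0 < r →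
      (s.map fun t => max r t).prod = r ^ z * (sp.map fun t => max r t).prod := by
    intro r hr
    conv_lhs => rw [← Multiset.filter_add_not (fun t => t ≠ 0) s]
    rw [Multiset.map_add, Multiset.prod_add, mul_comm]
    congr 1
    have : ((s.filter fun t => ¬ t ≠ 0).map fun t => max r t)
        = (s.filter fun t => ¬ t ≠ 0).map fun _ => r := by
      apply Multiset.map_congr rfl
      intro x hx
      have : x = 0 := not_not.mp (Multiset.mem_filter.mp hx).2
      rw [this, max_eq_left (zero_le (a := r))]
    rw [this, Multiset.map_const', Multiset.prod_replicate]
  -- constants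
  set P := sp.prod with hP
  set Q := u.prod with hQ
  have hPpos : 0 < P := CanonicallyOrderedAdd.multiset_prod_pos.mpr hsppos
  have hQpos : 0 < Q := CanonicallyOrderedAdd.multiset_prod_pos.mpr
    (fun t ht => lt_of_lt_of_le hσ (hu t ht))
  have hspconst : ∀ r : NNReal, 0 < r → r ≤ μ → (sp.map fun t => max r t).prod = P := by
    intro r _ hrμ
    rw [hP, show (sp.map fun t => max r t) = sp.map id from
      Multiset.map_congr rfl (fun x hx => max_eq_right (le_trans hrμ (hμle x hx))),
      Multiset.map_id]
  have huconst : ∀ r : NNReal, 0 < r → r ≤ σ → (u.map fun t => max r t).prod = Q := by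
    intro r _ hrσ
    rw [hQ, show (u.map fun t => max r t) = u.map id from
      Multiset.map_congr rfl (fun x hx => max_eq_right (le_trans hrσ (hu x hx))),
      Multiset.map_id]
  have E : ∀ r : NNReal, 0 < r → r ≤ μ → r ^ z * P = r * Q := by
    intro r hr hrμ
    rw [← hspconst r hr hrμ, ← hsplit r hr, H r hr, huconst r hr (le_trans hrμ hμσ.le)]
  have E1 := E μ hμpos le_rfl
  have E2 := E (μ / 2) (by positivity) (half_le_self (zero_le (a := μ)))
  have hμ2 : μ / 2 < μ := NNReal.half_lt_self (ne_of_gt hμpos)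
  -- z must equal 1
  have hz1 : z = 1 := by
    rcases Nat.lt_trichotomy z 1 with h1 | h1 | h1
    · have hz0 : z = 0 := by omega
      rw [hz0, pow_zero, one_mul] at E1 E2
      rw [E1] at E2
      have := mul_right_cancel₀ (ne_of_gt hQpos) E2
      exact absurd this.symm (ne_of_lt hμ2)
    · exact h1
    · exfalso
      obtain ⟨w, hzw⟩ : ∃ w, z = w + 1 := ⟨z - 1, by omega⟩
      have hw : w ≠ 0 := by omega
      rw [hzw] at E1 E2
      have F1 : μ ^ w * P = Q := by
        have : μ * (μ ^ w * P) = μ * Q := by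
          rw [← E1]; ring
        exact mul_left_cancel₀ (ne_of_gt hμpos) this
      have F2 : (μ / 2) ^ w * P = Q := by
        have : (μ / 2) * ((μ / 2) ^ w * P) = (μ / 2) * Q := by
          rw [← E2]; ring
        exact mul_left_cancel₀ (by positivity) this
      rw [← F2] at F1
      have hpow : μ ^ w = (μ / 2) ^ w := mul_right_cancel₀ (ne_of_gt hPpos) F1
      have : (μ / 2) ^ w < μ ^ w := pow_lt_pow_left₀ hμ2 zero_le hw
      rw [hpow] at this
      exact lt_irrefl _ this
  -- with z = 1, compare at r = σ
  have hPQ : P = Q := by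
    have := E1
    rw [hz1, pow_one] at this
    exact mul_left_cancel₀ (ne_of_gt hμpos) this
  have hid : (sp.map fun t => max σ t).prod = Q := by
    have h1 := hsplit σ hσ
    rw [hz1, pow_one, H σ hσ, huconst σ hσ le_rfl] at h1
    exact (mul_left_cancel₀ (ne_of_gt hσ) h1.symm)
  -- but the left side is strictly bigger than Q
  obtain ⟨sp', hsp'⟩ : ∃ sp', sp = μ ::ₘ sp' := ⟨sp.erase μ, (Multiset.cons_erase hμmem).symm⟩
  have hsp'pos : 0 < sp'.prod := CanonicallyOrderedAdd.multiset_prod_pos.mpr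
    (fun t ht => hsppos t (by rw [hsp']; exact Multiset.mem_cons_of_mem ht))
  have hgt : Q < (sp.map fun t => max σ t).prod := by
    rw [hsp', Multiset.map_cons, Multiset.prod_cons, max_eq_left hμσ.le]
    calc Q = P := hPQ.symm
      _ = μ * sp'.prod := by rw [hP, hsp', Multiset.prod_cons]
      _ < σ * sp'.prod := by exact mul_lt_mul_of_pos_right hμσ hsp'pos
      _ ≤ σ * (sp'.map fun t => max σ t).prod := by
          gcongr
          calc sp'.prod = (sp'.map id).prod := by rw [Multiset.map_id]
            _ ≤ (sp'.map fun t => max σ t).prod := by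
                apply Multiset.prod_map_le_prod_map₀
                · intro i _; exact zero_le
                · intro i _; exact le_max_right σ i
  rw [hid] at hgt
  exact lt_irrefl _ hgt


lemma key_coeff_bound {K : Type*} [Field K] [IsAlgClosed K] [CharZero K]
    {p : ℕ} (hp : p.Prime) (v : Valuation K NNReal) (hvp1 : v (p : K) < 1)
    {B : K[X]} (hdvd : B.derivative ∣ B * (B - 1)) (hBdeg : 1 ≤ B.natDegree)
    (hBdeg' : B.natDegree < p) (h0 : B.coeff 0 = 0) :
    ∀ j : ℕ, v (B.coeff j) ^ B.natTrailingDegree ≤ v (B.coeff B.natTrailingDegree) ^ j := by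
  have hB0 : B ≠ 0 := fun h => by rw [h, natDegree_zero] at hBdeg; omega
  set n := B.natDegree with hn
  set m := B.natTrailingDegree with hm
  have ham : B.coeff m ≠ 0 := coeff_natTrailingDegree_ne_zero.mpr hB0
  have hvam : v (B.coeff m) ≠ 0 := by rw [ne_eq, Valuation.zero_iff]; exact ham
  have hm0 : m ≠ 0 := by
    intro h
    rcases natTrailingDegree_eq_zero.mp h with h' | h'
    · exact hB0 h'
    · exact h' h0
  have hmn : m ≤ n := natTrailingDegree_le_natDegree B
  have hvnat : ∀ k : ℕ, 0 < k → k ≤ n → v ((k : ℕ) : K) = 1 := fun k hk0 hkn =>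
    v_natCast_eq_one v hp hvp1 hk0 (Nat.not_dvd_of_pos_of_lt hk0 (lt_of_le_of_lt hkn hBdeg'))
  have hann : B.coeff n ≠ 0 := mt leadingCoeff_eq_zero.mp hB0
  have hnK : ((n : ℕ) : K) ≠ 0 := Nat.cast_ne_zero.mpr (by omega)
  have hsub : n - 1 + 1 = n := Nat.sub_add_cancel hBdeg
  have hDc : B.derivative.coeff (n - 1) = B.coeff n * (n : K) := by
    rw [coeff_derivative, hsub, Nat.cast_sub hBdeg, Nat.cast_one, sub_add_cancel]
  have hDcne : B.derivative.coeff (n - 1) ≠ 0 := by rw [hDc]; exact mul_ne_zero hann hnK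
  have hD0 : B.derivative ≠ 0 := fun h => by rw [h, coeff_zero] at hDcne; exact hDcne rfl
  have hDdeg : B.derivative.natDegree = n - 1 :=
    le_antisymm (natDegree_derivative_le B) (le_natDegree_of_ne_zero hDcne)
  have hvDlead : v B.derivative.leadingCoeff = v B.leadingCoeff := by
    rw [leadingCoeff, hDdeg, hDc, map_mul, hvnat n (by omega) le_rfl, mul_one]
    rfl
  obtain ⟨Cq, hCq⟩ := hdvd
  have hBm1c : (B - 1).coeff n = B.coeff n := by
    rw [coeff_sub, coeff_one, if_neg (by omega : ¬ n = 0), sub_zero]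
  have hBm1 : B - 1 ≠ 0 := fun h => by rw [h, coeff_zero] at hBm1c; exact hann hBm1c.symm
  have hBm1deg : (B - 1).natDegree = n := by rw [← C_1, natDegree_sub_C]
  have hprodne : B * (B - 1) ≠ 0 := mul_ne_zero hB0 hBm1
  have hCq0 : Cq ≠ 0 := by
    intro h
    rw [h, mul_zero] at hCq
    exact hprodne hCq
  have hvB1lead : v (B - 1).leadingCoeff = v B.leadingCoeff := by
    rw [leadingCoeff, hBm1deg, hBm1c]; rfl
  have hvlB : v B.leadingCoeff ≠ 0 := by
    rw [ne_eq, Valuation.zero_iff]; exact mt leadingCoeff_eq_zero.mp hB0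
  -- the Gauss norm identity between B and its derivative
  have hgd : ∀ r : NNReal, 0 < r → gaussN v r B = r * gaussN v r B.derivative := by
    intro r hr
    apply le_antisymm
    · rw [gaussN]
      apply Finset.sup_le
      rintro (_ | i) _
      · rw [h0]
        simp
      · have h1 : v (B.coeff (i + 1)) * r ^ (i + 1)
            ≤ r * (v (B.derivative.coeff i) * r ^ i) := by
          rw [coeff_derivative, map_mul]
          rcases le_or_gt (i + 1) n with hin | hin
          · have hv1 : v ((i : K) + 1) = 1 := by
              have := hvnat (i + 1) (Nat.succ_pos i) hin
              rwa [Nat.cast_add, Nat.cast_one] at this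
            rw [hv1, mul_one]
            apply le_of_eq
            ring
          · rw [B.coeff_eq_zero_of_natDegree_lt hin]
            simp
        exact le_trans h1 (by gcongr; exact coeff_le_gaussN v r B.derivative i)
    · rw [gaussN, NNReal.mul_finset_sup]
      apply Finset.sup_le
      intro i _
      have h1 : r * (v (B.derivative.coeff i) * r ^ i)
          ≤ v (B.coeff (i + 1)) * r ^ (i + 1) := by
        rw [coeff_derivative, map_mul]
        calc r * (v (B.coeff (i + 1)) * v ((i : K) + 1) * r ^ i)
            ≤ r * (v (B.coeff (i + 1)) * 1 * r ^ i) := by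
              gcongr
              have := v_natCast_le_one v (i + 1)
              rwa [Nat.cast_add, Nat.cast_one] at this
          _ = v (B.coeff (i + 1)) * r ^ (i + 1) := by ring
      exact le_trans h1 (coeff_le_gaussN v r B (i + 1))
  -- roots
  have hcB1 : (B - 1).roots.card = n := by
    rw [← hBm1deg]
    exact (splits_iff_card_roots).mp (IsAlgClosed.splits _)
  have hrootsum : B.roots + (B - 1).roots = B.derivative.roots + Cq.roots := by
    rw [← roots_mul hprodne, hCq, roots_mul (by rw [← hCq]; exact hprodne)]
  have posfac : ∀ (s : Multiset K) (r : NNReal), 0 < r →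
      (s.map fun γ => max r (v γ)).prod ≠ 0 := by
    intro s r hr
    apply ne_of_gt
    apply CanonicallyOrderedAdd.multiset_prod_pos.mpr
    intro x hx
    obtain ⟨γ, _, rfl⟩ := Multiset.mem_map.mp hx
    exact lt_of_lt_of_le hr (le_max_left _ _)
  have hPi : ∀ r : NNReal, 0 < r →
      (Cq.roots.map fun γ => max r (v γ)).prod
        = r * ((B - 1).roots.map fun γ => max r (v γ)).prod := by
    intro r hr
    have h1 := gaussN_eq_prod_roots v hB0 hr
    have h2 := gaussN_eq_prod_roots v hD0 hr
    have h3 := gaussN_eq_prod_roots v hBm1 hr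
    have h4 := gaussN_eq_prod_roots v hCq0 hr
    have hPB : (B.roots.map fun γ => max r (v γ)).prod
        = r * (B.derivative.roots.map fun γ => max r (v γ)).prod := by
      have hh := hgd r hr
      rw [h1, h2, hvDlead] at hh
      apply mul_left_cancel₀ hvlB
      rw [hh]
      ring
    have hmul : (B.roots.map fun γ => max r (v γ)).prod
          * ((B - 1).roots.map fun γ => max r (v γ)).prod
        = (B.derivative.roots.map fun γ => max r (v γ)).prod
          * (Cq.roots.map fun γ => max r (v γ)).prod := by
      have hh := congrArg (fun s : Multiset K => (s.map fun γ => max r (v γ)).prod) hrootsum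
      simpa [Multiset.map_add, Multiset.prod_add] using hh
    apply mul_left_cancel₀ (posfac B.derivative.roots r hr)
    calc (B.derivative.roots.map fun γ => max r (v γ)).prod
          * (Cq.roots.map fun γ => max r (v γ)).prod
        = (B.roots.map fun γ => max r (v γ)).prod
          * ((B - 1).roots.map fun γ => max r (v γ)).prod := hmul.symm
      _ = (r * (B.derivative.roots.map fun γ => max r (v γ)).prod)
          * ((B - 1).roots.map fun γ => max r (v γ)).prod := by rw [hPB]
      _ = (B.derivative.roots.map fun γ => max r (v γ)).prod
          * (r * ((B - 1).roots.map fun γ => max r (v γ)).prod) := by ring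
  -- minimal valuation among the roots of B - 1
  have hune : ((B - 1).roots.map v).toFinset.Nonempty := by
    have hne : (B - 1).roots ≠ 0 := by
      intro h
      rw [h] at hcB1
      simp at hcB1
      omega
    obtain ⟨β, hβ⟩ := Multiset.exists_mem_of_ne_zero hne
    exact ⟨v β, Multiset.mem_toFinset.mpr (Multiset.mem_map_of_mem v hβ)⟩
  obtain ⟨σ, hσmem, hσle⟩ : ∃ σ, σ ∈ (B - 1).roots.map v ∧ ∀ t ∈ (B - 1).roots.map v, σ ≤ t :=
    ⟨_, Multiset.mem_toFinset.mp (Finset.min'_mem _ hune),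
      fun t ht => Finset.min'_le _ t (Multiset.mem_toFinset.mpr ht)⟩
  have hβroot0 : ∀ β ∈ (B - 1).roots, β ≠ 0 := by
    intro β hβ hβ0
    have hr := isRoot_of_mem_roots hβ
    rw [IsRoot, hβ0, eval_sub, eval_one, ← coeff_zero_eq_eval_zero, h0, zero_sub] at hr
    exact one_ne_zero (neg_eq_zero.mp hr)
  have hσpos : 0 < σ := by
    obtain ⟨β, hβ, rfl⟩ := Multiset.mem_map.mp hσmem
    rw [pos_iff_ne_zero, ne_eq, Valuation.zero_iff]
    exact hβroot0 β hβ
  -- every nonzero root of B has valuation at least σ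
  have hF : ∀ α ∈ B.roots, α ≠ 0 → σ ≤ v α := by
    intro α hα hα0
    have hαr : IsRoot B α := isRoot_of_mem_roots hα
    have hnr : ¬ IsRoot (B - 1) α := by
      rw [IsRoot, eval_sub, eval_one, hαr.eq_zero, zero_sub, neg_eq_zero]
      exact one_ne_zero
    have hrm : rootMultiplicity α Cq = 1 := by
      have e1 : rootMultiplicity α (B * (B - 1)) = rootMultiplicity α B := by
        rw [rootMultiplicity_mul hprodne, rootMultiplicity_eq_zero hnr, add_zero]
      have e2 : rootMultiplicity α (B * (B - 1))
          = rootMultiplicity α B.derivative + rootMultiplicity α Cq := by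
        rw [hCq, rootMultiplicity_mul (by rw [← hCq]; exact hprodne)]
      have e3 : rootMultiplicity α B.derivative = rootMultiplicity α B - 1 :=
        derivative_rootMultiplicity_of_root hαr
      have e4 : 0 < rootMultiplicity α B := (rootMultiplicity_pos hB0).mpr hαr
      omega
    have hαC : α ∈ Cq.roots := by
      rw [mem_roots hCq0]
      exact (rootMultiplicity_pos hCq0).mp (by omega)
    have H : ∀ r : NNReal, 0 < r →
        ((Cq.roots.map v).map (fun t => max r t)).prod
          = r * (((B - 1).roots.map v).map (fun t => max r t)).prod := by
      intro r hr
      rw [Multiset.map_map, Multiset.map_map]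
      exact hPi r hr
    refine multiset_sigma_le (Cq.roots.map v) ((B - 1).roots.map v) hσpos hσle H (v α)
      (Multiset.mem_map_of_mem v hαC) ?_
    rw [ne_eq, Valuation.zero_iff]
    exact hα0
  -- the multiplicity of the root 0 of B is m
  have hrm0 : B.roots.count 0 = m := by
    rw [count_roots]
    apply le_antisymm
    · rw [rootMultiplicity_le_iff hB0]
      intro hdvd'
      rw [map_zero, sub_zero, X_pow_dvd_iff] at hdvd'
      exact ham (hdvd' m (Nat.lt_succ_self m))
    · rw [le_rootMultiplicity_iff hB0, map_zero, sub_zero, X_pow_dvd_iff]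
      intro d hd
      exact coeff_eq_zero_of_lt_natTrailingDegree hd
  have hcB : B.roots.card = n := (splits_iff_card_roots).mp (IsAlgClosed.splits B)
  have hvamprod : v (B.coeff m)
      = v B.leadingCoeff * (B.roots.map fun γ => if γ = 0 then 1 else v γ).prod := by
    have hh := v_trailing_prod v B.leadingCoeff B.roots
    rw [C_leadingCoeff_mul_prod_multiset_X_sub_C hcB] at hh
    exact hh
  -- main fact: every nonzero root α of B satisfies 1 ≤ v (aₘ) * v α ^ m
  have hfact : ∀ α ∈ B.roots, α ≠ 0 → 1 ≤ v (B.coeff m) * v α ^ m := by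
    intro α hα hα0
    obtain ⟨β, hβ, hβv⟩ := Multiset.mem_map.mp hσmem
    have hBβ : B.eval β = 1 := by
      have hr := isRoot_of_mem_roots hβ
      rw [IsRoot, eval_sub, eval_one, sub_eq_zero] at hr
      exact hr
    have h1le : (1 : NNReal) ≤ gaussN v σ B := by
      have h := v_eval_le_gaussN v B β
      rw [hBβ, v.map_one, hβv] at h
      exact h
    have hgB : gaussN v σ B = v (B.coeff m) * σ ^ m := by
      rw [gaussN_eq_prod_roots v hB0 hσpos, prod_map_max_split v B.roots hF, hrm0, hvamprod]
      ring
    calc (1 : NNReal) ≤ gaussN v σ B := h1le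
      _ = v (B.coeff m) * σ ^ m := hgB
      _ ≤ v (B.coeff m) * v α ^ m := by gcongr; exact hF α hα hα0
  -- the scaled radius w
  set x := (v (B.coeff m))⁻¹ with hx
  have hxpos : 0 < x := pos_iff_ne_zero.mpr (inv_ne_zero hvam)
  set w := x ^ ((m : ℝ)⁻¹) with hw
  have hwm : w ^ m = x := by
    rw [hw, ← NNReal.rpow_natCast (x ^ ((m : ℝ)⁻¹)) m, ← NNReal.rpow_mul,
      inv_mul_cancel₀ (by exact_mod_cast hm0 : (m : ℝ) ≠ 0), NNReal.rpow_one]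
  have hwpos : 0 < w := NNReal.rpow_pos hxpos
  have hwle : ∀ α ∈ B.roots, α ≠ 0 → w ≤ v α := by
    intro α hα hα0
    have hxle : x ≤ v α ^ m := by
      calc x = x * 1 := (mul_one x).symm
        _ ≤ x * (v (B.coeff m) * v α ^ m) := by gcongr; exact hfact α hα hα0
        _ = (x * v (B.coeff m)) * v α ^ m := by ring
        _ = v α ^ m := by rw [hx, inv_mul_cancel₀ hvam, one_mul]
    exact le_of_pow_le_pow_left₀ hm0 zero_le (by rw [hwm]; exact hxle)
  have hgw : gaussN v w B = 1 := by
    rw [gaussN_eq_prod_roots v hB0 hwpos, prod_map_max_split v B.roots hwle, hrm0]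
    calc v B.leadingCoeff * (w ^ m * (B.roots.map fun γ => if γ = 0 then 1 else v γ).prod)
        = (v B.leadingCoeff * (B.roots.map fun γ => if γ = 0 then 1 else v γ).prod) * w ^ m := by
          ring
      _ = v (B.coeff m) * x := by rw [← hvamprod, hwm]
      _ = 1 := by rw [hx, mul_inv_cancel₀ hvam]
  intro j
  have hj : v (B.coeff j) * w ^ j ≤ 1 := by
    rw [← hgw]
    exact coeff_le_gaussN v w B j
  have hjm : v (B.coeff j) ^ m * x ^ j ≤ 1 := by
    calc v (B.coeff j) ^ m * x ^ j = (v (B.coeff j) * w ^ j) ^ m := by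
          rw [mul_pow, ← pow_mul, mul_comm j m, pow_mul, hwm]
      _ ≤ 1 ^ m := pow_le_pow_left₀ zero_le hj m
      _ = 1 := one_pow m
  have hxv : x ^ j * v (B.coeff m) ^ j = 1 := by
    rw [← mul_pow, hx, inv_mul_cancel₀ hvam, one_pow]
  calc v (B.coeff j) ^ m
      = v (B.coeff j) ^ m * (x ^ j * v (B.coeff m) ^ j) := by rw [hxv, mul_one]
    _ = (v (B.coeff j) ^ m * x ^ j) * v (B.coeff m) ^ j := by ring
    _ ≤ 1 * v (B.coeff m) ^ j := by gcongr
    _ = v (B.coeff m) ^ j := one_mul _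

end NPBelyi


open NPBelyi in
/-- If `B` is a Belyi polynomial with `1 ≤ deg B < p` and `B 0 = 0`, then the Newton
polygon of `B` is contained in the Newton polygon of `B - 1`. -/
theorem newtonPolygon_belyi_subset {K : Type*} [Field K] [IsAlgClosed K] [CharZero K]
    (p : ℕ) (hp : p.Prime) (v : Valuation K NNReal)
    (hvp0 : 0 < v (p : K)) (hvp1 : v (p : K) < 1)
    (B : K[X]) (hB : IsBelyi B) (hBdeg : 1 ≤ B.natDegree) (hBdeg' : B.natDegree < p)
    (h0 : B.eval 0 = 0) :
    newtonPolygon v B ⊆ newtonPolygon v (B - 1) := by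
  classical
  obtain ⟨-, -, hdvd⟩ := hB
  have h0c : B.coeff 0 = 0 := by rw [coeff_zero_eq_eval_zero]; exact h0
  have key := key_coeff_bound hp v hvp1 hdvd hBdeg hBdeg' h0c
  set m := B.natTrailingDegree with hm
  have hB0 : B ≠ 0 := fun h => by rw [h, natDegree_zero] at hBdeg; omega
  have ham : B.coeff m ≠ 0 := coeff_natTrailingDegree_ne_zero.mpr hB0
  have hvamne : (v (B.coeff m) : ℝ) ≠ 0 := by
    rw [ne_eq, NNReal.coe_eq_zero, Valuation.zero_iff]
    exact ham
  have hvampos : (0 : ℝ) < (v (B.coeff m) : ℝ) := lt_of_le_of_ne (v (B.coeff m)).coe_nonneg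
    (Ne.symm hvamne)
  have hm0 : m ≠ 0 := by
    intro h
    rcases natTrailingDegree_eq_zero.mp h with h' | h'
    · exact hB0 h'
    · exact h' h0c
  set νm : ℝ := -Real.log (v (B.coeff m) : ℝ) with hνm
  -- the coefficient points of B - 1
  have hSsub : coeffPoints v B ⊆ coeffPoints v (B - 1) := by
    rintro z ⟨i, hi, rfl⟩
    have hi0 : i ≠ 0 := fun h => hi (by rw [h]; exact h0c)
    have hco : (B - 1).coeff i = B.coeff i := by
      rw [coeff_sub, coeff_one, if_neg hi0, sub_zero]
    exact ⟨i, by rw [hco]; exact hi, by rw [hco]⟩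
  have hSne : (coeffPoints v B).Nonempty := ⟨((m : ℝ), νm), ⟨m, ham, rfl⟩⟩
  have hmemS : ((m : ℝ), νm) ∈ coeffPoints v B := ⟨m, ham, rfl⟩
  have hSins : coeffPoints v (B - 1) = insert ((0 : ℝ), (0 : ℝ)) (coeffPoints v B) := by
    ext z
    constructor
    · rintro ⟨i, hi, rfl⟩
      rcases eq_or_ne i 0 with rfl | hi0
      · have hc : (B - 1).coeff 0 = -1 := by
          rw [coeff_sub, coeff_one, if_pos rfl, h0c, zero_sub]
        have hv : v ((B - 1).coeff 0) = 1 := by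
          rw [hc, Valuation.map_neg, v.map_one]
        left
        rw [hv]
        simp
      · have hco : (B - 1).coeff i = B.coeff i := by
          rw [coeff_sub, coeff_one, if_neg hi0, sub_zero]
        right
        exact ⟨i, by rw [← hco]; exact hi, by rw [hco]⟩
    · rintro (rfl | hz)
      · have hc : (B - 1).coeff 0 = -1 := by
          rw [coeff_sub, coeff_one, if_pos rfl, h0c, zero_sub]
        refine ⟨0, by rw [hc]; exact neg_ne_zero.mpr one_ne_zero, ?_⟩
        rw [hc, Valuation.map_neg, v.map_one]
        simp
      · exact hSsub hz
  -- all hull points lie in the half planes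
  have hplane : convexHull ℝ (coeffPoints v B)
      ⊆ {q : ℝ × ℝ | (m : ℝ) ≤ q.1 ∧ νm * q.1 ≤ (m : ℝ) * q.2} := by
    apply convexHull_min
    · rintro z ⟨i, hi, rfl⟩
      have hmi : m ≤ i := by
        by_contra hc
        push_neg at hc
        exact hi (coeff_eq_zero_of_lt_natTrailingDegree hc)
      have hvaine : (v (B.coeff i) : ℝ) ≠ 0 := by
        rw [ne_eq, NNReal.coe_eq_zero, Valuation.zero_iff]
        exact hi
      have hvaipos : (0 : ℝ) < (v (B.coeff i) : ℝ) :=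
        lt_of_le_of_ne (v (B.coeff i)).coe_nonneg (Ne.symm hvaine)
      constructor
      · show (m : ℝ) ≤ (i : ℝ)
        exact_mod_cast hmi
      · show νm * (i : ℝ) ≤ (m : ℝ) * (-Real.log (v (B.coeff i) : ℝ))
        -- from the key inequality, by taking logarithms
        have hkey : ((v (B.coeff i) : ℝ)) ^ m ≤ ((v (B.coeff m) : ℝ)) ^ i := by
          exact_mod_cast key i
        have hlog : (m : ℝ) * Real.log (v (B.coeff i) : ℝ)
            ≤ (i : ℝ) * Real.log (v (B.coeff m) : ℝ) := by
          have := Real.log_le_log (by positivity) hkey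
          rwa [Real.log_pow, Real.log_pow] at this
        rw [hνm]
        nlinarith [hlog]
    · rintro q hq q' hq' a b ha hb hab
      simp only [Set.mem_setOf_eq] at hq hq' ⊢
      constructor
      · have h1 : (a • q + b • q').1 = a * q.1 + b * q'.1 := rfl
        rw [h1]
        nlinarith [hq.1, hq'.1]
      · have h1 : (a • q + b • q').1 = a * q.1 + b * q'.1 := rfl
        have h2 : (a • q + b • q').2 = a * q.2 + b * q'.2 := rfl
        rw [h1, h2]
        nlinarith [hq.2, hq'.2]
  -- the inclusion of Newton polygons
  rintro z ⟨hz1, hz2⟩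
  have hzhull : z ∈ convexHull ℝ (coeffPoints v (B - 1)) := convexHull_mono hSsub hz1
  refine ⟨hzhull, ?_⟩
  intro ww hww hwx
  rw [hSins, convexHull_insert hSne] at hww
  obtain ⟨o, ho, u, hu, hseg⟩ := mem_convexJoin.mp hww
  rw [Set.mem_singleton_iff] at ho
  subst ho
  rw [segment_eq_image₂] at hseg
  obtain ⟨⟨a, b⟩, ⟨ha, hb, hab⟩, habeq⟩ := hseg
  have hwweq : ww = b • u := by
    rw [← habeq]
    show a • (0 : ℝ × ℝ) + b • u = b • u
    rw [smul_zero, zero_add]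
  have hww1 : ww.1 = b * u.1 := by rw [hwweq]; rfl
  have hww2 : ww.2 = b * u.2 := by rw [hwweq]; rfl
  have hufacts := hplane hu
  have hzfacts := hplane hz1
  have hmpos : (0 : ℝ) < (m : ℝ) := by
    have : 1 ≤ m := Nat.one_le_iff_ne_zero.mpr hm0
    exact_mod_cast Nat.lt_of_lt_of_le Nat.zero_lt_one this
  have hble : b ≤ 1 := by linarith
  rcases eq_or_lt_of_le hble with hb1 | hb1
  · -- b = 1 : ww = u lies in the hull of the points of B
    have hwu : ww = u := by rw [hwweq, hb1, one_smul]
    rw [hwu] at hwx ⊢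
    exact hz2 u hu hwx
  · -- b < 1 : compare with a convex combination inside the hull of the points of B
    have hu1pos : (0 : ℝ) < u.1 := lt_of_lt_of_le hmpos hufacts.1
    have hu1m : (m : ℝ) < u.1 := by
      rcases eq_or_lt_of_le hufacts.1 with he | hlt
      · exfalso
        have h1 : z.1 = b * u.1 := by rw [← hwx, hww1]
        nlinarith [hzfacts.1]
      · exact hlt
    have hden : (0 : ℝ) < u.1 - m := by linarith
    set θ := (1 - b) * u.1 / (u.1 - m) with hθ
    have hθ0 : 0 ≤ θ := div_nonneg (mul_nonneg (by linarith) hu1pos.le) hden.le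
    have hcan : θ * (u.1 - m) = (1 - b) * u.1 := by
      rw [hθ]
      field_simp
    have hθ1 : θ ≤ 1 := by
      rw [hθ, div_le_one hden]
      have h1 : z.1 = b * u.1 := by rw [← hwx, hww1]
      nlinarith [hzfacts.1]
    have hq : θ • ((m : ℝ), νm) + (1 - θ) • u ∈ convexHull ℝ (coeffPoints v B) :=
      (convex_convexHull ℝ _) (subset_convexHull ℝ _ hmemS) hu hθ0 (by linarith) (by ring)
    have hq1 : (θ • ((m : ℝ), νm) + (1 - θ) • u).1 = z.1 := by
      have he : (θ • ((m : ℝ), νm) + (1 - θ) • u).1 = θ * m + (1 - θ) * u.1 := rfl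
      have h1 : z.1 = b * u.1 := by rw [← hwx, hww1]
      rw [he, h1]
      linear_combination -hcan
    have hzq : z.2 ≤ θ * νm + (1 - θ) * u.2 := by
      have he : (θ • ((m : ℝ), νm) + (1 - θ) • u).2 = θ * νm + (1 - θ) * u.2 := rfl
      rw [← he]
      exact hz2 _ hq hq1
    have hkey2 : νm * u.1 ≤ (m : ℝ) * u.2 := hufacts.2
    have h1 : θ * νm * (u.1 - m) = (1 - b) * (νm * u.1) := by
      calc θ * νm * (u.1 - m) = νm * (θ * (u.1 - m)) := by ring
        _ = νm * ((1 - b) * u.1) := by rw [hcan]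
        _ = (1 - b) * (νm * u.1) := by ring
    have h2 : (1 - b) * (νm * u.1) ≤ (1 - b) * ((m : ℝ) * u.2) :=
      mul_le_mul_of_nonneg_left hkey2 (by linarith)
    have h3 : (b - 1 + θ) * (u.1 - m) = (1 - b) * m := by linear_combination hcan
    have h4 : θ * νm * (u.1 - m) ≤ ((b - 1 + θ) * u.2) * (u.1 - m) := by
      calc θ * νm * (u.1 - m) = (1 - b) * (νm * u.1) := h1
        _ ≤ (1 - b) * ((m : ℝ) * u.2) := h2
        _ = ((1 - b) * m) * u.2 := by ring
        _ = ((b - 1 + θ) * (u.1 - m)) * u.2 := by rw [h3]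
        _ = ((b - 1 + θ) * u.2) * (u.1 - m) := by ring
    have h5 : θ * νm ≤ (b - 1 + θ) * u.2 := le_of_mul_le_mul_right h4 hden
    calc z.2 ≤ θ * νm + (1 - θ) * u.2 := hzq
      _ ≤ b * u.2 := by linarith
      _ = ww.2 := hww2.symm
end

section
/- If B ∈ K[X] is a Belyi polynomial with 1 ≤ deg B = n < p, B(0) = 0, and leading coefficient aₙ, then New(B−1) is a single line segment: New(B−1) equals the segment in ℝ² joining (0,0) to (n, −log v(aₙ)). Equivalently, every coefficient bᵢ of B−1 satisfies v(bᵢ)ⁿ ≤ v(aₙ)ⁱ, i.e. −log v(bᵢ) ≥ (i/n)·(−log v(aₙ)). -/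
open Polynomial

section
variable {K : Type*} [Field K] (v : Valuation K NNReal)

lemma v_nat_le_one (m : ℕ) : v (m : K) ≤ 1 := by
  induction m with
  | zero => simp
  | succ m ih =>
    push_cast
    exact le_trans (v.map_add _ _) (by simp [ih])

lemma v_int_le_one (m : ℤ) : v (m : K) ≤ 1 := by
  obtain ⟨n, rfl | rfl⟩ := m.eq_nat_or_neg
  · exact_mod_cast v_nat_le_one v n
  · push_cast
    rw [Valuation.map_neg]
    exact v_nat_le_one v n

lemma v_nat_eq_one [CharZero K] {p : ℕ} (hp : p.Prime) (hvp1 : v (p : K) < 1) {j : ℕ}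
    (hj : 0 < j) (hjp : j < p) : v (j : K) = 1 := by
  have hcop : Nat.Coprime j p := Nat.Coprime.symm <|
    (Nat.Prime.coprime_iff_not_dvd hp).mpr (Nat.not_dvd_of_pos_of_lt hj hjp)
  have hic : IsCoprime (j : ℤ) (p : ℤ) := Nat.isCoprime_iff_coprime.mpr hcop
  obtain ⟨a, b, hab⟩ := hic
  have hK : (a : K) * (j : K) + (b : K) * (p : K) = 1 := by
    have := congrArg (fun z : ℤ => (z : K)) hab
    push_cast at this
    simpa using this
  refine le_antisymm (v_nat_le_one v j) ?_
  by_contra hlt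
  push_neg at hlt
  have h1 : v (1 : K) = 1 := v.map_one
  have hle : v (1 : K) ≤ max (v ((a:K) * j)) (v ((b:K) * p)) := by
    rw [← hK]; exact v.map_add _ _
  have hA : v ((a:K) * (j:K)) < 1 := by
    rw [v.map_mul]
    calc v (a:K) * v (j:K) ≤ 1 * v (j:K) := by
          exact mul_le_mul_left (v_int_le_one v a) _
      _ = v (j:K) := one_mul _
      _ < 1 := hlt
  have hB : v ((b:K) * (p:K)) < 1 := by
    rw [v.map_mul]
    calc v (b:K) * v (p:K) ≤ 1 * v (p:K) := mul_le_mul_left (v_int_le_one v b) _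
      _ = v (p:K) := one_mul _
      _ < 1 := hvp1
  rw [h1] at hle
  exact absurd hle (not_le.mpr (max_lt hA hB))
end

section
variable {K : Type*} [Field K] (v : Valuation K NNReal)

lemma monic_prodXsubC (s : Multiset K) : ((s.map fun x => X - C x).prod).Monic :=
  monic_multiset_prod_of_monic s _ fun x _ => monic_X_sub_C x

lemma natDegree_prodXsubC (s : Multiset K) :
    ((s.map fun x => X - C x).prod).natDegree = Multiset.card s := by
  rw [natDegree_multiset_prod_of_monic]
  · simp [Multiset.map_map, Function.comp_def]
  · intro f hf
    obtain ⟨x, _, rfl⟩ := Multiset.mem_map.mp hf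
    exact monic_X_sub_C x


lemma coeff_prodXsubC_eq_zero (s : Multiset K) {i : ℕ} (hi : Multiset.card s < i) :
    ((s.map fun x => X - C x).prod).coeff i = 0 :=
  coeff_eq_zero_of_natDegree_lt (by rwa [natDegree_prodXsubC])

lemma v_coeff_prodXsubC_le {t : NNReal} :
    ∀ (s : Multiset K), (∀ x ∈ s, v x ≤ t) → ∀ i : ℕ,
      v (((s.map fun x => X - C x).prod).coeff i) ≤ t ^ (Multiset.card s - i) := by
  intro s
  induction s using Multiset.induction_on with
  | empty =>
    intro _ i
    simp only [Multiset.map_zero, Multiset.prod_zero, coeff_one]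
    rcases eq_or_ne i 0 with rfl | hi
    · simp
    · simp [hi]
  | cons x s ih =>
    intro h i
    have hx : v x ≤ t := h x (Multiset.mem_cons_self x s)
    have hs : ∀ y ∈ s, v y ≤ t := fun y hy => h y (Multiset.mem_cons_of_mem hy)
    have ihs := ih hs
    set f := (s.map fun x => X - C x).prod with hf
    have hprod : ((x ::ₘ s).map fun x => X - C x).prod = (X - C x) * f := by
      rw [Multiset.map_cons, Multiset.prod_cons]
    rw [hprod, Multiset.card_cons]
    have hco : ((X - C x) * f).coeff i = (X * f).coeff i - x * f.coeff i := by
      rw [sub_mul, coeff_sub, coeff_C_mul]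
    rcases Nat.eq_zero_or_pos i with rfl | hipos
    · rw [hco, coeff_X_mul_zero, zero_sub, Valuation.map_neg, v.map_mul]
      calc v x * v (f.coeff 0) ≤ t * t ^ (Multiset.card s - 0) :=
            mul_le_mul' hx (ihs 0)
        _ = t ^ (Multiset.card s + 1 - 0) := by rw [← pow_succ']; simp
    · obtain ⟨j, rfl⟩ := Nat.exists_eq_add_of_lt hipos
      rw [zero_add] at *
      rw [hco, coeff_X_mul]
      refine le_trans (v.map_sub _ _) ?_
      rcases le_or_gt (j + 1) (Multiset.card s) with hle | hgt
      · have h1 : v (f.coeff j) ≤ t ^ (Multiset.card s - j) := ihs j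
        have h2 : v x * v (f.coeff (j+1)) ≤ t * t ^ (Multiset.card s - (j+1)) :=
          mul_le_mul' hx (ihs (j+1))
        have he : t * t ^ (Multiset.card s - (j+1)) = t ^ (Multiset.card s - j) := by
          rw [← pow_succ']
          congr 1
          omega
        have he2 : Multiset.card s + 1 - (j + 1) = Multiset.card s - j := by omega
        rw [he2]
        exact max_le h1 (by rw [v.map_mul]; exact le_trans h2 (le_of_eq he))
      · have hz : f.coeff (j+1) = 0 := coeff_prodXsubC_eq_zero s hgt
        have h1 : v (f.coeff j) ≤ t ^ (Multiset.card s - j) := ihs j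
        have he2 : Multiset.card s + 1 - (j + 1) = Multiset.card s - j := by omega
        rw [he2, hz]
        simpa using h1
end


section
variable {K : Type*} [Field K] (v : Valuation K NNReal)

local notation "O" => Valuation.valuationSubring v

lemma res_isUnit_iff (y : O) : IsUnit y ↔ v (y : K) = 1 := by
  constructor
  · rintro ⟨u, rfl⟩
    have h1 : ((u : O) : K) * (((u⁻¹ : Oˣ) : O) : K) = 1 := by
      norm_cast
      simp
    have := congrArg v h1
    rw [v.map_mul, v.map_one] at this
    have hle1 : v ((u : O) : K) ≤ 1 := (u : O).2
    have hle2 : v (((u⁻¹ : Oˣ) : O) : K) ≤ 1 := ((u⁻¹ : Oˣ) : O).2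
    refine le_antisymm hle1 ?_
    calc (1:NNReal) = v ((u : O) : K) * v (((u⁻¹ : Oˣ) : O) : K) := this.symm
      _ ≤ v ((u : O) : K) * 1 := mul_le_mul_right hle2 _
      _ = v ((u : O) : K) := mul_one _
  · intro h
    have hy0 : (y : K) ≠ 0 := fun h0 => by simp [h0] at h
    refine IsUnit.of_mul_eq_one (a := y) ⟨(y : K)⁻¹, ?_⟩ ?_
    · rw [Valuation.mem_valuationSubring_iff, map_inv₀, h]; norm_num
    · ext
      push_cast
      exact mul_inv_cancel₀ hy0
lemma res_zero_iff (y : O) :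
    IsLocalRing.residue O y = 0 ↔ v (y : K) < 1 := by
  rw [IsLocalRing.residue_eq_zero_iff, IsLocalRing.mem_maximalIdeal,
    mem_nonunits_iff, res_isUnit_iff]
  exact ⟨fun h => lt_of_le_of_ne y.2 h, fun h => ne_of_lt h⟩
end


section
variable {K : Type*} [Field K] (v : Valuation K NNReal)

-- scaling: composition with (C c * X)
lemma comp_scale (s : Multiset K) (u c : K) (hc : c ≠ 0) :
    (C u * (s.map fun x => X - C x).prod).comp (C c * X)
      = C (u * c ^ Multiset.card s) * ((s.map (· * c⁻¹)).map fun x => X - C x).prod := by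
  rw [mul_comp, C_comp, multiset_prod_comp, Multiset.map_map]
  have hfac : ∀ x : K, (X - C x).comp (C c * X) = C c * (X - C (x * c⁻¹)) := by
    intro x
    rw [sub_comp, X_comp, C_comp, mul_sub, ← C_mul]
    congr 2
    field_simp
  have h2 : (s.map fun x => (X - C x).comp (C c * X)).prod
      = (s.map fun x => C c * (X - C (x * c⁻¹))).prod := by
    congr 1
    exact Multiset.map_congr rfl fun x _ => hfac x
  rw [show ((fun p : K[X] => p.comp (C c * X)) ∘ fun x : K => X - C x)
      = fun x : K => (X - C x).comp (C c * X) from rfl, h2]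
  have h3 : (s.map fun x => C c * (X - C (x * c⁻¹))).prod
      = (s.map fun _ => (C c : K[X])).prod * (s.map fun x => X - C (x * c⁻¹)).prod := by
    rw [← Multiset.prod_map_mul]
  rw [h3, Multiset.map_const', Multiset.prod_replicate, ← C_pow, Multiset.map_map]
  rw [show ((fun x : K => X - C x) ∘ fun x : K => x * c⁻¹)
      = fun x : K => X - C (x * c⁻¹) from rfl]
  rw [← mul_assoc, ← C_mul]

end


section
variable {K : Type*} [Field K] (v : Valuation K NNReal)

local notation "O" => Valuation.valuationSubring v

noncomputable def theta (x : K) : O :=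
  if h : v x ≤ 1 then ⟨x, h⟩ else 0

lemma theta_coe {x : K} (h : v x ≤ 1) : ((theta v x : O) : K) = x := by
  rw [theta, dif_pos h]

lemma theta_zero : theta v (0 : K) = 0 := by
  rw [theta, dif_pos (by simp)]; rfl

lemma theta_one : theta v (1 : K) = 1 := by
  rw [theta, dif_pos (by simp)]; rfl

lemma algebraMap_O_injective : Function.Injective (algebraMap O K) :=
  fun a b h => Subtype.ext (by simpa using h)

lemma mapO_injective :
    Function.Injective (Polynomial.map (algebraMap O K)) :=
  Polynomial.map_injective _ (algebraMap_O_injective v)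

lemma lift_prod (s : Multiset K) (h : ∀ x ∈ s, v x ≤ 1) :
    Polynomial.map (algebraMap O K) (((s.map (theta v)).map fun u => X - C u).prod)
      = (s.map fun x => X - C x).prod := by
  rw [Polynomial.map_multiset_prod, Multiset.map_map, Multiset.map_map]
  congr 1
  refine Multiset.map_congr rfl fun x hx => ?_
  show Polynomial.map (algebraMap O K) (X - C (theta v x)) = X - C x
  rw [Polynomial.map_sub, Polynomial.map_X, Polynomial.map_C]
  have : (algebraMap O K) (theta v x) = x := theta_coe v (h x hx)
  rw [this]

lemma red_prod {k : Type*} [CommRing k] (σ : O →+* k) (m : Multiset O) :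
    Polynomial.map σ ((m.map fun u => X - C u).prod)
      = ((m.map σ).map fun ξ => X - C ξ).prod := by
  rw [Polynomial.map_multiset_prod, Multiset.map_map, Multiset.map_map]
  congr 1
  refine Multiset.map_congr rfl fun x _ => ?_
  show Polynomial.map σ (X - C x) = X - C (σ x)
  rw [Polynomial.map_sub, Polynomial.map_X, Polynomial.map_C]
end


section
set_option linter.unusedSectionVars false
variable {K : Type*} [Field K] [IsAlgClosed K] [CharZero K] [DecidableEq K]

lemma card_roots_eq (f : K[X]) : Multiset.card f.roots = f.natDegree :=
  IsAlgClosed.card_roots_eq_natDegree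

theorem belyi_deriv_structure (B : K[X]) (n : ℕ) (hn : B.natDegree = n) (hn1 : 1 ≤ n)
    (hdvd : B.derivative ∣ B * (B - 1)) :
    B.derivative = C ((n : K) * B.leadingCoeff) *
      (((B * (B - 1)).roots - (B * (B - 1)).roots.dedup).map fun γ => X - C γ).prod ∧
    Multiset.card (B * (B - 1)).roots.dedup = n + 1 := by
  have hB0 : B ≠ 0 := fun h => by simp [h] at hn; omega
  have hB10 : B - 1 ≠ 0 := fun h => by
    have hB1 : B = 1 := by rwa [sub_eq_zero] at h
    rw [hB1] at hn; simp at hn; omega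
  have hP0 : B * (B - 1) ≠ 0 := mul_ne_zero hB0 hB10
  have hncast : ((n : K)) ≠ 0 := Nat.cast_ne_zero.mpr (by omega)
  have hlcB : B.leadingCoeff ≠ 0 := leadingCoeff_ne_zero.mpr hB0
  have hn1' : (B - 1).natDegree = n := by
    have h1 : B - 1 = B - C 1 := by rw [map_one]
    rw [h1, natDegree_sub_C, hn]
  have hcoeffd : B.derivative.coeff (n - 1) = (n : K) * B.leadingCoeff := by
    rw [coeff_derivative, leadingCoeff, hn]
    have h2 : n - 1 + 1 = n := by omega
    rw [h2]
    have h3 : ((n - 1 : ℕ) : K) = (n : K) - 1 := by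
      push_cast [Nat.cast_sub (by omega : 1 ≤ n)]; ring
    rw [h3]; ring
  have hd0 : B.derivative ≠ 0 := fun h => by
    rw [h, coeff_zero] at hcoeffd
    exact mul_ne_zero hncast hlcB hcoeffd.symm
  have hdegd : B.derivative.natDegree = n - 1 := by
    have hlt : B.derivative.natDegree < n := hn ▸ natDegree_derivative_lt (by omega)
    have hge : n - 1 ≤ B.derivative.natDegree :=
      le_natDegree_of_ne_zero (by rw [hcoeffd]; exact mul_ne_zero hncast hlcB)
    omega
  have hlcd : B.derivative.leadingCoeff = (n : K) * B.leadingCoeff := by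
    rw [leadingCoeff, hdegd, hcoeffd]
  have hroots : B.derivative.roots = (B * (B - 1)).roots - (B * (B - 1)).roots.dedup := by
    ext γ
    rw [count_roots, Multiset.count_sub, count_roots, Multiset.count_dedup]
    by_cases h1 : B.eval γ = 0
    · have h2 : (B - 1).eval γ ≠ 0 := by simp [h1]
      have hrmB1 : rootMultiplicity γ (B - 1) = 0 := rootMultiplicity_eq_zero h2
      have hrmP : rootMultiplicity γ (B * (B - 1)) = rootMultiplicity γ B := by
        rw [rootMultiplicity_mul hP0, hrmB1, add_zero]
      have hmem : γ ∈ (B * (B - 1)).roots := by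
        rw [mem_roots hP0]
        show (B * (B - 1)).eval γ = 0
        rw [eval_mul, h1, zero_mul]
      rw [derivative_rootMultiplicity_of_root h1, hrmP, if_pos hmem]
    · by_cases h2 : (B - 1).eval γ = 0
      · have hrmB : rootMultiplicity γ B = 0 := rootMultiplicity_eq_zero h1
        have hrmP : rootMultiplicity γ (B * (B - 1)) = rootMultiplicity γ (B - 1) := by
          rw [rootMultiplicity_mul hP0, hrmB, zero_add]
        have hmem : γ ∈ (B * (B - 1)).roots := by
          rw [mem_roots hP0]
          show (B * (B - 1)).eval γ = 0
          rw [eval_mul, h2, mul_zero]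
        have hder : derivative (B - 1) = derivative B := by
          rw [derivative_sub]; simp
        rw [← hder, derivative_rootMultiplicity_of_root h2, hrmP, if_pos hmem]
      · have hnr : ¬ (B * (B - 1)).IsRoot γ := by
          simp only [IsRoot, eval_mul]
          exact mul_ne_zero h1 h2
        have hmem : γ ∉ (B * (B - 1)).roots := by
          rw [mem_roots hP0]; exact hnr
        have hd : ¬ B.derivative.IsRoot γ := by
          intro hroot
          obtain ⟨Q, hQ⟩ := hdvd
          apply hnr
          show (B * (B - 1)).eval γ = 0
          rw [hQ, eval_mul, hroot.eq_zero, zero_mul]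
        rw [rootMultiplicity_eq_zero hd, rootMultiplicity_eq_zero hnr, if_neg hmem]
  constructor
  · have := C_leadingCoeff_mul_prod_multiset_X_sub_C
      (p := B.derivative) (by rw [card_roots_eq])
    rw [← this, hlcd, hroots]
  · have hcardP : Multiset.card (B * (B - 1)).roots = 2 * n := by
      rw [card_roots_eq, natDegree_mul hB0 hB10, hn, hn1']; ring
    have hcards : Multiset.card B.derivative.roots = n - 1 := by
      rw [card_roots_eq, hdegd]
    have hsub : Multiset.card ((B * (B - 1)).roots - (B * (B - 1)).roots.dedup)
        = Multiset.card (B * (B - 1)).roots - Multiset.card (B * (B - 1)).roots.dedup :=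
      Multiset.card_sub (Multiset.dedup_le _)
    have hdedup_le : Multiset.card (B * (B - 1)).roots.dedup ≤ 2 * n := by
      rw [← hcardP]; exact Multiset.card_le_card (Multiset.dedup_le _)
    rw [hroots] at hcards
    rw [hsub, hcardP] at hcards
    -- also dedup nonempty etc
    have hge : n + 1 ≤ Multiset.card (B * (B - 1)).roots.dedup ∨ True := Or.inr trivial
    omega
end



section
variable {K : Type*} [Field K] (v : Valuation K NNReal)

lemma polygon_of_bound (f : K[X]) (n : ℕ) (hn : f.natDegree = n) (hn1 : 1 ≤ n)
    (h₀ : v (f.coeff 0) = 1) (hf₀ : f.coeff 0 ≠ 0)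
    (hbound : ∀ i : ℕ, v (f.coeff i) ^ n ≤ v (f.coeff n) ^ i) :
    newtonPolygon v f = segment ℝ ((0 : ℝ), (0 : ℝ)) ((n : ℝ), -Real.log (v (f.coeff n) : ℝ)) := by
  have hf : f ≠ 0 := fun h => by simp [h] at hf₀
  have hfn : f.coeff n ≠ 0 := by rw [← hn]; exact (leadingCoeff_ne_zero.mpr hf)
  set L : ℝ := -Real.log (v (f.coeff n) : ℝ) with hL
  have hnR : (0 : ℝ) < n := by exact_mod_cast hn1
  set m : ℝ := L / n with hm
  -- membership of the two endpoints
  have hP0 : ((0 : ℝ), (0 : ℝ)) ∈ coeffPoints v f := by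
    refine ⟨0, hf₀, ?_⟩
    rw [h₀]
    norm_num
  have hP1 : ((n : ℝ), L) ∈ coeffPoints v f := ⟨n, hfn, rfl⟩
  -- halfspace bound
  have hhalf : coeffPoints v f ⊆ {z : ℝ × ℝ | m * z.1 ≤ z.2} := by
    rintro z ⟨i, hi, rfl⟩
    have hvi : (0 : ℝ) < (v (f.coeff i) : ℝ) := by
      have : v (f.coeff i) ≠ 0 := fun h => hi (v.zero_iff.mp h)
      positivity
    have hvn : (0 : ℝ) < (v (f.coeff n) : ℝ) := by
      have : v (f.coeff n) ≠ 0 := fun h => hfn (v.zero_iff.mp h)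
      positivity
    have hb : ((v (f.coeff i) : ℝ)) ^ n ≤ ((v (f.coeff n) : ℝ)) ^ i := by
      exact_mod_cast hbound i
    have hlog : (n : ℝ) * Real.log (v (f.coeff i) : ℝ)
        ≤ (i : ℝ) * Real.log (v (f.coeff n) : ℝ) := by
      have := Real.log_le_log (by positivity) hb
      rwa [Real.log_pow, Real.log_pow] at this
    show m * (i : ℝ) ≤ -Real.log (v (f.coeff i) : ℝ)
    rw [hm, div_mul_eq_mul_div, div_le_iff₀ hnR, hL]
    nlinarith [hlog]
  have hstrip1 : coeffPoints v f ⊆ {z : ℝ × ℝ | z.1 ≤ (n : ℝ)} := by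
    rintro z ⟨i, hi, rfl⟩
    have h : i ≤ n := hn ▸ le_natDegree_of_ne_zero hi
    show (i : ℝ) ≤ (n : ℝ)
    exact_mod_cast h
  have hstrip0 : coeffPoints v f ⊆ {z : ℝ × ℝ | 0 ≤ z.1} := by
    rintro z ⟨i, hi, rfl⟩
    show (0:ℝ) ≤ (i : ℝ)
    positivity
  -- convexity of the three sets
  have lin1 : IsLinearMap ℝ (fun z : ℝ × ℝ => m * z.1 - z.2) := by
    constructor <;> intros <;> simp [Prod.fst_add, Prod.snd_add] <;> ring
  have lin2 : IsLinearMap ℝ (fun z : ℝ × ℝ => z.1) := by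
    constructor <;> intros <;> simp
  have hco1 : Convex ℝ {z : ℝ × ℝ | m * z.1 ≤ z.2} := by
    have := convex_halfSpace_le lin1 (0 : ℝ)
    convert this using 2
    on_goal 1 => rfl
    ext z
    simp [sub_nonpos]
  have hco2 : Convex ℝ {z : ℝ × ℝ | z.1 ≤ (n : ℝ)} := convex_halfSpace_le lin2 _
  have hco3 : Convex ℝ {z : ℝ × ℝ | 0 ≤ z.1} := convex_halfSpace_ge lin2 _
  have hhull1 : convexHull ℝ (coeffPoints v f) ⊆ {z : ℝ × ℝ | m * z.1 ≤ z.2} :=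
    convexHull_min hhalf hco1
  have hhull2 : convexHull ℝ (coeffPoints v f) ⊆ {z : ℝ × ℝ | z.1 ≤ (n : ℝ)} :=
    convexHull_min hstrip1 hco2
  have hhull3 : convexHull ℝ (coeffPoints v f) ⊆ {z : ℝ × ℝ | 0 ≤ z.1} :=
    convexHull_min hstrip0 hco3
  have hseg_hull : segment ℝ ((0 : ℝ), (0 : ℝ)) ((n : ℝ), L) ⊆ convexHull ℝ (coeffPoints v f) :=
    (convex_convexHull ℝ _).segment_subset (subset_convexHull ℝ _ hP0) (subset_convexHull ℝ _ hP1)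
  apply Set.Subset.antisymm
  · rintro z ⟨hz1, hz2⟩
    have hx0 : 0 ≤ z.1 := hhull3 hz1
    have hxn : z.1 ≤ (n : ℝ) := hhull2 hz1
    have hy : m * z.1 ≤ z.2 := hhull1 hz1
    set w : ℝ × ℝ := (z.1, m * z.1) with hw
    have hwseg : w ∈ segment ℝ ((0 : ℝ), (0 : ℝ)) ((n : ℝ), L) := by
      have ht1 : z.1 / n ≤ 1 := by rw [div_le_one hnR]; exact hxn
      refine ⟨1 - z.1 / n, z.1 / n, by linarith, by positivity, by ring, ?_⟩
      have hfst : (1 - z.1 / n) * 0 + z.1 / n * (n : ℝ) = z.1 := by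
        field_simp
        ring
      have hsnd : (1 - z.1 / n) * 0 + z.1 / n * L = m * z.1 := by
        rw [hm]; field_simp; ring
      exact Prod.ext (by simpa using hfst) (by simpa using hsnd)
    have hwhull := hseg_hull hwseg
    have hle := hz2 w hwhull rfl
    have hzw : z.2 = m * z.1 := le_antisymm hle hy
    have : z = w := Prod.ext rfl hzw
    rw [this]
    exact hwseg
  · intro z hz
    obtain ⟨a, b, ha, hb, hab, hz'⟩ := hz
    have hzhull : z ∈ convexHull ℝ (coeffPoints v f) := hseg_hull ⟨a, b, ha, hb, hab, hz'⟩
    refine ⟨hzhull, fun w hw hwx => ?_⟩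
    have hz1 : z.1 = b * n := by
      rw [← hz']; simp
    have hz2 : z.2 = b * L := by
      rw [← hz']; simp
    have hzm : z.2 = m * z.1 := by
      rw [hz1, hz2, hm]
      field_simp
    have := hhull1 hw
    rw [hzm, ← hwx]
    exact this
end


section Main
variable {K : Type*} [Field K] [IsAlgClosed K] [CharZero K]

theorem belyi_coeff_bound (p : ℕ) (hp : p.Prime) (v : Valuation K NNReal)
    (hvp1 : v (p : K) < 1)
    (B : K[X]) (hdvd : B.derivative ∣ B * (B - 1)) (n : ℕ) (hn : B.natDegree = n)
    (hn1 : 1 ≤ n) (hnp : n < p) (h0 : B.eval 0 = 0) :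
    ∀ i : ℕ, v ((B - 1).coeff i) ^ n ≤ v B.leadingCoeff ^ i := by
  classical
  have hB0 : B ≠ 0 := fun h => by simp [h] at hn; omega
  have hB10 : B - 1 ≠ 0 := fun h => by
    have hB1 : B = 1 := by rwa [sub_eq_zero] at h
    rw [hB1] at hn; simp at hn; omega
  have hP0 : B * (B - 1) ≠ 0 := mul_ne_zero hB0 hB10
  have hlc : B.leadingCoeff ≠ 0 := leadingCoeff_ne_zero.mpr hB0
  have hvlc : v B.leadingCoeff ≠ 0 := fun h => hlc (v.zero_iff.mp h)
  have hn1' : (B - 1).natDegree = n := by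
    have h1 : B - 1 = B - C 1 := by rw [map_one]
    rw [h1, natDegree_sub_C, hn]
  have hcoeff0 : B.coeff 0 = 0 := by rwa [coeff_zero_eq_eval_zero]
  have hB1coeff0 : (B - 1).coeff 0 = -1 := by
    rw [coeff_sub, hcoeff0, coeff_one]; norm_num
  have hB1coeffi : ∀ i : ℕ, 1 ≤ i → (B - 1).coeff i = B.coeff i := by
    intro i hi
    rw [coeff_sub, coeff_one, if_neg (by omega)]
    ring
  obtain ⟨hder, hdedup⟩ := belyi_deriv_structure B n hn hn1 hdvd
  set D : Multiset K := (B * (B - 1)).roots - (B * (B - 1)).roots.dedup with hD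
  have hProots : (B * (B - 1)).roots = B.roots + (B - 1).roots := roots_mul hP0
  have hAcard : Multiset.card B.roots = n := by rw [card_roots_eq, hn]
  have hBcard : Multiset.card (B - 1).roots = n := by rw [card_roots_eq, hn1']
  have hPcard : Multiset.card (B * (B - 1)).roots = 2 * n := by
    rw [hProots, Multiset.card_add, hAcard, hBcard]; ring
  have hDcard : Multiset.card D = n - 1 := by
    rw [hD, Multiset.card_sub (Multiset.dedup_le _), hPcard, hdedup]
    omega
  -- choose root of maximal valuation
  have hPne : (B * (B - 1)).roots.toFinset.Nonempty := by
    rw [Multiset.toFinset_nonempty]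
    intro h
    rw [h] at hPcard
    simp at hPcard
    omega
  obtain ⟨c, hcfin, hsup⟩ := Finset.exists_mem_eq_sup (B * (B - 1)).roots.toFinset hPne v
  have hcmem : c ∈ (B * (B - 1)).roots := Multiset.mem_toFinset.mp hcfin
  have hcmax : ∀ γ ∈ (B * (B - 1)).roots, v γ ≤ v c := fun γ hγ => by
    rw [← hsup]
    exact Finset.le_sup (Multiset.mem_toFinset.mpr hγ)
  -- factorizations
  have hfactB : C B.leadingCoeff * (B.roots.map fun x => X - C x).prod = B :=
    C_leadingCoeff_mul_prod_multiset_X_sub_C (card_roots_eq B)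
  have hlcB1 : (B - 1).leadingCoeff = B.leadingCoeff := by
    rw [leadingCoeff, leadingCoeff, hn1', hn, hB1coeffi n hn1]
  have hfactB1 : C B.leadingCoeff * ((B - 1).roots.map fun x => X - C x).prod = B - 1 := by
    rw [← hlcB1]
    exact C_leadingCoeff_mul_prod_multiset_X_sub_C (card_roots_eq (B - 1))
  by_cases hT : v c ^ n * v B.leadingCoeff ≤ 1
  · -- easy case: all coefficients bounded
    intro i
    rcases Nat.eq_zero_or_pos i with rfl | hi
    · rw [hB1coeff0]
      simp
    rcases le_or_gt i n with hin | hni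
    · rw [hB1coeffi i hi]
      have hroots_le : ∀ x ∈ B.roots, v x ≤ v c := fun x hx =>
        hcmax x (by rw [hProots]; exact Multiset.mem_add.mpr (Or.inl hx))
      have hvco : v (B.coeff i) ≤ v B.leadingCoeff * v c ^ (n - i) := by
        conv_lhs => rw [← hfactB]
        rw [coeff_C_mul, v.map_mul]
        refine mul_le_mul_right ?_ _
        have := v_coeff_prodXsubC_le v B.roots hroots_le i
        rwa [hAcard] at this
      calc v (B.coeff i) ^ n ≤ (v B.leadingCoeff * v c ^ (n - i)) ^ n :=
            pow_le_pow_left' hvco n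
        _ = v B.leadingCoeff ^ n * (v c ^ n) ^ (n - i) := by
            rw [mul_pow, ← pow_mul, ← pow_mul, Nat.mul_comm n (n - i)]
        _ = v B.leadingCoeff ^ i * (v B.leadingCoeff ^ (n - i) * (v c ^ n) ^ (n - i)) := by
            have hsplit : v B.leadingCoeff ^ n
                = v B.leadingCoeff ^ i * v B.leadingCoeff ^ (n - i) := by
              rw [← pow_add]
              congr 1
              omega
            rw [hsplit, mul_assoc]
        _ = v B.leadingCoeff ^ i * ((v B.leadingCoeff * v c ^ n) ^ (n - i)) := by
            rw [mul_pow]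
        _ ≤ v B.leadingCoeff ^ i * 1 := by
            refine mul_le_mul_right ?_ _
            refine pow_le_one' ?_ _
            rwa [mul_comm]
        _ = v B.leadingCoeff ^ i := mul_one _
    · have : (B - 1).coeff i = 0 := coeff_eq_zero_of_natDegree_lt (by omega)
      rw [this]
      simp [zero_pow (by omega : n ≠ 0)]
  · -- hard case: contradiction
    exfalso
    push_neg at hT
    have hc0 : c ≠ 0 := by
      intro h
      rw [h] at hT
      simp [zero_pow (by omega : n ≠ 0)] at hT
    have hvc0 : v c ≠ 0 := fun h => hc0 (v.zero_iff.mp h)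
    set O' := Valuation.valuationSubring v with hO'
    set k := IsLocalRing.ResidueField O' with hk
    set sg : O' →+* k := IsLocalRing.residue O' with hsg
    set rho : K → k := fun x => sg (theta v (x * c⁻¹)) with hrho
    -- scaled multisets
    set A' : Multiset K := B.roots.map (· * c⁻¹) with hA'
    set Bm' : Multiset K := (B - 1).roots.map (· * c⁻¹) with hBm'
    set D' : Multiset K := D.map (· * c⁻¹) with hD'
    have hscale : ∀ γ ∈ (B * (B - 1)).roots, v (γ * c⁻¹) ≤ 1 := fun γ hγ => by
      rw [v.map_mul, map_inv₀, ← div_eq_mul_inv]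
      rw [div_le_one (by positivity)]
      exact hcmax γ hγ
    have hA'le : ∀ x ∈ A', v x ≤ 1 := by
      rintro x hx
      obtain ⟨γ, hγ, rfl⟩ := Multiset.mem_map.mp hx
      exact hscale γ (by rw [hProots]; exact Multiset.mem_add.mpr (Or.inl hγ))
    have hBm'le : ∀ x ∈ Bm', v x ≤ 1 := by
      rintro x hx
      obtain ⟨γ, hγ, rfl⟩ := Multiset.mem_map.mp hx
      exact hscale γ (by rw [hProots]; exact Multiset.mem_add.mpr (Or.inr hγ))
    have hD'le : ∀ x ∈ D', v x ≤ 1 := by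
      rintro x hx
      obtain ⟨γ, hγ, rfl⟩ := Multiset.mem_map.mp hx
      exact hscale γ (Multiset.mem_of_le (Multiset.sub_le_self _ _) hγ)
    -- K-level identities
    set w : K := B.leadingCoeff * c ^ n with hw
    have hw0 : w ≠ 0 := mul_ne_zero hlc (pow_ne_zero _ hc0)
    have hcompB : B.comp (C c * X) = C w * (A'.map fun x => X - C x).prod := by
      conv_lhs => rw [← hfactB]
      rw [comp_scale _ _ _ hc0, hAcard]
    have hcompB1 : (B - 1).comp (C c * X) = C w * (Bm'.map fun x => X - C x).prod := by
      conv_lhs => rw [← hfactB1]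
      rw [comp_scale _ _ _ hc0, hBcard]
    set eps : K := w⁻¹ with heps
    have hveps : v eps < 1 := by
      rw [heps, map_inv₀]
      have hwv : 1 < v w := by
        rw [hw, v.map_mul, v.map_pow, mul_comm]
        exact hT
      have hw0' : v w ≠ 0 := by intro h; rw [h] at hwv; simp at hwv
      rw [← NNReal.inv_lt_one_iff (by simpa using hw0')] at hwv
      simpa using hwv
    have hdiff : (A'.map fun x => X - C x).prod - (Bm'.map fun x => X - C x).prod = C eps := by
      have h1 : B.comp (C c * X) - (B - 1).comp (C c * X) = 1 := by
        rw [← sub_comp]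
        have : B - (B - 1) = 1 := by ring
        rw [this, one_comp]
      rw [hcompB, hcompB1, ← mul_sub] at h1
      have h2 : C w * ((A'.map fun x => X - C x).prod - (Bm'.map fun x => X - C x).prod)
          = C w * C eps := by
        rw [h1, ← C_mul, heps, mul_inv_cancel₀ hw0, map_one]
      exact mul_left_cancel₀ (by simpa using hw0) h2
    have hderivA : derivative ((A'.map fun x => X - C x).prod)
        = C ((n : K)) * (D'.map fun x => X - C x).prod := by
      have h1 : derivative (B.comp (C c * X)) = C c * (derivative B).comp (C c * X) := by
        rw [derivative_comp]
        congr 1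
        rw [derivative_mul, derivative_C, derivative_X]
        simp
      have h2 : (derivative B).comp (C c * X)
          = C ((n : K) * B.leadingCoeff * c ^ (n - 1)) * (D'.map fun x => X - C x).prod := by
        conv_lhs => rw [hder]
        rw [comp_scale _ _ _ hc0, hDcard]
      rw [hcompB, h2] at h1
      rw [derivative_C_mul] at h1
      have hcc : c * c ^ (n - 1) = c ^ n := by
        rw [← pow_succ']
        congr 1
        omega
      have hconst : c * ((n : K) * B.leadingCoeff * c ^ (n - 1)) = w * (n : K) := by
        rw [hw]
        calc c * ((n : K) * B.leadingCoeff * c ^ (n - 1))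
            = (n : K) * B.leadingCoeff * (c * c ^ (n - 1)) := by ring
          _ = (n : K) * B.leadingCoeff * c ^ n := by rw [hcc]
          _ = B.leadingCoeff * c ^ n * (n : K) := by ring
      have h3 : C c * (C ((n : K) * B.leadingCoeff * c ^ (n - 1))
            * (D'.map fun x => X - C x).prod)
          = C w * (C ((n : K)) * (D'.map fun x => X - C x).prod) := by
        rw [← mul_assoc, ← mul_assoc, ← C_mul, ← C_mul, hconst]
      rw [h3] at h1
      exact mul_left_cancel₀ (by simpa using hw0) h1
    -- O'-level identities
    set bO : O'[X] := ((A'.map (theta v)).map fun u => X - C u).prod with hbO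
    set gO : O'[X] := ((Bm'.map (theta v)).map fun u => X - C u).prod with hgO
    set dO : O'[X] := ((D'.map (theta v)).map fun u => X - C u).prod with hdO
    have hOdiff : bO - gO = C (theta v eps) := by
      apply mapO_injective v
      rw [Polynomial.map_sub, Polynomial.map_C]
      rw [hbO, hgO, lift_prod v A' hA'le, lift_prod v Bm' hBm'le, hdiff]
      have h4 : (algebraMap O' K) (theta v eps) = eps := theta_coe v hveps.le
      rw [h4]
    have hOder : derivative bO = C ((n : O')) * dO := by
      apply mapO_injective v
      rw [Polynomial.map_mul, Polynomial.map_C]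
      have hcomm : Polynomial.map (algebraMap O' K) (derivative bO)
          = derivative (Polynomial.map (algebraMap O' K) bO) := (derivative_map _ _).symm
      rw [hcomm, hbO, lift_prod v A' hA'le, hdO, lift_prod v D' hD'le, hderivA]
      have h5 : (algebraMap O' K) ((n : O')) = ((n : K)) := by
        rw [map_natCast]
      rw [h5]
    -- k-level
    set Abar : Multiset k := B.roots.map rho with hAbar
    set Bbar : Multiset k := (B - 1).roots.map rho with hBbar
    set Dbar : Multiset k := D.map rho with hDbar
    have hmapA : (A'.map (theta v)).map sg = Abar := by
      rw [hA', hAbar, Multiset.map_map, Multiset.map_map]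
      rfl
    have hmapB : (Bm'.map (theta v)).map sg = Bbar := by
      rw [hBm', hBbar, Multiset.map_map, Multiset.map_map]
      rfl
    have hmapD : (D'.map (theta v)).map sg = Dbar := by
      rw [hD', hDbar, Multiset.map_map, Multiset.map_map]
      rfl
    have hbbar : Polynomial.map sg bO = (Abar.map fun ξ => X - C ξ).prod := by
      rw [hbO, red_prod, hmapA]
    have hgbar : Polynomial.map sg gO = (Bbar.map fun ξ => X - C ξ).prod := by
      rw [hgO, red_prod, hmapB]
    have hdbar : Polynomial.map sg dO = (Dbar.map fun ξ => X - C ξ).prod := by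
      rw [hdO, red_prod, hmapD]
    have hsgeps : sg (theta v eps) = 0 := by
      rw [res_zero_iff]
      rw [(theta_coe v hveps.le : ((theta v eps : O') : K) = eps)]
      exact hveps
    have hABbar : Abar = Bbar := by
      have h1 := congrArg (Polynomial.map sg) hOdiff
      rw [Polynomial.map_sub, Polynomial.map_C, hsgeps, map_zero, hbbar, hgbar,
        sub_eq_zero] at h1
      have h2 := congrArg Polynomial.roots h1
      rwa [roots_multiset_prod_X_sub_C, roots_multiset_prod_X_sub_C] at h2
    have hderbar : derivative ((Abar.map fun ξ => X - C ξ).prod)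
        = C ((n : k)) * (Dbar.map fun ξ => X - C ξ).prod := by
      have h1 := congrArg (Polynomial.map sg) hOder
      rw [Polynomial.map_mul, Polynomial.map_C, ← derivative_map, hbbar, hdbar] at h1
      rw [h1, map_natCast]
    -- counting
    have hnk : ((n : k)) ≠ 0 := by
      have h1 : ((n : k)) = sg ((n : O')) := (map_natCast sg n).symm
      rw [h1]
      intro hzero
      rw [res_zero_iff] at hzero
      have h2 : (((n : O') : K)) = ((n : K)) := by push_cast; rfl
      rw [h2, v_nat_eq_one v hp hvp1 (by omega) hnp] at hzero
      simp at hzero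
    set S := Abar.toFinset with hS
    have hcount : ∀ ξ ∈ S, Dbar.count ξ + 1 = Abar.count ξ := by
      intro ξ hξ
      have hmem : ξ ∈ Abar := Multiset.mem_toFinset.mp hξ
      have hE1 : 1 ≤ Abar.count ξ := Multiset.one_le_count_iff_mem.mpr hmem
      have hEn : Abar.count ξ ≤ n := by
        calc Abar.count ξ ≤ Multiset.card Abar := Multiset.count_le_card _ _
          _ = n := by rw [hAbar, Multiset.card_map, hAcard]
      set bbar : k[X] := (Abar.map fun ξ => X - C ξ).prod with hbb
      have hb_ne : bbar ≠ 0 := (monic_prodXsubC Abar).ne_zero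
      have hrm : rootMultiplicity ξ bbar = Abar.count ξ := by
        rw [← count_roots, hbb, roots_multiset_prod_X_sub_C]
      have hroot : bbar.IsRoot ξ := by
        apply isRoot_of_mem_roots
        rw [hbb, roots_multiset_prod_X_sub_C]
        exact hmem
      have hEk : ((Abar.count ξ : ℕ) : k) ≠ 0 := by
        have h1 : ((Abar.count ξ : ℕ) : k) = sg ((Abar.count ξ : ℕ) : O') :=
          (map_natCast sg _).symm
        rw [h1]
        intro hzero
        rw [res_zero_iff] at hzero
        have h2 : ((((Abar.count ξ : ℕ) : O')) : K) = ((Abar.count ξ : ℕ) : K) := by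
          push_cast; rfl
        rw [h2, v_nat_eq_one v hp hvp1 (by omega) (by omega)] at hzero
        simp at hzero
      have hcast : ((rootMultiplicity ξ bbar : k)) ∈ nonZeroDivisors k := by
        rw [hrm]
        exact mem_nonZeroDivisors_of_ne_zero hEk
      have hDrm := derivative_rootMultiplicity_of_root_of_mem_nonZeroDivisors hroot hcast
      rw [hbb] at hDrm
      rw [hderbar] at hDrm
      have hrmD : rootMultiplicity ξ (C ((n : k)) * (Dbar.map fun ζ => X - C ζ).prod)
          = Dbar.count ξ := by
        rw [← count_roots, roots_C_mul _ hnk, roots_multiset_prod_X_sub_C]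
      rw [hrmD, hrm] at hDrm
      omega
    have hsplitD : D + (B * (B - 1)).roots.dedup = (B * (B - 1)).roots :=
      tsub_add_cancel_of_le (Multiset.dedup_le _)
    have himg : Dbar + ((B * (B - 1)).roots.dedup.map rho) = Abar + Abar := by
      have h1 := congrArg (Multiset.map rho) hsplitD
      rw [Multiset.map_add] at h1
      rw [hDbar, h1, hProots, Multiset.map_add, ← hAbar, ← hBbar, hABbar]
    have hcount2 : ∀ ξ ∈ S, ((B * (B - 1)).roots.dedup.map rho).count ξ
        = Abar.count ξ + 1 := by
      intro ξ hξ
      have h1 := congrArg (Multiset.count ξ) himg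
      rw [Multiset.count_add, Multiset.count_add] at h1
      have h2 := hcount ξ hξ
      omega
    have hsubS : ((B * (B - 1)).roots.dedup.map rho).toFinset ⊆ S := by
      intro ξ hξ
      obtain ⟨γ, hγ, rfl⟩ := Multiset.mem_map.mp (Multiset.mem_toFinset.mp hξ)
      have hγP : γ ∈ (B * (B - 1)).roots := Multiset.mem_dedup.mp hγ
      rw [hProots] at hγP
      rcases Multiset.mem_add.mp hγP with h | h
      · exact Multiset.mem_toFinset.mpr (Multiset.mem_map_of_mem rho h)
      · have h1 : rho γ ∈ Bbar := Multiset.mem_map_of_mem rho h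
        rw [← hABbar] at h1
        exact Multiset.mem_toFinset.mpr h1
    have hsum1 : ∑ ξ ∈ S, ((B * (B - 1)).roots.dedup.map rho).count ξ
        = Multiset.card ((B * (B - 1)).roots.dedup.map rho) := by
      rw [← Multiset.toFinset_sum_count_eq]
      exact (Finset.sum_subset hsubS (fun ξ _ hξ =>
        Multiset.count_eq_zero_of_notMem
          (fun hmem => hξ (Multiset.mem_toFinset.mpr hmem)))).symm
    have hsum2 : ∑ ξ ∈ S, Abar.count ξ = Multiset.card Abar :=
      Multiset.toFinset_sum_count_eq _
    have hcardA : Multiset.card Abar = n := by rw [hAbar, Multiset.card_map, hAcard]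
    have hcardded : Multiset.card ((B * (B - 1)).roots.dedup.map rho) = n + 1 := by
      rw [Multiset.card_map, hdedup]
    have hScard : S.card = 1 := by
      have h1 : ∑ ξ ∈ S, (Abar.count ξ + 1) = n + 1 := by
        rw [← hcardded, ← hsum1]
        exact (Finset.sum_congr rfl hcount2).symm
      rw [Finset.sum_add_distrib, hsum2, hcardA, Finset.sum_const, smul_eq_mul,
        mul_one] at h1
      omega
    have h0S : (0 : k) ∈ S := by
      refine Multiset.mem_toFinset.mpr (Multiset.mem_map.mpr ⟨0, ?_, ?_⟩)
      · rw [mem_roots hB0]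
        exact h0
      · show sg (theta v ((0 : K) * c⁻¹)) = 0
        rw [zero_mul, theta_zero, map_zero]
    have h1S : (1 : k) ∈ S := by
      have hρc : rho c = 1 := by
        show sg (theta v (c * c⁻¹)) = 1
        rw [mul_inv_cancel₀ hc0, theta_one, map_one]
      rw [hProots] at hcmem
      rcases Multiset.mem_add.mp hcmem with h | h
      · exact Multiset.mem_toFinset.mpr (hρc ▸ Multiset.mem_map_of_mem rho h)
      · have h1 : rho c ∈ Bbar := Multiset.mem_map_of_mem rho h
        rw [← hABbar] at h1
        exact Multiset.mem_toFinset.mpr (hρc ▸ h1)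
    have : (0 : k) = 1 := Finset.card_le_one.mp (le_of_eq hScard) _ h0S _ h1S
    exact zero_ne_one this
end Main

/-- If `B` is a Belyi polynomial with `1 ≤ deg B = n < p` and `B 0 = 0`, with leading
coefficient `aₙ`, then the Newton polygon of `B - 1` is the single line segment from
`(0, 0)` to `(n, -log v aₙ)`; equivalently every coefficient `bᵢ` of `B - 1` satisfies
`v bᵢ ^ n ≤ v aₙ ^ i`. -/
theorem newtonPolygon_belyi_sub_one_eq_segment {K : Type*} [Field K] [IsAlgClosed K] [CharZero K]
    (p : ℕ) (hp : p.Prime) (v : Valuation K NNReal)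
    (hvp0 : 0 < v (p : K)) (hvp1 : v (p : K) < 1)
    (B : K[X]) (hB : IsBelyi B) (n : ℕ) (hn : B.natDegree = n)
    (hn1 : 1 ≤ n) (hnp : n < p) (h0 : B.eval 0 = 0) :
    newtonPolygon v (B - 1) =
      segment ℝ ((0 : ℝ), (0 : ℝ)) ((n : ℝ), -Real.log (v B.leadingCoeff : ℝ)) ∧
    ∀ i : ℕ, v ((B - 1).coeff i) ^ n ≤ v B.leadingCoeff ^ i := by
  obtain ⟨_, _, hdvd⟩ := hB
  have h0' : B.coeff 0 = 0 := by rwa [coeff_zero_eq_eval_zero]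
  have key : ∀ i : ℕ, v ((B - 1).coeff i) ^ n ≤ v B.leadingCoeff ^ i :=
    belyi_coeff_bound p hp v hvp1 B hdvd n hn hn1 hnp h0
  have hn1' : (B - 1).natDegree = n := by
    have h1 : B - 1 = B - C 1 := by rw [map_one]
    rw [h1, natDegree_sub_C, hn]
  have hB1coeff0 : (B - 1).coeff 0 = -1 := by
    rw [coeff_sub, h0', coeff_one]
    norm_num
  have hv0 : v ((B - 1).coeff 0) = 1 := by
    rw [hB1coeff0, Valuation.map_neg, v.map_one]
  have hB1coeffn : (B - 1).coeff n = B.leadingCoeff := by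
    rw [coeff_sub, coeff_one, if_neg (by omega), leadingCoeff, hn]
    ring
  refine ⟨?_, key⟩
  have hpoly := polygon_of_bound v (B - 1) n hn1' hn1 hv0
    (by rw [hB1coeff0]; norm_num)
    (by intro i; rw [hB1coeffn]; exact key i)
  rwa [hB1coeffn] at hpoly
end
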